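/- arXiv:2512.21162 — 6 statements merged into one kernel-verified Lean document; each statement's English description precedes it below -/
import Mathlib

section
/- Let H be a norm on ℝⁿ that is differentiable on ℝⁿ\{0}. Then F := H^p/p is differentiable on all of ℝⁿ with ∇F(0) = 0, and the gradient map ∇F : ℝⁿ → ℝⁿ is continuous; that is, F is continuously differentiable on ℝⁿ. -/
open Filter Topology Asymptotics

section aux

variable {E : Type*} [NormedAddCommGroup E] [NormedSpace ℝ E]

lemma aux_deriv_line {H : E → ℝ} {x : E} (hd : DifferentiableAt ℝ H x) (v : E) :
    HasDerivAt (fun t : ℝ => H (x + t • v)) (fderiv ℝ H x v) 0 := by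
  have h2 : HasDerivAt (fun t : ℝ => x + t • v) v 0 := by
    simpa using ((hasDerivAt_id (0 : ℝ)).smul_const v).const_add x
  have h1 : HasFDerivAt H (fderiv ℝ H x) ((fun t : ℝ => x + t • v) 0) := by
    simpa using hd.hasFDerivAt
  simpa [Function.comp_def] using h1.comp_hasDerivAt 0 h2

/-- Subgradient inequality for a convex (norm-like) function. -/
lemma aux_subgrad {H : E → ℝ}
    (Hhom : ∀ (c : ℝ) (ξ : E), H (c • ξ) = |c| * H ξ)
    (Htri : ∀ ξ η, H (ξ + η) ≤ H ξ + H η)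
    {x : E} (hd : DifferentiableAt ℝ H x) (y : E) :
    fderiv ℝ H x (y - x) ≤ H y - H x := by
  have h := (aux_deriv_line hd (y - x)).tendsto_slope_zero_right
  refine le_of_tendsto h ?_
  filter_upwards [Ioc_mem_nhdsGT_of_mem (Set.left_mem_Ico.2 zero_lt_one)] with t ht
  have hxt : x + t • (y - x) = (1 - t) • x + t • y := by module
  have key : H (x + t • (y - x)) ≤ (1 - t) * H x + t * H y := by
    rw [hxt]
    calc H ((1 - t) • x + t • y) ≤ H ((1 - t) • x) + H (t • y) := Htri _ _
      _ = (1 - t) * H x + t * H y := by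
          rw [Hhom, Hhom, abs_of_nonneg (by linarith [ht.2] : (0:ℝ) ≤ 1 - t),
            abs_of_nonneg ht.1.le]
  have h2 : H (x + (0 + t) • (y - x)) - H (x + (0:ℝ) • (y - x)) ≤ t * (H y - H x) := by
    simp only [zero_add, zero_smul, add_zero]
    nlinarith [key]
  have := mul_le_mul_of_nonneg_left h2 (inv_nonneg.2 ht.1.le)
  rw [inv_mul_cancel_left₀ ht.1.ne'] at this
  simpa [smul_eq_mul] using this

/-- At a point of differentiability, a subgradient is unique. -/
lemma aux_unique {H : E → ℝ} {x : E} (hd : DifferentiableAt ℝ H x) {L : E →L[ℝ] ℝ}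
    (hL : ∀ y, L (y - x) ≤ H y - H x) : L = fderiv ℝ H x := by
  have key : ∀ (t : ℝ) (v : E), t * L v ≤ H (x + t • v) - H x := by
    intro t v
    have := hL (x + t • v)
    simpa [smul_eq_mul] using this
  ext v
  have h1 : L v ≤ fderiv ℝ H x v := by
    refine ge_of_tendsto (aux_deriv_line hd v).tendsto_slope_zero_right ?_
    filter_upwards [self_mem_nhdsWithin] with t (ht : (0:ℝ) < t)
    have h2 := key t v
    have := mul_le_mul_of_nonneg_left h2 (inv_nonneg.2 ht.le)
    rw [inv_mul_cancel_left₀ ht.ne'] at this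
    simpa [smul_eq_mul] using this
  have h2 : fderiv ℝ H x v ≤ L v := by
    refine le_of_tendsto (aux_deriv_line hd v).tendsto_slope_zero_left ?_
    filter_upwards [self_mem_nhdsWithin] with t (ht : t < (0:ℝ))
    have h2 := key t v
    have := mul_le_mul_of_nonpos_left h2 (inv_nonpos.2 ht.le)
    rw [inv_mul_cancel_left₀ ht.ne] at this
    simpa [smul_eq_mul] using this
  exact le_antisymm h1 h2

set_option maxHeartbeats 1000000 in
/-- A convex function differentiable near a point has continuous derivative there
(finite-dimensional compactness argument). -/
lemma aux_fderiv_cont [FiniteDimensional ℝ E] {H : E → ℝ}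
    (Hhom : ∀ (c : ℝ) (ξ : E), H (c • ξ) = |c| * H ξ)
    (Htri : ∀ ξ η, H (ξ + η) ≤ H ξ + H η)
    (Hcont : Continuous H) {C : NNReal} (Hlip : LipschitzWith C H)
    (Hdiff : ∀ x : E, x ≠ 0 → DifferentiableAt ℝ H x)
    {x₀ : E} (hx₀ : x₀ ≠ 0) :
    ContinuousAt (fun x => fderiv ℝ H x) x₀ := by
  rw [ContinuousAt]
  apply tendsto_of_subseq_tendsto
  intro ns hns
  obtain ⟨N, hN⟩ := eventually_atTop.1 (hns.eventually_ne hx₀)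
  set u : ℕ → (E →L[ℝ] ℝ) := fun n => fderiv ℝ H (ns (n + N)) with hu_def
  have hu : ∀ n, u n ∈ Metric.closedBall (0 : E →L[ℝ] ℝ) C := fun n => by
    simpa [mem_closedBall_zero_iff] using norm_fderiv_le_of_lipschitz ℝ Hlip
  have hcpt : IsCompact (Metric.closedBall (0 : E →L[ℝ] ℝ) C) :=
    isCompact_closedBall _ _
  obtain ⟨L, _, ms, hms, hconv⟩ := hcpt.tendsto_subseq hu
  have hns' : Tendsto (fun k => ns (ms k + N)) atTop (𝓝 x₀) :=
    hns.comp ((tendsto_add_atTop_nat N).comp hms.tendsto_atTop)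
  have hsub : ∀ y, L (y - x₀) ≤ H y - H x₀ := by
    intro y
    have h1 : Tendsto (fun k => (u (ms k)) (y - ns (ms k + N))) atTop (𝓝 (L (y - x₀))) := by
      have hy : Tendsto (fun k => y - ns (ms k + N)) atTop (𝓝 (y - x₀)) :=
        tendsto_const_nhds.sub hns'
      exact (isBoundedBilinearMap_apply.continuous.tendsto (L, y - x₀)).comp
        (hconv.prodMk_nhds hy)
    have h2 : Tendsto (fun k => H y - H (ns (ms k + N))) atTop (𝓝 (H y - H x₀)) :=
      tendsto_const_nhds.sub (Hcont.continuousAt.tendsto.comp hns')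
    refine le_of_tendsto_of_tendsto' h1 h2 fun k => ?_
    exact aux_subgrad Hhom Htri (Hdiff _ (hN _ (Nat.le_add_left N (ms k)))) y
  have hLval : L = fderiv ℝ H x₀ := aux_unique (Hdiff x₀ hx₀) hsub
  exact ⟨fun k => ms k + N, hLval ▸ hconv⟩

/-- Derivative formula for `H^p/p` away from zeros of `H`. -/
lemma aux_hasFDerivAt_rpow {H : E → ℝ} {p : ℝ} (hp : 1 < p) {ζ : E}
    (hd : DifferentiableAt ℝ H ζ) :
    HasFDerivAt (fun ζ => H ζ ^ p / p) (H ζ ^ (p - 1) • fderiv ℝ H ζ) ζ := by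
  have hp0 : p ≠ 0 := by positivity
  have hg : HasDerivAt (fun t : ℝ => t ^ p / p) (H ζ ^ (p - 1)) (H ζ) := by
    have h := (Real.hasDerivAt_rpow_const (x := H ζ) (p := p) (Or.inr hp.le)).div_const p
    simpa [mul_div_assoc, mul_div_cancel_left₀ _ hp0] using h
  simpa [Function.comp_def] using hg.comp_hasFDerivAt ζ hd.hasFDerivAt

/-- Differentiability at the origin with vanishing derivative. -/
lemma aux_hasFDerivAt_zero {H : E → ℝ} {p : ℝ} (hp : 1 < p) {C : ℝ} (hC0 : 0 ≤ C)
    (H0 : H 0 = 0) (Hnonneg : ∀ ξ, 0 ≤ H ξ) (hCb : ∀ ξ, H ξ ≤ C * ‖ξ‖) :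
    HasFDerivAt (fun ζ => H ζ ^ p / p) (0 : E →L[ℝ] ℝ) 0 := by
  have hp0 : p ≠ 0 := by positivity
  rw [hasFDerivAt_iff_isLittleO_nhds_zero]
  have e0 : H (0:E) ^ p / p = 0 := by rw [H0, Real.zero_rpow hp0, zero_div]
  simp only [zero_add, ContinuousLinearMap.zero_apply, sub_zero, e0]
  have hO : (fun h : E => H h ^ p / p) =O[𝓝 0] fun h : E => ‖h‖ ^ p := by
    rw [isBigO_iff]
    refine ⟨C ^ p / p, Eventually.of_forall fun h => ?_⟩
    have h1 : H h ^ p ≤ (C * ‖h‖) ^ p :=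
      Real.rpow_le_rpow (Hnonneg h) (hCb h) (by positivity)
    have h2 : (C * ‖h‖) ^ p = C ^ p * ‖h‖ ^ p := Real.mul_rpow hC0 (norm_nonneg h)
    have h3 : 0 ≤ H h ^ p := Real.rpow_nonneg (Hnonneg h) p
    rw [Real.norm_eq_abs, Real.norm_eq_abs, abs_of_nonneg (by positivity : (0:ℝ) ≤ H h ^ p / p),
      abs_of_nonneg (Real.rpow_nonneg (norm_nonneg h) p)]
    rw [div_le_iff₀ (by positivity : (0:ℝ) < p)] at *
    calc H h ^ p ≤ C ^ p * ‖h‖ ^ p := h1.trans_eq h2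
      _ = C ^ p / p * ‖h‖ ^ p * p := by field_simp
  have ho : (fun h : E => ‖h‖ ^ p) =o[𝓝 0] fun h : E => h := by
    have h1 : (fun h : E => ‖h‖ ^ (p - 1)) =o[𝓝 0] fun _ : E => (1:ℝ) := by
      rw [isLittleO_one_iff]
      have hc : ContinuousAt (fun t : ℝ => t ^ (p - 1)) 0 :=
        Real.continuousAt_rpow_const 0 (p - 1) (Or.inr (by linarith))
      have := hc.tendsto.comp (tendsto_norm_zero (E := E))
      simpa [Real.zero_rpow (by linarith : p - 1 ≠ 0), Function.comp_def] using this
    have h2 := h1.mul_isBigO (isBigO_refl (fun h : E => ‖h‖) (𝓝 0))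
    have h3 : (fun h : E => ‖h‖ ^ (p - 1) * ‖h‖) = fun h : E => ‖h‖ ^ p := by
      funext h
      calc ‖h‖ ^ (p - 1) * ‖h‖ = ‖h‖ ^ (p - 1) * ‖h‖ ^ (1:ℝ) := by rw [Real.rpow_one]
        _ = ‖h‖ ^ (p - 1 + 1) := (Real.rpow_add' (norm_nonneg h) (by simpa using hp0)).symm
        _ = ‖h‖ ^ p := by ring_nf
    have h4 : (fun h : E => ‖h‖ ^ p) =o[𝓝 0] fun h : E => ‖h‖ := by
      rw [← h3]
      simpa using h2
    exact h4.of_norm_right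
  exact hO.trans_isLittleO ho

end aux

/-- For a norm `H` differentiable off the origin, `F := H^p/p`
is differentiable on all of `ℝⁿ`, `∇F(0) = 0`, and `∇F` is continuous; i.e. `F`
is continuously differentiable on `ℝⁿ`. -/
theorem stmt_6 (n : ℕ) (hn : 2 ≤ n) (p : ℝ) (hp : 1 < p)
    (H : EuclideanSpace ℝ (Fin n) → ℝ)
    (Hnonneg : ∀ ξ, 0 ≤ H ξ)
    (Heq_zero : ∀ ξ, H ξ = 0 ↔ ξ = 0)
    (Hhom : ∀ (c : ℝ) (ξ : EuclideanSpace ℝ (Fin n)), H (c • ξ) = |c| * H ξ)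
    (Htri : ∀ ξ η, H (ξ + η) ≤ H ξ + H η)
    (Hdiff : ∀ ξ : EuclideanSpace ℝ (Fin n), ξ ≠ 0 → DifferentiableAt ℝ H ξ) :
    Differentiable ℝ (fun ζ : EuclideanSpace ℝ (Fin n) => H ζ ^ p / p) ∧
      gradient (fun ζ : EuclideanSpace ℝ (Fin n) => H ζ ^ p / p) 0 = 0 ∧
      Continuous (gradient (fun ζ : EuclideanSpace ℝ (Fin n) => H ζ ^ p / p)) := by
  set F : (EuclideanSpace ℝ (Fin n)) → ℝ := fun ζ => H ζ ^ p / p with hF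
  have H0 : H 0 = 0 := (Heq_zero 0).2 rfl
  -- the norm comparison constant
  set C : ℝ := ∑ i, H (EuclideanSpace.single i 1) with hC
  have hC0 : 0 ≤ C := Finset.sum_nonneg fun i _ => Hnonneg _
  have hCb : ∀ ξ : (EuclideanSpace ℝ (Fin n)), H ξ ≤ C * ‖ξ‖ := by
    intro ξ
    have hsum : ∀ (s : Finset (Fin n)) (f : Fin n → (EuclideanSpace ℝ (Fin n))),
        H (∑ i ∈ s, f i) ≤ ∑ i ∈ s, H (f i) := by
      intro s f
      induction s using Finset.cons_induction with
      | empty => simp [H0]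
      | cons a s ha ih =>
        rw [Finset.sum_cons, Finset.sum_cons]
        exact (Htri _ _).trans (by linarith)
    have hrepr : ξ = ∑ i, ξ i • (EuclideanSpace.basisFun (Fin n) ℝ) i := by
      simpa using ((EuclideanSpace.basisFun (Fin n) ℝ).sum_repr ξ).symm
    have habs : ∀ i, |ξ i| ≤ ‖ξ‖ := by
      intro i
      have := abs_real_inner_le_norm ((EuclideanSpace.basisFun (Fin n) ℝ) i) ξ
      simpa [EuclideanSpace.basisFun_apply, EuclideanSpace.inner_single_left,
        EuclideanSpace.norm_single] using this
    calc H ξ = H (∑ i, ξ i • (EuclideanSpace.basisFun (Fin n) ℝ) i) := by rw [← hrepr]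
      _ ≤ ∑ i, H (ξ i • (EuclideanSpace.basisFun (Fin n) ℝ) i) := hsum _ _
      _ = ∑ i, |ξ i| * H (EuclideanSpace.single i 1) := by
          simp [Hhom, EuclideanSpace.basisFun_apply]
      _ ≤ ∑ i, ‖ξ‖ * H (EuclideanSpace.single i 1) := by
          refine Finset.sum_le_sum fun i _ => ?_
          exact mul_le_mul_of_nonneg_right (habs i) (Hnonneg _)
      _ = C * ‖ξ‖ := by rw [← Finset.mul_sum, mul_comm]
  -- Lipschitz property
  have habs_sub : ∀ a b : (EuclideanSpace ℝ (Fin n)), |H a - H b| ≤ C * ‖a - b‖ := by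
    intro a b
    have h1 : H a - H b ≤ H (a - b) := by
      have h := Htri b (a - b)
      have e : b + (a - b) = a := by abel
      rw [e] at h
      linarith
    have h2 : H b - H a ≤ H (a - b) := by
      have h := Htri a (b - a)
      have e : a + (b - a) = b := by abel
      rw [e] at h
      have hs : H (a - b) = H (b - a) := by
        have := Hhom (-1) (b - a)
        simpa [neg_sub] using this
      linarith
    have := abs_sub_le_iff.2 ⟨h1.trans (hCb _), h2.trans (hCb _)⟩
    exact this
  have Hlip : LipschitzWith C.toNNReal H := by
    refine LipschitzWith.of_dist_le_mul fun a b => ?_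
    rw [Real.dist_eq, dist_eq_norm, Real.coe_toNNReal _ hC0]
    exact habs_sub a b
  have Hcont : Continuous H := Hlip.continuous
  -- differentiability
  have hFd0 : HasFDerivAt F (0 : (EuclideanSpace ℝ (Fin n)) →L[ℝ] ℝ) 0 :=
    aux_hasFDerivAt_zero hp hC0 H0 Hnonneg hCb
  have hFd : ∀ ζ : (EuclideanSpace ℝ (Fin n)), ζ ≠ 0 → HasFDerivAt F (H ζ ^ (p - 1) • fderiv ℝ H ζ) ζ :=
    fun ζ hζ => aux_hasFDerivAt_rpow hp (Hdiff ζ hζ)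
  have hDiff : Differentiable ℝ F := by
    intro ζ
    by_cases hζ : ζ = 0
    · exact hζ ▸ hFd0.differentiableAt
    · exact (hFd ζ hζ).differentiableAt
  refine ⟨hDiff, ?_, ?_⟩
  · show (InnerProductSpace.toDual ℝ (EuclideanSpace ℝ (Fin n))).symm (fderiv ℝ F 0) = 0
    rw [hFd0.fderiv]
    exact map_zero _
  · -- continuity of the gradient
    have hCbound : ∀ ζ : (EuclideanSpace ℝ (Fin n)), ‖fderiv ℝ H ζ‖ ≤ C := fun ζ => by
      simpa [Real.coe_toNNReal _ hC0] using norm_fderiv_le_of_lipschitz ℝ Hlip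
    have hfc : Continuous fun ζ : (EuclideanSpace ℝ (Fin n)) => fderiv ℝ F ζ := by
      rw [continuous_iff_continuousAt]
      intro x
      by_cases hx : x = 0
      · subst hx
        rw [ContinuousAt, hFd0.fderiv]
        have hb : ∀ ζ : (EuclideanSpace ℝ (Fin n)), ‖fderiv ℝ F ζ‖ ≤ (C * ‖ζ‖) ^ (p - 1) * C := by
          intro ζ
          by_cases hζ : ζ = 0
          · subst hζ
            rw [hFd0.fderiv]
            simp only [norm_zero]
            positivity
          · rw [(hFd ζ hζ).fderiv, norm_smul, Real.norm_eq_abs,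
              abs_of_nonneg (Real.rpow_nonneg (Hnonneg ζ) _)]
            have h1 : H ζ ^ (p - 1) ≤ (C * ‖ζ‖) ^ (p - 1) :=
              Real.rpow_le_rpow (Hnonneg ζ) (hCb ζ) (by linarith)
            have h2 : 0 ≤ H ζ ^ (p - 1) := Real.rpow_nonneg (Hnonneg ζ) _
            exact mul_le_mul h1 (hCbound ζ) (norm_nonneg _) (by positivity)
        have hg : Tendsto (fun ζ : (EuclideanSpace ℝ (Fin n)) => (C * ‖ζ‖) ^ (p - 1) * C) (𝓝 0) (𝓝 0) := by
          have hc : ContinuousAt (fun t : ℝ => t ^ (p - 1)) 0 :=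
            Real.continuousAt_rpow_const 0 (p - 1) (Or.inr (by linarith))
          have h1 : Tendsto (fun ζ : (EuclideanSpace ℝ (Fin n)) => C * ‖ζ‖) (𝓝 0) (𝓝 0) := by
            simpa using (tendsto_norm_zero (E := EuclideanSpace ℝ (Fin n))).const_mul C
          have := (hc.tendsto.comp h1).mul_const C
          simpa [Real.zero_rpow (by linarith : p - 1 ≠ 0)] using this
        exact squeeze_zero_norm hb hg
      · have h1 : ContinuousAt (fun ζ : (EuclideanSpace ℝ (Fin n)) => H ζ ^ (p - 1)) x := by
          have hc : ContinuousAt (fun t : ℝ => t ^ (p - 1)) (H x) :=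
            Real.continuousAt_rpow_const (H x) (p - 1) (Or.inr (by linarith))
          exact hc.comp Hcont.continuousAt
        have h2 : ContinuousAt (fun ζ : (EuclideanSpace ℝ (Fin n)) => fderiv ℝ H ζ) x :=
          aux_fderiv_cont Hhom Htri Hcont Hlip Hdiff hx
        have h3 : ContinuousAt (fun ζ : (EuclideanSpace ℝ (Fin n)) => H ζ ^ (p - 1) • fderiv ℝ H ζ) x := h1.smul h2
        refine h3.congr ?_
        filter_upwards [isOpen_compl_singleton.mem_nhds hx] with ζ hζ
        exact ((hFd ζ hζ).fderiv).symm
    show Continuous fun x : (EuclideanSpace ℝ (Fin n)) => (InnerProductSpace.toDual ℝ (EuclideanSpace ℝ (Fin n))).symm (fderiv ℝ F x)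
    exact (InnerProductSpace.toDual ℝ (EuclideanSpace ℝ (Fin n))).symm.continuous.comp hfc
end

section
/- Let A be a symmetric positive definite real n×n matrix and |ξ|_A := √⟪Aξ, ξ⟫. There exist constants c, C > 0 depending only on p such that for all ξ, η ∈ ℝⁿ with (ξ,η) ≠ (0,0): c·|η|_A²·(|η|_A + |ξ|_A)^{p−2} ≤ |ξ+η|_A^p − |ξ|_A^p − p·|ξ|_A^{p−2}·⟪Aξ, η⟫ ≤ C·|η|_A²·(|η|_A + |ξ|_A)^{p−2}, where the term |ξ|_A^{p−2}·⟪Aξ, η⟫ is interpreted as 0 when ξ = 0. -/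
open scoped Classical

open Matrix



private lemma mono_right {H H' : ℝ → ℝ} {x : ℝ} (hx : 0 < x)
    (hder : ∀ t ∈ Set.Icc (0:ℝ) x, HasDerivAt H (H' t) t)
    (hcont : ContinuousOn H' (Set.Icc 0 x))
    (hder2 : ∀ t ∈ Set.Ioo (0:ℝ) x, ∃ d, HasDerivAt H' d t ∧ 0 ≤ d)
    (h0 : H' 0 = 0) : H 0 ≤ H x := by
  have hmono' : MonotoneOn H' (Set.Icc 0 x) := by
    apply monotoneOn_of_deriv_nonneg (convex_Icc 0 x) hcont
    · rw [interior_Icc]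
      intro t ht
      obtain ⟨d, hd, _⟩ := hder2 t ht
      exact hd.differentiableAt.differentiableWithinAt
    · rw [interior_Icc]
      intro t ht
      obtain ⟨d, hd, hd0⟩ := hder2 t ht
      rw [hd.deriv]; exact hd0
  have hH'0 : ∀ t ∈ Set.Icc (0:ℝ) x, 0 ≤ H' t := by
    intro t ht
    have := hmono' (Set.left_mem_Icc.2 hx.le) ht ht.1
    rwa [h0] at this
  have hmono : MonotoneOn H (Set.Icc 0 x) := by
    apply monotoneOn_of_deriv_nonneg (convex_Icc 0 x)
    · intro t ht; exact (hder t ht).continuousAt.continuousWithinAt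
    · rw [interior_Icc]
      intro t ht
      exact (hder t (Set.Ioo_subset_Icc_self ht)).differentiableAt.differentiableWithinAt
    · rw [interior_Icc]
      intro t ht
      rw [(hder t (Set.Ioo_subset_Icc_self ht)).deriv]
      exact hH'0 t (Set.Ioo_subset_Icc_self ht)
  exact hmono (Set.left_mem_Icc.2 hx.le) (Set.right_mem_Icc.2 hx.le) hx.le

private lemma mono_left {H H' : ℝ → ℝ} {x : ℝ} (hx : x < 0)
    (hder : ∀ t ∈ Set.Icc x (0:ℝ), HasDerivAt H (H' t) t)
    (hcont : ContinuousOn H' (Set.Icc x 0))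
    (hder2 : ∀ t ∈ Set.Ioo x (0:ℝ), ∃ d, HasDerivAt H' d t ∧ 0 ≤ d)
    (h0 : H' 0 = 0) : H 0 ≤ H x := by
  have hmono' : MonotoneOn H' (Set.Icc x 0) := by
    apply monotoneOn_of_deriv_nonneg (convex_Icc x 0) hcont
    · rw [interior_Icc]
      intro t ht
      obtain ⟨d, hd, _⟩ := hder2 t ht
      exact hd.differentiableAt.differentiableWithinAt
    · rw [interior_Icc]
      intro t ht
      obtain ⟨d, hd, hd0⟩ := hder2 t ht
      rw [hd.deriv]; exact hd0
  have hH'0 : ∀ t ∈ Set.Icc x (0:ℝ), H' t ≤ 0 := by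
    intro t ht
    have := hmono' ht (Set.right_mem_Icc.2 hx.le) ht.2
    rwa [h0] at this
  have hanti : AntitoneOn H (Set.Icc x 0) := by
    apply antitoneOn_of_deriv_nonpos (convex_Icc x 0)
    · intro t ht; exact (hder t ht).continuousAt.continuousWithinAt
    · rw [interior_Icc]
      intro t ht
      exact (hder t (Set.Ioo_subset_Icc_self ht)).differentiableAt.differentiableWithinAt
    · rw [interior_Icc]
      intro t ht
      rw [(hder t (Set.Ioo_subset_Icc_self ht)).deriv]
      exact hH'0 t (Set.Ioo_subset_Icc_self ht)
  exact hanti (Set.left_mem_Icc.2 hx.le) (Set.right_mem_Icc.2 hx.le) hx.le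

private lemma hasDerivAt_onePow (p : ℝ) (hp : 1 ≤ p) (t : ℝ) :
    HasDerivAt (fun u : ℝ => (1+u)^p) (p*(1+t)^(p-1)) t := by
  have hd : HasDerivAt (fun u : ℝ => 1+u) 1 t := by
    simpa using (hasDerivAt_id t).const_add (1:ℝ)
  have := hd.rpow_const (p := p) (Or.inr hp)
  simpa using this

private lemma hasDerivAt_onePow' (p : ℝ) {t : ℝ} (ht : (1:ℝ)+t ≠ 0) :
    HasDerivAt (fun u : ℝ => (1+u)^(p-1)) ((p-1)*(1+t)^(p-2)) t := by
  have hd : HasDerivAt (fun u : ℝ => 1+u) 1 t := by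
    simpa using (hasDerivAt_id t).const_add (1:ℝ)
  have := hd.rpow_const (p := p-1) (Or.inl ht)
  have e : p-1-1 = p-2 := by ring
  simpa [e] using this

private lemma contOn_onePow (q : ℝ) (hq : 0 ≤ q) (s : Set ℝ) :
    ContinuousOn (fun u : ℝ => (1+u)^q) s := by
  apply Continuous.continuousOn
  exact (continuous_const.add continuous_id).rpow_const (fun t => Or.inr hq)

private lemma hasDerivAt_sq (a t : ℝ) : HasDerivAt (fun u : ℝ => a*u^2) (2*a*t) t := by
  have := (hasDerivAt_pow 2 t).const_mul a
  refine this.congr_deriv ?_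
  ring

private lemma kc_low {p : ℝ} (hp : 1 < p) {x m : ℝ} (hx1 : -1 ≤ x) (hx : x ≠ 0)
    (hm : ∀ t, min x 0 < t → t < max x 0 → m ≤ p*((p-1)*(1+t)^(p-2))) :
    m/2*x^2 ≤ (1+x)^p - 1 - p*x := by
  set H : ℝ → ℝ := fun t => (1+t)^p - 1 - p*t - m/2*t^2 with hH
  set H' : ℝ → ℝ := fun t => p*(1+t)^(p-1) - p - m*t with hH'
  have hder : ∀ t : ℝ, HasDerivAt H (H' t) t := by
    intro t
    have h1 := hasDerivAt_onePow p hp.le t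
    have h2 := hasDerivAt_sq (m/2) t
    have := ((h1.sub_const 1).sub ((hasDerivAt_id t).const_mul p)).sub h2
    refine this.congr_deriv ?_
    simp [hH', mul_comm]
    ring
  have hcont : ∀ s : Set ℝ, ContinuousOn H' s := by
    intro s
    have := ((contOn_onePow (p-1) (by linarith) s).const_smul p).sub
      ((continuousOn_const (c := m)).mul continuousOn_id)
    refine (this.sub (continuousOn_const (c := p))).congr ?_
    intro t _
    simp [hH', smul_eq_mul]
    ring
  have hder2 : ∀ t, min x 0 < t → t < max x 0 →
      ∃ d, HasDerivAt H' d t ∧ 0 ≤ d := by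
    intro t ht1 ht2
    have h1t : (1:ℝ)+t ≠ 0 := by
      have hm1 : (-1:ℝ) ≤ min x 0 := le_min hx1 (by norm_num)
      have ht' : (-1:ℝ) < t := lt_of_le_of_lt hm1 ht1
      intro hcontra
      linarith
    refine ⟨p*((p-1)*(1+t)^(p-2)) - m, ?_, ?_⟩
    · have := (((hasDerivAt_onePow' p h1t).const_mul p).sub_const p).sub
        ((hasDerivAt_id t).const_mul m)
      refine this.congr_deriv ?_
      ring
    · linarith [hm t ht1 ht2]
  have h0 : H' 0 = 0 := by simp [hH']
  have hH0 : H 0 = 0 := by simp [hH]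
  have key : H 0 ≤ H x := by
    rcases lt_or_gt_of_ne hx with h | h
    · have hmin : min x 0 = x := min_eq_left h.le
      have hmax : max x 0 = 0 := max_eq_right h.le
      exact mono_left h (fun t _ => hder t) (hcont _)
        (fun t ht => hder2 t (by rw [hmin]; exact ht.1) (by rw [hmax]; exact ht.2)) h0
    · have hmin : min x 0 = 0 := min_eq_right h.le
      have hmax : max x 0 = x := max_eq_left h.le
      exact mono_right h (fun t _ => hder t) (hcont _)
        (fun t ht => hder2 t (by rw [hmin]; exact ht.1) (by rw [hmax]; exact ht.2)) h0
  rw [hH0] at key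
  simp only [hH] at key
  linarith

private lemma kc_up {p : ℝ} (hp : 1 < p) {x M : ℝ} (hx1 : -1 ≤ x) (hx : x ≠ 0)
    (hm : ∀ t, min x 0 < t → t < max x 0 → p*((p-1)*(1+t)^(p-2)) ≤ M) :
    (1+x)^p - 1 - p*x ≤ M/2*x^2 := by
  set H : ℝ → ℝ := fun t => M/2*t^2 - ((1+t)^p - 1 - p*t) with hH
  set H' : ℝ → ℝ := fun t => M*t - (p*(1+t)^(p-1) - p) with hH'
  have hder : ∀ t : ℝ, HasDerivAt H (H' t) t := by
    intro t
    have h1 := hasDerivAt_onePow p hp.le t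
    have h2 := hasDerivAt_sq (M/2) t
    have := h2.sub ((h1.sub_const 1).sub ((hasDerivAt_id t).const_mul p))
    refine this.congr_deriv ?_
    ring
  have hcont : ∀ s : Set ℝ, ContinuousOn H' s := by
    intro s
    have := ((continuousOn_const (c := M)).mul continuousOn_id).sub
      (((contOn_onePow (p-1) (by linarith) s).const_smul p).sub (continuousOn_const (c := p)))
    refine this.congr ?_
    intro t _
    simp [hH', smul_eq_mul]
  have hder2 : ∀ t, min x 0 < t → t < max x 0 →
      ∃ d, HasDerivAt H' d t ∧ 0 ≤ d := by
    intro t ht1 ht2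
    have h1t : (1:ℝ)+t ≠ 0 := by
      have hm1 : (-1:ℝ) ≤ min x 0 := le_min hx1 (by norm_num)
      have ht' : (-1:ℝ) < t := lt_of_le_of_lt hm1 ht1
      intro hcontra
      linarith
    refine ⟨M - p*((p-1)*(1+t)^(p-2)), ?_, ?_⟩
    · have := ((hasDerivAt_id t).const_mul M).sub
        (((hasDerivAt_onePow' p h1t).const_mul p).sub_const p)
      refine this.congr_deriv ?_
      ring
    · linarith [hm t ht1 ht2]
  have h0 : H' 0 = 0 := by simp [hH']
  have hH0 : H 0 = 0 := by simp [hH]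
  have key : H 0 ≤ H x := by
    rcases lt_or_gt_of_ne hx with h | h
    · have hmin : min x 0 = x := min_eq_left h.le
      have hmax : max x 0 = 0 := max_eq_right h.le
      exact mono_left h (fun t _ => hder t) (hcont _)
        (fun t ht => hder2 t (by rw [hmin]; exact ht.1) (by rw [hmax]; exact ht.2)) h0
    · have hmin : min x 0 = 0 := min_eq_right h.le
      have hmax : max x 0 = x := max_eq_left h.le
      exact mono_right h (fun t _ => hder t) (hcont _)
        (fun t ht => hder2 t (by rw [hmin]; exact ht.1) (by rw [hmax]; exact ht.2)) h0
  rw [hH0] at key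
  simp only [hH] at key
  linarith

private lemma rpow_mul_rpow_neg {a : ℝ} (ha : 0 < a) (u : ℝ) : a^u * a^(-u) = 1 := by
  rw [← Real.rpow_add ha]
  simp

private lemma one_div_rpow {a : ℝ} (ha : 0 < a) (u : ℝ) : ((1/a):ℝ)^u = a^(-u) := by
  rw [one_div, Real.inv_rpow ha.le, Real.rpow_neg ha.le]

private lemma onevar_low_le2 {p : ℝ} (hp : 1 < p) (hp2 : p ≤ 2) :
    ∀ x : ℝ, -1 ≤ x → p*(p-1)/2*(x^2*(2+x)^(p-2)) ≤ (1+x)^p - 1 - p*x := by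
  intro x hx1
  rcases eq_or_ne x 0 with rfl | hx
  · simp
  · have key := kc_low hp hx1 hx (m := p*(p-1)*(2+x)^(p-2)) ?_
    · nlinarith [key]
    · intro t ht1 ht2
      have hm1 : (-1:ℝ) ≤ min x 0 := le_min hx1 (by norm_num)
      have ht' : (-1:ℝ) < t := lt_of_le_of_lt hm1 ht1
      have h1t : (0:ℝ) < 1+t := by linarith
      have hle : 1+t ≤ 2+x := by
        rcases lt_or_gt_of_ne hx with h | h
        · have : t < 0 := lt_of_lt_of_le ht2 (by simp [max_eq_right h.le])
          linarith
        · have : t < x := lt_of_lt_of_le ht2 (by simp [max_eq_left h.le])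
          linarith
      have := Real.rpow_le_rpow_of_nonpos h1t hle (by linarith : p-2 ≤ 0)
      nlinarith [this, mul_pos (lt_trans zero_lt_one hp) (by linarith : (0:ℝ) < p-1)]

private lemma onevar_up_le2 {p : ℝ} (hp : 1 < p) (hp2 : p ≤ 2) :
    ∀ x : ℝ, -1 ≤ x → (1+x)^p - 1 - p*x ≤ (6*p+2*p*(p-1)+4)*(x^2*(2+x)^(p-2)) := by
  intro x hx1
  have hp0 : (0:ℝ) < p := lt_trans zero_lt_one hp
  have hp1 : (0:ℝ) < p - 1 := by linarith
  have hC : (0:ℝ) < 6*p+2*p*(p-1)+4 := by nlinarith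
  rcases le_or_gt x (-1/2) with hc1 | hc1
  · -- x ∈ [-1, -1/2] : direct
    have hg : (1+x)^p - 1 - p*x ≤ p := by
      have h1 : (1+x)^p ≤ 1 := Real.rpow_le_one (by linarith) (by linarith) hp0.le
      nlinarith
    have hx2 : (1/4:ℝ) ≤ x^2 := by nlinarith
    have hrp : (2/3:ℝ) ≤ (2+x)^(p-2) := by
      have h1 : ((3/2):ℝ)^(p-2) ≤ (2+x)^(p-2) :=
        Real.rpow_le_rpow_of_nonpos (by linarith) (by linarith) (by linarith)
      have h2 : ((3/2):ℝ)^(-1:ℝ) ≤ ((3/2):ℝ)^(p-2) :=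
        Real.rpow_le_rpow_of_exponent_le (by norm_num) (by linarith)
      rw [Real.rpow_neg_one] at h2
      norm_num at h2
      linarith
    have hpos : (0:ℝ) ≤ (2+x)^(p-2) := Real.rpow_nonneg (by linarith) _
    nlinarith [mul_le_mul_of_nonneg_left hrp (le_of_lt hC)]
  rcases le_or_gt x 0 with hc2 | hc2
  · -- x ∈ (-1/2, 0]
    rcases eq_or_ne x 0 with rfl | hx
    · simp
    · have key := kc_up hp hx1 hx (M := 2*(p*(p-1))) ?_
      · have hrp : (1/2:ℝ) ≤ (2+x)^(p-2) := by
          have h1 : ((2):ℝ)^(p-2) ≤ (2+x)^(p-2) :=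
            Real.rpow_le_rpow_of_nonpos (by linarith) (by linarith) (by linarith)
          have h2 : ((2):ℝ)^(-1:ℝ) ≤ ((2):ℝ)^(p-2) :=
            Real.rpow_le_rpow_of_exponent_le (by norm_num) (by linarith)
          rw [Real.rpow_neg_one] at h2
          norm_num at h2
          linarith
        have hxx : (0:ℝ) ≤ x^2 := sq_nonneg x
        nlinarith [mul_le_mul_of_nonneg_left hrp (mul_nonneg hxx (by nlinarith : (0:ℝ) ≤ 6*p+2*p*(p-1)+4-2*(p*(p-1))))]
      · intro t ht1 ht2
        have htx : x < t := by
          have : min x 0 = x := min_eq_left hc2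
          rw [this] at ht1
          exact ht1
        have h1t : (1/2:ℝ) ≤ 1+t := by linarith
        have h2 : (1+t)^(p-2) ≤ ((1/2):ℝ)^(p-2) :=
          Real.rpow_le_rpow_of_nonpos (by linarith) h1t (by linarith)
        have h3 : ((1/2):ℝ)^(p-2) = 2^(2-p) := by
          rw [one_div_rpow two_pos]
          norm_num
        have h4 : (2:ℝ)^(2-p) ≤ 2^(1:ℝ) :=
          Real.rpow_le_rpow_of_exponent_le (by norm_num) (by linarith)
        have h5 : (2:ℝ)^(1:ℝ) = 2 := Real.rpow_one 2
        have hb : (1+t)^(p-2) ≤ 2 := by linarith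
        have hb2 := mul_le_mul_of_nonneg_left hb (by linarith : (0:ℝ) ≤ p-1)
        have hb3 := mul_le_mul_of_nonneg_left hb2 hp0.le
        linarith
  rcases le_or_gt x 2 with hc3 | hc3
  · -- x ∈ (0, 2]
    have key := kc_up hp hx1 (by linarith : x ≠ 0) (M := p*(p-1)) ?_
    · have hrp : (1/4:ℝ) ≤ (2+x)^(p-2) := by
        have h1 : ((4):ℝ)^(p-2) ≤ (2+x)^(p-2) :=
          Real.rpow_le_rpow_of_nonpos (by linarith) (by linarith) (by linarith)
        have h2 : ((4):ℝ)^(-1:ℝ) ≤ ((4):ℝ)^(p-2) :=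
          Real.rpow_le_rpow_of_exponent_le (by norm_num) (by linarith)
        rw [Real.rpow_neg_one] at h2
        norm_num at h2
        linarith
      have hxx : (0:ℝ) ≤ x^2 := sq_nonneg x
      nlinarith [mul_le_mul_of_nonneg_left hrp (mul_nonneg hxx (by nlinarith : (0:ℝ) ≤ 2*(6*p+2*p*(p-1)+4)-p*(p-1)))]
    · intro t ht1 ht2
      have h0t : (0:ℝ) < t := by
        have : min x 0 = 0 := min_eq_right hc2.le
        rw [this] at ht1
        exact ht1
      have h2 : (1+t)^(p-2) ≤ 1 :=
        Real.rpow_le_one_of_one_le_of_nonpos (by linarith) (by linarith)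
      have hb2 := mul_le_mul_of_nonneg_left h2 (by linarith : (0:ℝ) ≤ p-1)
      have hb3 := mul_le_mul_of_nonneg_left hb2 hp0.le
      linarith
  · -- x > 2 : direct
    have h0 : (0:ℝ) < 2 + x := by linarith
    have h1 : (1+x)^p ≤ (2+x)^p := Real.rpow_le_rpow (by linarith) (by linarith) hp0.le
    have h2 : (2+x)^p = (2+x)^2 * (2+x)^(p-2) := by
      rw [← Real.rpow_natCast (2+x) 2, ← Real.rpow_add h0]
      norm_num
    have h3 : (0:ℝ) ≤ (2+x)^(p-2) := Real.rpow_nonneg h0.le _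
    have h4 : (2+x)^2 ≤ 4*x^2 := by nlinarith
    have h5 : (2+x)^2 * (2+x)^(p-2) ≤ 4*x^2 * (2+x)^(p-2) :=
      mul_le_mul_of_nonneg_right h4 h3
    have h6 : (0:ℝ) ≤ x^2 * (2+x)^(p-2) := mul_nonneg (sq_nonneg x) h3
    have h7 : (1+x)^p ≤ 4*(x^2*(2+x)^(p-2)) := by linarith
    have h8 : 4*(x^2*(2+x)^(p-2)) ≤ (6*p+2*p*(p-1)+4)*(x^2*(2+x)^(p-2)) := by
      nlinarith [mul_nonneg (by nlinarith : (0:ℝ) ≤ 6*p+2*p*(p-1)) h6]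
    nlinarith [mul_pos hp0 hc2]

private lemma onevar_up_ge2 {p : ℝ} (hp2 : 2 ≤ p) :
    ∀ x : ℝ, -1 ≤ x → (1+x)^p - 1 - p*x ≤ p*(p-1)/2*(x^2*(2+x)^(p-2)) := by
  intro x hx1
  have hp : 1 < p := by linarith
  have hp0 : (0:ℝ) < p := by linarith
  rcases eq_or_ne x 0 with rfl | hx
  · simp
  · have key := kc_up hp hx1 hx (M := p*(p-1)*(2+x)^(p-2)) ?_
    · nlinarith [key]
    · intro t ht1 ht2
      have hm1 : (-1:ℝ) ≤ min x 0 := le_min hx1 (by norm_num)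
      have ht' : (-1:ℝ) < t := lt_of_le_of_lt hm1 ht1
      have hle : 1+t ≤ 2+x := by
        rcases lt_or_gt_of_ne hx with h | h
        · have : t < 0 := lt_of_lt_of_le ht2 (by simp [max_eq_right h.le])
          linarith
        · have : t < x := lt_of_lt_of_le ht2 (by simp [max_eq_left h.le])
          linarith
      have hX : (1+t)^(p-2) ≤ (2+x)^(p-2) :=
        Real.rpow_le_rpow (by linarith) hle (by linarith)
      have hb2 := mul_le_mul_of_nonneg_left hX (by linarith : (0:ℝ) ≤ p-1)
      have hb3 := mul_le_mul_of_nonneg_left hb2 hp0.le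
      linarith

set_option maxHeartbeats 1600000 in
private lemma onevar_low_ge2 {p : ℝ} (hp2 : 2 ≤ p) :
    ∃ c : ℝ, 0 < c ∧ ∀ x : ℝ, -1 ≤ x →
      c*(x^2*(2+x)^(p-2)) ≤ (1+x)^p - 1 - p*x := by
  have hp : 1 < p := by linarith
  have hp0 : (0:ℝ) < p := by linarith
  have hp1 : (0:ℝ) ≤ p - 1 := by linarith
  have hq : (0:ℝ) ≤ p - 2 := by linarith
  set c1 : ℝ := 2^(1-p) with hc1def
  set c2 : ℝ := p*(p-1)/2*(4^(2-p)*2^(2-p)) with hc2def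
  set c3 : ℝ := p*(p-1)/2*4^(2-p) with hc3def
  set c4 : ℝ := (3/4)*2^(2-p) with hc4def
  have hc1 : 0 < c1 := Real.rpow_pos_of_pos two_pos _
  have hc2 : 0 < c2 := by
    have h4 := Real.rpow_pos_of_pos (show (0:ℝ) < 4 by norm_num) (2-p)
    have h2' := Real.rpow_pos_of_pos two_pos (2-p)
    have hpp : (0:ℝ) < p*(p-1)/2 := by nlinarith
    exact mul_pos hpp (mul_pos h4 h2')
  have hc3 : 0 < c3 := by
    have h4 := Real.rpow_pos_of_pos (show (0:ℝ) < 4 by norm_num) (2-p)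
    have hpp : (0:ℝ) < p*(p-1)/2 := by nlinarith
    exact mul_pos hpp h4
  have hc4 : 0 < c4 := by
    have h2' := Real.rpow_pos_of_pos two_pos (2-p)
    exact mul_pos (by norm_num) h2' 
  refine ⟨min (min c1 c2) (min c3 c4), by positivity, ?_⟩
  intro x hx1
  have hXnn : (0:ℝ) ≤ (2+x)^(p-2) := Real.rpow_nonneg (by linarith) _
  have hxXnn : (0:ℝ) ≤ x^2*(2+x)^(p-2) := mul_nonneg (sq_nonneg x) hXnn
  have reduce : ∀ ci : ℝ, min (min c1 c2) (min c3 c4) ≤ ci →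
      ci*(x^2*(2+x)^(p-2)) ≤ (1+x)^p - 1 - p*x →
      min (min c1 c2) (min c3 c4)*(x^2*(2+x)^(p-2)) ≤ (1+x)^p - 1 - p*x := by
    intro ci hci hbound
    calc min (min c1 c2) (min c3 c4)*(x^2*(2+x)^(p-2))
        ≤ ci*(x^2*(2+x)^(p-2)) := mul_le_mul_of_nonneg_right hci hxXnn
      _ ≤ _ := hbound
  rcases le_or_gt x (-3/4) with hc | hc
  · -- L1 : x ∈ [-1, -3/4]
    refine reduce c1 (le_trans (min_le_left _ _) (min_le_left _ _)) ?_
    have hg : (3/4)*p - 1 ≤ (1+x)^p - 1 - p*x := by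
      have h0 : (0:ℝ) ≤ (1+x)^p := Real.rpow_nonneg (by linarith) _
      have h1 : (3/4:ℝ) ≤ -x := by linarith
      have h2 := mul_le_mul_of_nonneg_left h1 hp0.le
      nlinarith
    have hghalf : (1/2:ℝ) ≤ (1+x)^p - 1 - p*x := by nlinarith
    have hX : (2+x)^(p-2) ≤ 2^(p-2) :=
      Real.rpow_le_rpow (by linarith) (by linarith) hq
    have hx2 : x^2 ≤ 1 := by nlinarith
    have hprod : x^2*(2+x)^(p-2) ≤ 2^(p-2) := by
      calc x^2*(2+x)^(p-2) ≤ 1*(2+x)^(p-2) := mul_le_mul_of_nonneg_right hx2 hXnn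
        _ = (2+x)^(p-2) := one_mul _
        _ ≤ 2^(p-2) := hX
    have he : c1*(2:ℝ)^(p-2) = 1/2 := by
      rw [hc1def, ← Real.rpow_add two_pos, show (1:ℝ)-p+(p-2) = -1 by ring,
        Real.rpow_neg_one]
      norm_num
    calc c1*(x^2*(2+x)^(p-2)) ≤ c1*(2:ℝ)^(p-2) := mul_le_mul_of_nonneg_left hprod hc1.le
      _ = 1/2 := he
      _ ≤ _ := hghalf
  rcases le_or_gt x 0 with hc0 | hc0
  · -- L2 : x ∈ (-3/4, 0]
    rcases eq_or_ne x 0 with rfl | hxne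
    · simp
    refine reduce c2 (le_trans (min_le_left _ _) (min_le_right _ _)) ?_
    have key := kc_low hp hx1 hxne (m := p*(p-1)*4^(2-p)) ?_
    · have hX : (2+x)^(p-2) ≤ 2^(p-2) :=
        Real.rpow_le_rpow (by linarith) (by linarith) hq
      have he : (2:ℝ)^(2-p)*(2:ℝ)^(p-2) = 1 := by
        rw [← Real.rpow_add two_pos]
        norm_num
      have step : c2*(x^2*(2+x)^(p-2)) ≤ c2*(x^2*(2:ℝ)^(p-2)) := by
        apply mul_le_mul_of_nonneg_left _ hc2.le
        exact mul_le_mul_of_nonneg_left hX (sq_nonneg x)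
      have heq : c2*(x^2*(2:ℝ)^(p-2)) = p*(p-1)*4^(2-p)/2*x^2 := by
        rw [hc2def]
        have : p*(p-1)/2*(4^(2-p)*2^(2-p))*(x^2*(2:ℝ)^(p-2))
            = p*(p-1)*4^(2-p)/2*x^2*((2:ℝ)^(2-p)*(2:ℝ)^(p-2)) := by ring
        rw [this, he, mul_one]
      linarith
    · intro t ht1 ht2
      have hmin : min x 0 = x := min_eq_left hc0
      rw [hmin] at ht1
      have h1t4 : (1/4:ℝ) ≤ 1+t := by linarith
      have hX : ((1/4):ℝ)^(p-2) ≤ (1+t)^(p-2) :=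
        Real.rpow_le_rpow (by norm_num) h1t4 hq
      have he : ((1/4):ℝ)^(p-2) = 4^(2-p) := by
        rw [one_div_rpow (by norm_num : (0:ℝ) < 4)]
        congr 1
        ring
      rw [he] at hX
      have hb2 := mul_le_mul_of_nonneg_left hX hp1
      have hb3 := mul_le_mul_of_nonneg_left hb2 hp0.le
      linarith
  rcases le_or_gt x 2 with hc2' | hc2'
  · -- L3 : x ∈ (0, 2]
    refine reduce c3 (le_trans (min_le_right _ _) (min_le_left _ _)) ?_
    have key := kc_low hp hx1 (by linarith : x ≠ 0) (m := p*(p-1)) ?_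
    · have hX : (2+x)^(p-2) ≤ 4^(p-2) :=
        Real.rpow_le_rpow (by linarith) (by linarith) hq
      have he : (4:ℝ)^(2-p)*(4:ℝ)^(p-2) = 1 := by
        rw [← Real.rpow_add (by norm_num : (0:ℝ) < 4)]
        norm_num
      have step : c3*(x^2*(2+x)^(p-2)) ≤ c3*(x^2*(4:ℝ)^(p-2)) := by
        apply mul_le_mul_of_nonneg_left _ hc3.le
        exact mul_le_mul_of_nonneg_left hX (sq_nonneg x)
      have heq : c3*(x^2*(4:ℝ)^(p-2)) = p*(p-1)/2*x^2 := by
        rw [hc3def]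
        have : p*(p-1)/2*4^(2-p)*(x^2*(4:ℝ)^(p-2))
            = p*(p-1)/2*x^2*((4:ℝ)^(2-p)*(4:ℝ)^(p-2)) := by ring
        rw [this, he, mul_one]
      linarith
    · intro t ht1 ht2
      have hmin : min x 0 = 0 := min_eq_right (by linarith)
      rw [hmin] at ht1
      have hX : (1:ℝ) ≤ (1+t)^(p-2) := by
        have := Real.rpow_le_rpow (by norm_num : (0:ℝ) ≤ 1) (by linarith : (1:ℝ) ≤ 1+t) hq
        rwa [Real.one_rpow] at this
      have hb2 := mul_le_mul_of_nonneg_left hX hp1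
      have hb3 := mul_le_mul_of_nonneg_left hb2 hp0.le
      linarith
  · -- L4 : x > 2
    refine reduce c4 (le_trans (min_le_right _ _) (min_le_right _ _)) ?_
    have hx0 : (0:ℝ) < x := by linarith
    have hxne : x ≠ 0 := ne_of_gt hx0
    -- Bernoulli
    have hber : 1 + p*(1/x) ≤ (1+1/x)^p := by
      apply one_add_mul_self_le_rpow_one_add _ hp.le
      have : (0:ℝ) ≤ 1/x := by positivity
      linarith
    have hxppos : (0:ℝ) < x^p := Real.rpow_pos_of_pos hx0 p
    have hmul : (1+x)^p = x^p*(1+1/x)^p := by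
      rw [← Real.mul_rpow hx0.le (by positivity)]
      congr 1
      field_simp
      ring
    have hxp1 : x^p = x^(p-1)*x := by
      have h := Real.rpow_add hx0 (p-1) 1
      rw [Real.rpow_one] at h
      have e : p - 1 + 1 = p := by ring
      rw [e] at h
      exact h
    have hxpx : x^p*(1/x) = x^(p-1) := by
      rw [hxp1]
      field_simp
    have key2 : x^p*(1 + p*(1/x)) = x^p + p*x^(p-1) := by
      rw [mul_add, mul_one, show x^p*(p*(1/x)) = p*(x^p*(1/x)) by ring, hxpx]
    have hlow : x^p + p*x^(p-1) ≤ (1+x)^p := by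
      rw [hmul, ← key2]
      exact mul_le_mul_of_nonneg_left hber hxppos.le
    have hxP : x ≤ x^(p-1) := by
      have := Real.rpow_le_rpow_of_exponent_le (by linarith : (1:ℝ) ≤ x) (by linarith : (1:ℝ) ≤ p-1)
      rwa [Real.rpow_one] at this
    have hx4 : (4:ℝ) ≤ x^p := by
      have h2 : x^(2:ℝ) ≤ x^p := Real.rpow_le_rpow_of_exponent_le (by linarith) (by linarith)
      rw [Real.rpow_two] at h2
      have h3 : (4:ℝ) ≤ x^2 := by nlinarith
      linarith
    have hg : (3/4)*x^p ≤ (1+x)^p - 1 - p*x := by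
      have h1 : p*x ≤ p*x^(p-1) := mul_le_mul_of_nonneg_left hxP hp0.le
      nlinarith
    have hX : (2+x)^(p-2) ≤ 2^(p-2)*x^(p-2) := by
      have h1 : (2+x)^(p-2) ≤ (2*x)^(p-2) :=
        Real.rpow_le_rpow (by linarith) (by linarith) hq
      rwa [Real.mul_rpow (by norm_num) hx0.le] at h1
    have hxsq : x^2*x^(p-2) = x^p := by
      rw [← Real.rpow_two, ← Real.rpow_add hx0]
      congr 1
      ring
    have he : (2:ℝ)^(2-p)*(2:ℝ)^(p-2) = 1 := by
      rw [← Real.rpow_add two_pos]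
      norm_num
    have step : c4*(x^2*(2+x)^(p-2)) ≤ c4*(x^2*(2^(p-2)*x^(p-2))) := by
      apply mul_le_mul_of_nonneg_left _ hc4.le
      exact mul_le_mul_of_nonneg_left hX (sq_nonneg x)
    have heq : c4*(x^2*((2:ℝ)^(p-2)*x^(p-2))) = (3/4)*x^p := by
      rw [hc4def]
      have : (3/4:ℝ)*2^(2-p)*(x^2*((2:ℝ)^(p-2)*x^(p-2)))
          = (3/4)*(x^2*x^(p-2))*((2:ℝ)^(2-p)*(2:ℝ)^(p-2)) := by ring
      rw [this, he, hxsq, mul_one]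
    linarith

private lemma onevar {p : ℝ} (hp : 1 < p) :
    ∃ c C : ℝ, 0 < c ∧ 0 < C ∧ c ≤ 1 ∧ 1 ≤ C ∧ ∀ x : ℝ, -1 ≤ x →
      c*(x^2*(2+x)^(p-2)) ≤ (1+x)^p - 1 - p*x ∧
      (1+x)^p - 1 - p*x ≤ C*(x^2*(2+x)^(p-2)) := by
  rcases le_or_gt p 2 with h2 | h2
  · refine ⟨min (p*(p-1)/2) 1, max (6*p+2*p*(p-1)+4) 1, ?_, ?_, min_le_right _ _,
      le_max_right _ _, ?_⟩
    · apply lt_min _ zero_lt_one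
      nlinarith
    · exact lt_of_lt_of_le zero_lt_one (le_max_right _ _)
    · intro x hx
      have hX : (0:ℝ) ≤ x^2*(2+x)^(p-2) :=
        mul_nonneg (sq_nonneg x) (Real.rpow_nonneg (by linarith) _)
      constructor
      · calc min (p*(p-1)/2) 1*(x^2*(2+x)^(p-2))
            ≤ (p*(p-1)/2)*(x^2*(2+x)^(p-2)) :=
              mul_le_mul_of_nonneg_right (min_le_left _ _) hX
          _ ≤ _ := onevar_low_le2 hp h2 x hx
      · calc (1+x)^p - 1 - p*x ≤ (6*p+2*p*(p-1)+4)*(x^2*(2+x)^(p-2)) :=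
              onevar_up_le2 hp h2 x hx
          _ ≤ max (6*p+2*p*(p-1)+4) 1*(x^2*(2+x)^(p-2)) :=
              mul_le_mul_of_nonneg_right (le_max_left _ _) hX
  · obtain ⟨c0, hc0, hlow⟩ := onevar_low_ge2 h2.le
    refine ⟨min c0 1, max (p*(p-1)/2) 1, lt_min hc0 zero_lt_one,
      lt_of_lt_of_le zero_lt_one (le_max_right _ _), min_le_right _ _, le_max_right _ _, ?_⟩
    intro x hx
    have hX : (0:ℝ) ≤ x^2*(2+x)^(p-2) :=
      mul_nonneg (sq_nonneg x) (Real.rpow_nonneg (by linarith) _)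
    constructor
    · calc min c0 1*(x^2*(2+x)^(p-2)) ≤ c0*(x^2*(2+x)^(p-2)) :=
          mul_le_mul_of_nonneg_right (min_le_left _ _) hX
        _ ≤ _ := hlow x hx
    · calc (1+x)^p - 1 - p*x ≤ (p*(p-1)/2)*(x^2*(2+x)^(p-2)) := onevar_up_ge2 h2.le x hx
        _ ≤ max (p*(p-1)/2) 1*(x^2*(2+x)^(p-2)) :=
          mul_le_mul_of_nonneg_right (le_max_left _ _) hX

private lemma breg2 {p : ℝ} (hp : 1 < p) :
    ∃ c C : ℝ, 0 < c ∧ 0 < C ∧ c ≤ 1 ∧ 1 ≤ C ∧ ∀ r s : ℝ, 0 ≤ r → 0 < s →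
      c*((r-s)^2*(r+s)^(p-2)) ≤ r^p - s^p - p*s^(p-1)*(r-s) ∧
      r^p - s^p - p*s^(p-1)*(r-s) ≤ C*((r-s)^2*(r+s)^(p-2)) := by
  obtain ⟨c, C, hc, hC, hc1, hC1, hmain⟩ := onevar hp
  refine ⟨c, C, hc, hC, hc1, hC1, ?_⟩
  intro r s hr hs
  set x : ℝ := r/s - 1 with hxdef
  have hx1 : -1 ≤ x := by
    have : 0 ≤ r/s := div_nonneg hr hs.le
    rw [hxdef]; linarith
  have h1x : 1 + x = r/s := by rw [hxdef]; ring
  have hsx : s*(1+x) = r := by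
    rw [h1x]; field_simp
  have hsx' : s*x = r - s := by
    have : s*(1+x) = s + s*x := by ring
    rw [this] at hsx; linarith
  have hsp : (0:ℝ) < s^p := Real.rpow_pos_of_pos hs _
  -- identity (i)
  have hid1 : s^p * ((1+x)^p - 1 - p*x) = r^p - s^p - p*s^(p-1)*(r-s) := by
    have e1 : s^p * (1+x)^p = r^p := by
      rw [← Real.mul_rpow hs.le (by linarith : (0:ℝ) ≤ 1+x), hsx]
    have e2 : s^p = s^(p-1)*s := by
      have h := Real.rpow_add hs (p-1) 1
      rw [Real.rpow_one] at h
      have e : p - 1 + 1 = p := by ring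
      rw [e] at h
      exact h
    have e3 : s^p * (p*x) = p*s^(p-1)*(r-s) := by
      rw [e2, ← hsx']
      ring
    calc s^p * ((1+x)^p - 1 - p*x) = s^p * (1+x)^p - s^p - s^p*(p*x) := by ring
      _ = r^p - s^p - p*s^(p-1)*(r-s) := by rw [e1, e3]
  -- identity (ii)
  have hid2 : s^p * (x^2*(2+x)^(p-2)) = (r-s)^2*(r+s)^(p-2) := by
    have e2 : s^p = s^2*s^(p-2) := by
      have h := Real.rpow_add hs 2 (p-2)
      have e : (2:ℝ) + (p-2) = p := by ring
      rw [e, Real.rpow_two] at h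
      exact h
    have e3 : s^(p-2)*(2+x)^(p-2) = (r+s)^(p-2) := by
      rw [← Real.mul_rpow hs.le (by linarith : (0:ℝ) ≤ 2+x)]
      congr 1
      have : s*(2+x) = s*(1+x) + s := by ring
      rw [this, hsx]
    have e4 : s^2*x^2 = (r-s)^2 := by
      rw [← mul_pow, hsx']
    calc s^p * (x^2*(2+x)^(p-2)) = (s^2*x^2)*(s^(p-2)*(2+x)^(p-2)) := by rw [e2]; ring
      _ = (r-s)^2*(r+s)^(p-2) := by rw [e3, e4]
  obtain ⟨hl, hu⟩ := hmain x hx1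
  constructor
  · have := mul_le_mul_of_nonneg_left hl hsp.le
    calc c*((r-s)^2*(r+s)^(p-2)) = s^p*(c*(x^2*(2+x)^(p-2))) := by rw [← hid2]; ring
      _ ≤ s^p*((1+x)^p - 1 - p*x) := this
      _ = r^p - s^p - p*s^(p-1)*(r-s) := hid1
  · have := mul_le_mul_of_nonneg_left hu hsp.le
    calc r^p - s^p - p*s^(p-1)*(r-s) = s^p*((1+x)^p - 1 - p*x) := hid1.symm
      _ ≤ s^p*(C*(x^2*(2+x)^(p-2))) := this
      _ = C*((r-s)^2*(r+s)^(p-2)) := by rw [← hid2]; ring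

private lemma div_rpow_eq {a b q : ℝ} (ha : 0 ≤ a) (hb : 0 < b) :
    ((a/b):ℝ)^q = b^(-q)*a^q := by
  rw [Real.div_rpow ha hb.le, Real.rpow_neg hb.le, div_eq_mul_inv, mul_comm]

set_option maxHeartbeats 3000000 in
private lemma breg3 {p : ℝ} (hp : 1 < p) :
    ∃ c C : ℝ, 0 < c ∧ 0 < C ∧ ∀ r s t u : ℝ, 0 ≤ r → 0 < s → 0 ≤ t →
      r ≤ s + t → t ≤ r + s → s ≤ r + t → u = (r^2 - s^2 - t^2)/2 →
      c*(t^2*(s+t)^(p-2)) ≤ r^p - s^p - p*(s^(p-2)*u) ∧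
      r^p - s^p - p*(s^(p-2)*u) ≤ C*(t^2*(s+t)^(p-2)) := by
  obtain ⟨c₁, C₁, hc₁, hC₁, hc₁1, hC₁1, hbr⟩ := breg2 hp
  have hp0 : (0:ℝ) < p := by linarith
  have hkY2a : (0:ℝ) < (2:ℝ)^(2-p) := Real.rpow_pos_of_pos two_pos _
  have hkY2b : (0:ℝ) < (2:ℝ)^(p-2) := Real.rpow_pos_of_pos two_pos _
  have hkQ5 : (0:ℝ) < (5:ℝ)^(2-p) := Real.rpow_pos_of_pos (by norm_num) _
  refine ⟨min (c₁/4*(min ((2:ℝ)^(2-p)) ((2:ℝ)^(p-2))))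
      (3*p/8*(min 1 ((5:ℝ)^(2-p)))),
    C₁*((2:ℝ)^(p-2) + (2:ℝ)^(2-p)) + 6*p, ?_, ?_, ?_⟩
  · apply lt_min
    · have := lt_min hkY2a hkY2b
      positivity
    · have := lt_min zero_lt_one hkQ5
      positivity
  · positivity
  intro r s t u hr hs ht htr1 htr2 htr3 hu
  set X : ℝ := (s+t)^(p-2) with hXdef
  set Y : ℝ := (r+s)^(p-2) with hYdef
  set Qs : ℝ := s^(p-2) with hQdef
  have hst0 : (0:ℝ) < s + t := by linarith
  have hrs0 : (0:ℝ) < r + s := by linarith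
  have hX0 : 0 < X := Real.rpow_pos_of_pos hst0 _
  have hY0 : 0 < Y := Real.rpow_pos_of_pos hrs0 _
  have hQ0 : 0 < Qs := Real.rpow_pos_of_pos hs _
  have htsq : (r-s)^2 ≤ t^2 := by
    have e : t^2 - (r-s)^2 = (t-(r-s))*(t+(r-s)) := by ring
    have h1 : (0:ℝ) ≤ t-(r-s) := by linarith
    have h2 : (0:ℝ) ≤ t+(r-s) := by linarith
    have := mul_nonneg h1 h2
    linarith
  obtain ⟨hBl, hBu⟩ := hbr r s hr hs
  have hBnn : 0 ≤ r^p - s^p - p*s^(p-1)*(r-s) := by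
    have h0 : (0:ℝ) ≤ c₁*((r-s)^2*Y) := by positivity
    linarith
  have hGnn : (0:ℝ) ≤ p/2*(Qs*(t^2-(r-s)^2)) := by
    apply mul_nonneg (by linarith)
    exact mul_nonneg hQ0.le (by linarith)
  have hsp1 : s^(p-1) = Qs*s := by
    have h := Real.rpow_add hs (p-2) 1
    rw [Real.rpow_one] at h
    have e : p - 2 + 1 = p - 1 := by ring
    rw [e] at h
    exact h
  have key : r^p - s^p - p*(Qs*u)
      = (r^p - s^p - p*s^(p-1)*(r-s)) + p/2*(Qs*(t^2-(r-s)^2)) := by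
    rw [hu, hsp1]
    ring
  -- comparison of Y and X
  have hYup : Y ≤ ((2:ℝ)^(p-2) + (2:ℝ)^(2-p))*X := by
    have hnn1 : (0:ℝ) ≤ (2:ℝ)^(2-p)*X := mul_nonneg hkY2a.le hX0.le
    have hnn2 : (0:ℝ) ≤ (2:ℝ)^(p-2)*X := mul_nonneg hkY2b.le hX0.le
    rcases le_or_gt p 2 with hple | hpge
    · have hhalf : (s+t)/2 ≤ r+s := by linarith
      have h1 : Y ≤ ((s+t)/2)^(p-2) :=
        Real.rpow_le_rpow_of_nonpos (by linarith) hhalf (by linarith)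
      have h2 : ((s+t)/2)^(p-2) = (2:ℝ)^(2-p)*X := by
        rw [div_rpow_eq hst0.le two_pos, hXdef, show -(p-2) = 2-p by ring]
      rw [h2] at h1
      linarith
    · have h2s : r+s ≤ 2*(s+t) := by linarith
      have h1 : Y ≤ (2*(s+t))^(p-2) :=
        Real.rpow_le_rpow (by linarith) h2s (by linarith)
      have h2 : (2*(s+t))^(p-2) = (2:ℝ)^(p-2)*X := by
        rw [Real.mul_rpow (by norm_num) hst0.le]
      rw [h2] at h1
      linarith
  have hYlow : min ((2:ℝ)^(2-p)) ((2:ℝ)^(p-2))*X ≤ Y := by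
    rcases le_or_gt p 2 with hple | hpge
    · have h2s : r+s ≤ 2*(s+t) := by linarith
      have h1 : (2*(s+t))^(p-2) ≤ Y :=
        Real.rpow_le_rpow_of_nonpos hrs0 h2s (by linarith)
      have h2 : (2*(s+t))^(p-2) = (2:ℝ)^(p-2)*X := by
        rw [Real.mul_rpow (by norm_num) hst0.le]
      rw [h2] at h1
      have h3 := mul_le_mul_of_nonneg_right
        (min_le_right ((2:ℝ)^(2-p)) ((2:ℝ)^(p-2))) hX0.le
      linarith
    · have hhalf : (s+t)/2 ≤ r+s := by linarith
      have h1 : ((s+t)/2)^(p-2) ≤ Y :=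
        Real.rpow_le_rpow (by linarith) hhalf (by linarith)
      have h2 : ((s+t)/2)^(p-2) = (2:ℝ)^(2-p)*X := by
        rw [div_rpow_eq hst0.le two_pos, hXdef, show -(p-2) = 2-p by ring]
      rw [h2] at h1
      have h3 := mul_le_mul_of_nonneg_right
        (min_le_left ((2:ℝ)^(2-p)) ((2:ℝ)^(p-2))) hX0.le
      linarith
  constructor
  · -- LOWER BOUND
    rcases le_or_gt (t^2) (4*(r-s)^2) with hcase | hcase
    · -- case A : use the Bregman part
      have hq : t^2/4 ≤ (r-s)^2 := by linarith
      have step1 : c₁*(t^2/4*(min ((2:ℝ)^(2-p)) ((2:ℝ)^(p-2))*X)) ≤ c₁*((r-s)^2*Y) := by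
        apply mul_le_mul_of_nonneg_left _ hc₁.le
        calc t^2/4*(min ((2:ℝ)^(2-p)) ((2:ℝ)^(p-2))*X) ≤ t^2/4*Y :=
              mul_le_mul_of_nonneg_left hYlow (by positivity)
          _ ≤ (r-s)^2*Y := mul_le_mul_of_nonneg_right hq hY0.le
      have step2 : min (c₁/4*(min ((2:ℝ)^(2-p)) ((2:ℝ)^(p-2))))
          (3*p/8*(min 1 ((5:ℝ)^(2-p))))*(t^2*X)
          ≤ c₁*(t^2/4*(min ((2:ℝ)^(2-p)) ((2:ℝ)^(p-2))*X)) := by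
        have e : c₁*(t^2/4*(min ((2:ℝ)^(2-p)) ((2:ℝ)^(p-2))*X))
            = (c₁/4*(min ((2:ℝ)^(2-p)) ((2:ℝ)^(p-2))))*(t^2*X) := by ring
        rw [e]
        apply mul_le_mul_of_nonneg_right (min_le_left _ _)
        positivity
      linarith
    · -- case B : use the G part
      have hd1 : r - s ≤ t/2 := by
        by_contra hcon
        push_neg at hcon
        have h1 : (t/2)^2 < (r-s)^2 :=
          pow_lt_pow_left₀ hcon (by linarith : (0:ℝ) ≤ t/2) two_ne_zero
        have e : (t/2)^2 = t^2/4 := by ring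
        linarith
      have ht4 : t ≤ 4*s := by linarith
      have hfrac : 3/4*t^2 ≤ t^2-(r-s)^2 := by linarith
      have hQlow : min 1 ((5:ℝ)^(2-p))*X ≤ Qs := by
        rcases le_or_gt p 2 with hple | hpge
        · have h1 : X ≤ Qs := Real.rpow_le_rpow_of_nonpos hs (by linarith) (by linarith)
          have h3 := mul_le_mul_of_nonneg_right
            (min_le_left 1 ((5:ℝ)^(2-p))) hX0.le
          linarith
        · have h5 : (s+t)/5 ≤ s := by linarith
          have h1 : ((s+t)/5)^(p-2) ≤ Qs :=
            Real.rpow_le_rpow (by linarith) h5 (by linarith)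
          have h2 : ((s+t)/5)^(p-2) = (5:ℝ)^(2-p)*X := by
            rw [div_rpow_eq hst0.le (by norm_num : (0:ℝ) < 5), hXdef,
              show -(p-2) = 2-p by ring]
          rw [h2] at h1
          have h3 := mul_le_mul_of_nonneg_right
            (min_le_right 1 ((5:ℝ)^(2-p))) hX0.le
          linarith
      have stepG : (3*p/8*(min 1 ((5:ℝ)^(2-p))))*(t^2*X) ≤ p/2*(Qs*(t^2-(r-s)^2)) := by
        have s1 : min 1 ((5:ℝ)^(2-p))*X*(3/4*t^2) ≤ Qs*(t^2-(r-s)^2) := by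
          calc min 1 ((5:ℝ)^(2-p))*X*(3/4*t^2) ≤ Qs*(3/4*t^2) :=
                mul_le_mul_of_nonneg_right hQlow (by positivity)
            _ ≤ Qs*(t^2-(r-s)^2) := mul_le_mul_of_nonneg_left hfrac hQ0.le
        have s2 := mul_le_mul_of_nonneg_left s1 (by linarith : (0:ℝ) ≤ p/2)
        have e : p/2*(min 1 ((5:ℝ)^(2-p))*X*(3/4*t^2))
            = (3*p/8*(min 1 ((5:ℝ)^(2-p))))*(t^2*X) := by ring
        rw [e] at s2
        exact s2
      have step2 : min (c₁/4*(min ((2:ℝ)^(2-p)) ((2:ℝ)^(p-2))))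
          (3*p/8*(min 1 ((5:ℝ)^(2-p))))*(t^2*X)
          ≤ (3*p/8*(min 1 ((5:ℝ)^(2-p))))*(t^2*X) := by
        apply mul_le_mul_of_nonneg_right (min_le_right _ _)
        positivity
      linarith
  · -- UPPER BOUND
    have hBX : r^p - s^p - p*s^(p-1)*(r-s) ≤ C₁*(((2:ℝ)^(p-2) + (2:ℝ)^(2-p))*(t^2*X)) := by
      have h2 : (r-s)^2*Y ≤ t^2*Y := mul_le_mul_of_nonneg_right htsq hY0.le
      have h3 : t^2*Y ≤ t^2*(((2:ℝ)^(p-2) + (2:ℝ)^(2-p))*X) :=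
        mul_le_mul_of_nonneg_left hYup (sq_nonneg t)
      have h4 : (r-s)^2*Y ≤ t^2*(((2:ℝ)^(p-2) + (2:ℝ)^(2-p))*X) := le_trans h2 h3
      have h5 := mul_le_mul_of_nonneg_left h4 hC₁.le
      have e : C₁*(t^2*(((2:ℝ)^(p-2) + (2:ℝ)^(2-p))*X))
          = C₁*(((2:ℝ)^(p-2) + (2:ℝ)^(2-p))*(t^2*X)) := by ring
      rw [e] at h5
      linarith
    have hGX : p/2*(Qs*(t^2-(r-s)^2)) ≤ 6*p*(t^2*X) := by
      have htXnn : (0:ℝ) ≤ p*(t^2*X) := by positivity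
      rcases le_or_gt p 2 with hple | hpge
      · rcases le_or_gt t s with hts | hts
        · -- t ≤ s
          have hQ2 : Qs ≤ 2*X := by
            have h1 : Qs ≤ ((s+t)/2)^(p-2) :=
              Real.rpow_le_rpow_of_nonpos (by linarith) (by linarith) (by linarith)
            have h2 : ((s+t)/2)^(p-2) = (2:ℝ)^(2-p)*X := by
              rw [div_rpow_eq hst0.le two_pos, hXdef, show -(p-2) = 2-p by ring]
            have h3 : (2:ℝ)^(2-p) ≤ 2 := by
              have := Real.rpow_le_rpow_of_exponent_le (by norm_num : (1:ℝ) ≤ 2)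
                (by linarith : 2-p ≤ (1:ℝ))
              rwa [Real.rpow_one] at this
            rw [h2] at h1
            have h4 := mul_le_mul_of_nonneg_right h3 hX0.le
            linarith
          have s1 : Qs*(t^2-(r-s)^2) ≤ Qs*t^2 :=
            mul_le_mul_of_nonneg_left (by linarith [sq_nonneg (r-s)]) hQ0.le
          have s2 : Qs*t^2 ≤ 2*X*t^2 := mul_le_mul_of_nonneg_right hQ2 (sq_nonneg t)
          have s3 := mul_le_mul_of_nonneg_left (le_trans s1 s2) (by linarith : (0:ℝ) ≤ p/2)
          have e : p/2*(2*X*t^2) = p*(t^2*X) := by ring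
          rw [e] at s3
          linarith
        · -- s < t
          have ht0 : (0:ℝ) < t := lt_trans hs hts
          have hfact : t^2-(r-s)^2 ≤ 4*s*t := by
            have e : t^2-(r-s)^2 = (t-(r-s))*(t+(r-s)) := by ring
            have hb1 : t-(r-s) ≤ 2*s := by linarith
            have hb2 : t+(r-s) ≤ 2*t := by linarith
            have hb3 : (0:ℝ) ≤ t+(r-s) := by linarith
            have hb4 : (0:ℝ) ≤ 2*s := by linarith
            have := mul_le_mul hb1 hb2 hb3 hb4
            have e2 : 2*s*(2*t) = 4*s*t := by ring
            linarith [e2 ▸ this]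
          have hsP : s^(p-1) ≤ t^(p-1) :=
            Real.rpow_le_rpow hs.le hts.le (by linarith)
          have htp1 : t^(p-1) = t^(p-2)*t := by
            have h := Real.rpow_add ht0 (p-2) 1
            rw [Real.rpow_one] at h
            have e : p - 2 + 1 = p - 1 := by ring
            rw [e] at h
            exact h
          have htX : t^(p-2) ≤ 2*X := by
            have h1 : t^(p-2) ≤ ((s+t)/2)^(p-2) :=
              Real.rpow_le_rpow_of_nonpos (by linarith) (by linarith) (by linarith)
            have h2 : ((s+t)/2)^(p-2) = (2:ℝ)^(2-p)*X := by
              rw [div_rpow_eq hst0.le two_pos, hXdef, show -(p-2) = 2-p by ring]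
            have h3 : (2:ℝ)^(2-p) ≤ 2 := by
              have := Real.rpow_le_rpow_of_exponent_le (by norm_num : (1:ℝ) ≤ 2)
                (by linarith : 2-p ≤ (1:ℝ))
              rwa [Real.rpow_one] at this
            rw [h2] at h1
            have h4 := mul_le_mul_of_nonneg_right h3 hX0.le
            linarith
          have s1 : Qs*(t^2-(r-s)^2) ≤ Qs*(4*s*t) :=
            mul_le_mul_of_nonneg_left hfact hQ0.le
          have s2 : Qs*(4*s*t) = 4*t*(Qs*s) := by ring
          have s3 : 4*t*(Qs*s) ≤ 4*t*(t^(p-1)) := by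
            apply mul_le_mul_of_nonneg_left _ (by linarith : (0:ℝ) ≤ 4*t)
            rw [← hsp1]
            exact hsP
          have s4 : 4*t*(t^(p-1)) = 4*(t^(p-2))*t^2 := by
            rw [htp1]
            ring
          have s5 : 4*(t^(p-2))*t^2 ≤ 4*(2*X)*t^2 := by
            apply mul_le_mul_of_nonneg_right _ (sq_nonneg t)
            linarith
          have schain : Qs*(t^2-(r-s)^2) ≤ 8*(t^2*X) := by
            rw [s2] at s1
            rw [s4] at s3
            have e : 4*(2*X)*t^2 = 8*(t^2*X) := by ring
            linarith
          have s6 := mul_le_mul_of_nonneg_left schain (by linarith : (0:ℝ) ≤ p/2)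
          have e : p/2*(8*(t^2*X)) = 4*(p*(t^2*X)) := by ring
          rw [e] at s6
          linarith
      · -- 2 < p
        have hQX : Qs ≤ X := Real.rpow_le_rpow hs.le (by linarith) (by linarith)
        have s1 : Qs*(t^2-(r-s)^2) ≤ Qs*t^2 :=
          mul_le_mul_of_nonneg_left (by linarith [sq_nonneg (r-s)]) hQ0.le
        have s2 : Qs*t^2 ≤ X*t^2 := mul_le_mul_of_nonneg_right hQX (sq_nonneg t)
        have s3 := mul_le_mul_of_nonneg_left (le_trans s1 s2) (by linarith : (0:ℝ) ≤ p/2)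
        have e : p/2*(X*t^2) = 1/2*(p*(t^2*X)) := by ring
        rw [e] at s3
        linarith
    have e : (C₁*((2:ℝ)^(p-2) + (2:ℝ)^(2-p)) + 6*p)*(t^2*X)
        = C₁*(((2:ℝ)^(p-2) + (2:ℝ)^(2-p))*(t^2*X)) + 6*p*(t^2*X) := by ring
    rw [e]
    linarith

section MatrixHelpers

variable {n : ℕ} (A : Matrix (Fin n) (Fin n) ℝ)

private lemma bilin_symm (hA : A.IsSymm) (v w : Fin n → ℝ) :
    (A *ᵥ v) ⬝ᵥ w = (A *ᵥ w) ⬝ᵥ v := by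
  rw [dotProduct_comm, dotProduct_mulVec, ← mulVec_transpose, hA.eq]

private lemma quad_expand (hA : A.IsSymm) (v w : Fin n → ℝ) :
    (A *ᵥ (v + w)) ⬝ᵥ (v + w)
      = (A *ᵥ v) ⬝ᵥ v + 2*((A *ᵥ v) ⬝ᵥ w) + (A *ᵥ w) ⬝ᵥ w := by
  rw [mulVec_add, add_dotProduct, dotProduct_add, dotProduct_add,
    bilin_symm A hA w v]
  ring

private lemma quad_nonneg (hA : A.PosDef) (v : Fin n → ℝ) :
    0 ≤ (A *ᵥ v) ⬝ᵥ v := by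
  rcases eq_or_ne v 0 with rfl | hv
  · simp
  · have := hA.dotProduct_mulVec_pos hv
    simp only [star_trivial] at this
    rw [dotProduct_comm]
    exact this.le

private lemma quad_pos (hA : A.PosDef) {v : Fin n → ℝ} (hv : v ≠ 0) :
    0 < (A *ᵥ v) ⬝ᵥ v := by
  have := hA.dotProduct_mulVec_pos hv
  simp only [star_trivial] at this
  rw [dotProduct_comm]
  exact this

private lemma quad_smul_expand (hA : A.IsSymm) (c : ℝ) (v w : Fin n → ℝ) :
    (A *ᵥ (c • w + v)) ⬝ᵥ (c • w + v)
      = ((A *ᵥ w) ⬝ᵥ w)*c^2 + (2*((A *ᵥ w) ⬝ᵥ v))*c + (A *ᵥ v) ⬝ᵥ v := by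
  rw [quad_expand A hA]
  simp only [mulVec_smul, smul_dotProduct, dotProduct_smul, smul_eq_mul]
  ring

private lemma cauchy_schwarz (hA : A.IsSymm) (hA' : A.PosDef) (v w : Fin n → ℝ) :
    ((A *ᵥ v) ⬝ᵥ w)^2 ≤ ((A *ᵥ v) ⬝ᵥ v) * ((A *ᵥ w) ⬝ᵥ w) := by
  have hq : ∀ x : ℝ, 0 ≤ ((A *ᵥ w) ⬝ᵥ w)*(x*x) + (2*((A *ᵥ w) ⬝ᵥ v))*x + (A *ᵥ v) ⬝ᵥ v := by
    intro x
    have := quad_nonneg A hA' (x • w + v)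
    rw [quad_smul_expand A hA] at this
    nlinarith [this]
  have hd := discrim_le_zero hq
  rw [discrim] at hd
  have hsym : (A *ᵥ w) ⬝ᵥ v = (A *ᵥ v) ⬝ᵥ w := bilin_symm A hA w v
  rw [hsym] at hd
  nlinarith [hd]

private lemma sqrt_triangle (hA : A.IsSymm) (hA' : A.PosDef) (v w : Fin n → ℝ) :
    Real.sqrt ((A *ᵥ (v + w)) ⬝ᵥ (v + w))
      ≤ Real.sqrt ((A *ᵥ v) ⬝ᵥ v) + Real.sqrt ((A *ᵥ w) ⬝ᵥ w) := by
  have hv := quad_nonneg A hA' v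
  have hw := quad_nonneg A hA' w
  have hcs := cauchy_schwarz A hA hA' v w
  have hb : (A *ᵥ v) ⬝ᵥ w ≤ Real.sqrt ((A *ᵥ v) ⬝ᵥ v) * Real.sqrt ((A *ᵥ w) ⬝ᵥ w) := by
    have h1 : (A *ᵥ v) ⬝ᵥ w ≤ |(A *ᵥ v) ⬝ᵥ w| := le_abs_self _
    have h2 : |(A *ᵥ v) ⬝ᵥ w| = Real.sqrt (((A *ᵥ v) ⬝ᵥ w)^2) := (Real.sqrt_sq_eq_abs _).symm
    have h3 : Real.sqrt (((A *ᵥ v) ⬝ᵥ w)^2) ≤ Real.sqrt (((A *ᵥ v) ⬝ᵥ v) * ((A *ᵥ w) ⬝ᵥ w)) :=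
      Real.sqrt_le_sqrt hcs
    have h4 : Real.sqrt (((A *ᵥ v) ⬝ᵥ v) * ((A *ᵥ w) ⬝ᵥ w))
        = Real.sqrt ((A *ᵥ v) ⬝ᵥ v) * Real.sqrt ((A *ᵥ w) ⬝ᵥ w) := Real.sqrt_mul hv _
    linarith [h4 ▸ h3]
  have hexp := quad_expand A hA v w
  have hsq : (A *ᵥ (v + w)) ⬝ᵥ (v + w)
      ≤ (Real.sqrt ((A *ᵥ v) ⬝ᵥ v) + Real.sqrt ((A *ᵥ w) ⬝ᵥ w))^2 := by
    have e1 : Real.sqrt ((A *ᵥ v) ⬝ᵥ v)^2 = (A *ᵥ v) ⬝ᵥ v := Real.sq_sqrt hv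
    have e2 : Real.sqrt ((A *ᵥ w) ⬝ᵥ w)^2 = (A *ᵥ w) ⬝ᵥ w := Real.sq_sqrt hw
    nlinarith [hb]
  calc Real.sqrt ((A *ᵥ (v + w)) ⬝ᵥ (v + w))
      ≤ Real.sqrt ((Real.sqrt ((A *ᵥ v) ⬝ᵥ v) + Real.sqrt ((A *ᵥ w) ⬝ᵥ w))^2) :=
        Real.sqrt_le_sqrt hsq
    _ = Real.sqrt ((A *ᵥ v) ⬝ᵥ v) + Real.sqrt ((A *ᵥ w) ⬝ᵥ w) := by
        rw [Real.sqrt_sq (by positivity)]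

end MatrixHelpers

/-- Two-sided Bregman-distance estimate for `|·|_A^p`, with
constants depending only on `p`. -/
theorem stmt_7 (p : ℝ) (hp : 1 < p) :
    ∃ c C : ℝ, 0 < c ∧ 0 < C ∧
      ∀ (n : ℕ), 2 ≤ n → ∀ A : Matrix (Fin n) (Fin n) ℝ, A.IsSymm → A.PosDef →
        ∀ ξ η : Fin n → ℝ, ¬(ξ = 0 ∧ η = 0) →
          c * Real.sqrt (A.mulVec η ⬝ᵥ η) ^ 2 *
              (Real.sqrt (A.mulVec η ⬝ᵥ η) + Real.sqrt (A.mulVec ξ ⬝ᵥ ξ)) ^ (p - 2)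
            ≤ Real.sqrt (A.mulVec (ξ + η) ⬝ᵥ (ξ + η)) ^ p - Real.sqrt (A.mulVec ξ ⬝ᵥ ξ) ^ p
              - p * (if ξ = 0 then 0 else
                  Real.sqrt (A.mulVec ξ ⬝ᵥ ξ) ^ (p - 2) * (A.mulVec ξ ⬝ᵥ η)) ∧
          Real.sqrt (A.mulVec (ξ + η) ⬝ᵥ (ξ + η)) ^ p - Real.sqrt (A.mulVec ξ ⬝ᵥ ξ) ^ p
              - p * (if ξ = 0 then 0 else
                  Real.sqrt (A.mulVec ξ ⬝ᵥ ξ) ^ (p - 2) * (A.mulVec ξ ⬝ᵥ η))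
            ≤ C * Real.sqrt (A.mulVec η ⬝ᵥ η) ^ 2 *
                (Real.sqrt (A.mulVec η ⬝ᵥ η) + Real.sqrt (A.mulVec ξ ⬝ᵥ ξ)) ^ (p - 2) := by
  obtain ⟨c₃, C₃, hc₃, hC₃, hmain⟩ := breg3 hp
  refine ⟨min c₃ 1, C₃ + 1, lt_min hc₃ zero_lt_one, by linarith, ?_⟩
  intro n hn A hsym hpos ξ η hne
  rcases eq_or_ne ξ 0 with rfl | hξ
  · -- ξ = 0
    have hη : η ≠ 0 := by
      rintro rfl
      exact hne ⟨rfl, rfl⟩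
    have ht0 : 0 < Real.sqrt (A.mulVec η ⬝ᵥ η) :=
      Real.sqrt_pos.2 (quad_pos A hpos hη)
    set t : ℝ := Real.sqrt (A.mulVec η ⬝ᵥ η) with htdef
    simp only [zero_add, Matrix.mulVec_zero, zero_dotProduct, Real.sqrt_zero, add_zero,
      if_pos, Real.zero_rpow (show p ≠ 0 by linarith), mul_zero, sub_zero, ite_true,
      eq_self_iff_true]
    have e : t^2*t^(p-2) = t^p := by
      rw [← Real.rpow_two, ← Real.rpow_add ht0]
      congr 1
      ring
    have hnn : (0:ℝ) ≤ t^2*t^(p-2) := by positivity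
    constructor
    · have h1 := mul_le_mul_of_nonneg_right (min_le_right c₃ 1) hnn
      linarith [e ▸ h1]
    · have h1 := mul_le_mul_of_nonneg_right (show (1:ℝ) ≤ C₃ + 1 by linarith) hnn
      linarith [e ▸ h1]
  · -- ξ ≠ 0
    set s : ℝ := Real.sqrt (A.mulVec ξ ⬝ᵥ ξ) with hsdef
    set t : ℝ := Real.sqrt (A.mulVec η ⬝ᵥ η) with htdef
    set r : ℝ := Real.sqrt (A.mulVec (ξ + η) ⬝ᵥ (ξ + η)) with hrdef
    set u : ℝ := A.mulVec ξ ⬝ᵥ η with hudef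
    have hs : 0 < s := Real.sqrt_pos.2 (quad_pos A hpos hξ)
    have ht : 0 ≤ t := Real.sqrt_nonneg _
    have hr : 0 ≤ r := Real.sqrt_nonneg _
    have hs2 : s^2 = A.mulVec ξ ⬝ᵥ ξ := Real.sq_sqrt (quad_nonneg A hpos ξ)
    have ht2 : t^2 = A.mulVec η ⬝ᵥ η := Real.sq_sqrt (quad_nonneg A hpos η)
    have hr2 : r^2 = A.mulVec (ξ + η) ⬝ᵥ (ξ + η) := Real.sq_sqrt (quad_nonneg A hpos _)
    have hexp := quad_expand A hsym ξ η
    have hu : u = (r^2 - s^2 - t^2)/2 := by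
      rw [hr2, hs2, ht2, hexp]
      ring
    have hQneg : ∀ v : Fin n → ℝ, A.mulVec (-v) ⬝ᵥ (-v) = A.mulVec v ⬝ᵥ v := by
      intro v
      rw [Matrix.mulVec_neg, neg_dotProduct, dotProduct_neg, neg_neg]
    have htr1 : r ≤ s + t := sqrt_triangle A hsym hpos ξ η
    have htr3 : s ≤ r + t := by
      have h := sqrt_triangle A hsym hpos (ξ + η) (-η)
      rw [add_neg_cancel_right, hQneg] at h
      exact h
    have htr2 : t ≤ r + s := by
      have h := sqrt_triangle A hsym hpos (ξ + η) (-ξ)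
      have e : ξ + η + (-ξ) = η := by abel
      rw [e, hQneg] at h
      exact h
    obtain ⟨hlow, hup⟩ := hmain r s t u hr hs ht htr1 htr2 htr3 hu
    rw [if_neg hξ]
    have hXnn : (0:ℝ) ≤ t^2*(s+t)^(p-2) :=
      mul_nonneg (sq_nonneg t) (Real.rpow_nonneg (by linarith) _)
    have ecomm : t + s = s + t := add_comm t s
    constructor
    · rw [ecomm]
      have h1 := mul_le_mul_of_nonneg_right (min_le_left c₃ 1) hXnn
      linarith
    · rw [ecomm]
      have h1 := mul_le_mul_of_nonneg_right (le_refl C₃) hXnn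
      have h2 : C₃*(t^2*(s+t)^(p-2)) ≤ (C₃+1)*(t^2*(s+t)^(p-2)) := by
        apply mul_le_mul_of_nonneg_right _ hXnn
        linarith
      linarith
end

section
/- Let 2 ≤ s < ∞. There exists a constant C = C(p,s) > 0 such that for all ξ = (ξ₁,…,ξₙ), η = (η₁,…,ηₙ) ∈ ℝⁿ with (ξ,η) ≠ (0,0): |ξ+η|_s^p − |ξ|_s^p − p·|ξ|_s^{p−s}·∑_{i=1}^n |ξᵢ|^{s−2} ξᵢ ηᵢ ≤ C·|η|_s²·(|ξ|_s + |η|_s)^{p−2}, where the middle (gradient) term is interpreted as 0 when ξ = 0. -/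
open scoped Classical

open Real Finset

lemma stmt8_sq_rpow_half (s x : ℝ) : ((x : ℝ) ^ 2) ^ (s / 2) = |x| ^ s := by
  rw [← sq_abs, ← Real.rpow_natCast |x| 2, ← Real.rpow_mul (abs_nonneg x)]
  congr 1
  push_cast
  ring

lemma stmt8_d2 {s : ℝ} (hs : 2 ≤ s) (x : ℝ) :
    HasDerivAt (fun x : ℝ => |x| ^ (s - 2) * x) ((s - 1) * |x| ^ (s - 2)) x := by
  rcases eq_or_lt_of_le hs with h2 | h2
  · -- s = 2
    have e : (fun x : ℝ => |x| ^ (s - 2) * x) = fun x : ℝ => x := by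
      funext y; rw [← h2]; simp
    have hone : (s - 1) * |x| ^ (s - 2) = 1 := by
      rw [← h2]; norm_num [Real.rpow_zero]
    rw [e, hone]
    exact hasDerivAt_id x
  rcases eq_or_ne x 0 with rfl | hx
  · -- x = 0, s > 2
    have hfz : |(0:ℝ)| ^ (s - 2) * 0 = 0 := by ring
    rw [abs_zero, Real.zero_rpow (by linarith : s - 2 ≠ 0), mul_zero]
    rw [hasDerivAt_iff_tendsto_slope]
    have hev : (fun y : ℝ => |y| ^ (s - 2)) =ᶠ[nhdsWithin 0 {(0:ℝ)}ᶜ] slope (fun x : ℝ => |x| ^ (s - 2) * x) 0 := by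
      filter_upwards [self_mem_nhdsWithin] with y hy
      have hy0 : (y : ℝ) ≠ 0 := hy
      simp only [slope, hfz, vsub_eq_sub, sub_zero]
      rw [smul_eq_mul, inv_mul_eq_div, mul_div_assoc, div_self hy0, mul_one]
    refine Filter.Tendsto.congr' hev ?_
    have hc : ContinuousAt (fun y : ℝ => |y| ^ (s - 2)) 0 := by
      have : (fun y : ℝ => |y| ^ (s - 2)) = (fun z : ℝ => z ^ (s - 2)) ∘ (fun y : ℝ => |y|) := rfl
      rw [this]
      exact (Real.continuousAt_rpow_const _ _ (Or.inr (by linarith))).comp continuous_abs.continuousAt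
    have := hc.continuousWithinAt (s := {(0:ℝ)}ᶜ)
    simpa [ContinuousWithinAt, abs_zero, Real.zero_rpow (by linarith : s - 2 ≠ 0)] using this
  · -- x ≠ 0
    have hx2 : (x : ℝ) ^ 2 ≠ 0 := pow_ne_zero _ hx
    have h := ((hasDerivAt_pow 2 x).rpow_const (p := (s - 2) / 2) (Or.inl hx2)).mul (hasDerivAt_id x)
    have e : (fun y : ℝ => |y| ^ (s - 2) * y) = fun y : ℝ => (y ^ 2) ^ ((s - 2) / 2) * y :=
      funext fun y => by rw [stmt8_sq_rpow_half]
    rw [e]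
    refine h.congr_deriv ?_
    have h4 : ((x:ℝ) ^ 2) ^ ((s - 2) / 2 - 1) * x ^ 2 = (x ^ 2) ^ ((s - 2) / 2) := by
      rw [show ((x:ℝ)^2)^((s-2)/2 - 1) * x^2 = (x^2)^((s-2)/2-1) * (x^2)^(1:ℝ) by rw [Real.rpow_one],
        ← Real.rpow_add (by positivity)]
      norm_num
    have h5 : ((x:ℝ) ^ 2) ^ ((s - 2) / 2) = |x| ^ (s - 2) := stmt8_sq_rpow_half _ x
    simp only [id_eq, pow_one, Nat.cast_ofNat]
    nlinarith [h4, h5]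

lemma stmt8_rpow_mul_self {s : ℝ} (hs : 2 ≤ s) (x : ℝ) (hx : 0 ≤ x) :
    x ^ (s - 2) * x = x ^ (s - 1) := by
  rcases eq_or_lt_of_le hx with rfl | hx
  · rcases eq_or_lt_of_le hs with h2 | h2
    · rw [← h2]; norm_num
    · rw [Real.zero_rpow (by linarith : s - 2 ≠ 0), Real.zero_rpow (by linarith : s - 1 ≠ 0),
        zero_mul]
  · rw [show x ^ (s-2) * x = x ^ (s-2) * x ^ (1:ℝ) by rw [Real.rpow_one], ← Real.rpow_add hx]
    congr 1
    ring

lemma stmt8_comp (q x y : ℝ) (hx : 0 < x) (hy : 0 < y) (h1 : y / 3 ≤ x) (h2 : x ≤ 3 * y) :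
    x ^ q ≤ 3 ^ |q| * y ^ q := by
  rcases le_or_gt 0 q with hq | hq
  · rw [abs_of_nonneg hq]
    calc x ^ q ≤ (3 * y) ^ q := Real.rpow_le_rpow hx.le h2 hq
    _ = 3 ^ q * y ^ q := Real.mul_rpow (by norm_num) hy.le
  · rw [abs_of_neg hq]
    calc x ^ q ≤ (y / 3) ^ q := Real.rpow_le_rpow_of_nonpos (by positivity) h1 hq.le
    _ = 3 ^ (-q) * y ^ q := by
        rw [div_eq_mul_inv, Real.mul_rpow hy.le (by positivity), Real.inv_rpow (by norm_num),
          ← Real.rpow_neg (by norm_num)]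
        ring

lemma stmt8_holder1 {n : ℕ} {s : ℝ} (hs : 2 ≤ s) (ζ η : Fin n → ℝ) :
    |∑ i, |ζ i| ^ (s - 2) * ζ i * η i| ≤
      (∑ i, |ζ i| ^ s) ^ ((s - 1) / s) * (∑ i, |η i| ^ s) ^ (1 / s) := by
  have hs1 : (1:ℝ) < s := by linarith
  have key := Real.inner_le_Lp_mul_Lq_of_nonneg (s := (univ : Finset (Fin n)))
    (p := s / (s - 1)) (q := s) (f := fun i => |ζ i| ^ (s - 1)) (g := fun i => |η i|)
    ⟨by rw [inv_div, inv_one]; field_simp; ring, by positivity, by positivity⟩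
    (fun i _ => Real.rpow_nonneg (abs_nonneg _) _) (fun i _ => abs_nonneg _)
  have e1 : ∀ i : Fin n, (|ζ i| ^ (s - 1)) ^ (s / (s - 1)) = |ζ i| ^ s := by
    intro i
    rw [← Real.rpow_mul (abs_nonneg _)]
    congr 1
    rw [mul_comm]; exact div_mul_cancel₀ s (by linarith : s - (1:ℝ) ≠ 0)
  have e2 : (1 : ℝ) / (s / (s - 1)) = (s - 1) / s := one_div_div _ _
  calc |∑ i, |ζ i| ^ (s - 2) * ζ i * η i| ≤ ∑ i, |(|ζ i| ^ (s - 2) * ζ i * η i)| :=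
        Finset.abs_sum_le_sum_abs _ _
    _ = ∑ i, |ζ i| ^ (s - 1) * |η i| := by
        refine Finset.sum_congr rfl fun i _ => ?_
        rw [abs_mul, abs_mul, abs_of_nonneg (Real.rpow_nonneg (abs_nonneg _) _),
          stmt8_rpow_mul_self hs _ (abs_nonneg _)]
    _ ≤ _ := by
        have := key
        simp only [e1, e2] at this
        exact this

lemma stmt8_holder2 {n : ℕ} {s : ℝ} (hs : 2 ≤ s) (ζ η : Fin n → ℝ) :
    ∑ i, |ζ i| ^ (s - 2) * η i ^ 2 ≤
      (∑ i, |ζ i| ^ s) ^ ((s - 2) / s) * (∑ i, |η i| ^ s) ^ (2 / s) := by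
  rcases eq_or_lt_of_le hs with h2 | h2
  · -- s = 2
    subst h2
    have hz : ∀ x : ℝ, |x| ^ ((2:ℝ) - 2) = 1 := fun x => by norm_num
    have h22 : ((2:ℝ) - 2) / 2 = 0 := by norm_num
    have h21 : (2:ℝ) / 2 = 1 := by norm_num
    simp only [hz, one_mul, h22, h21, Real.rpow_zero, Real.rpow_one]
    refine le_of_eq (Finset.sum_congr rfl fun i _ => ?_)
    rw [← stmt8_sq_rpow_half, h21, Real.rpow_one]
  · have key := Real.inner_le_Lp_mul_Lq_of_nonneg (s := (univ : Finset (Fin n)))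
      (p := s / (s - 2)) (q := s / 2) (f := fun i => |ζ i| ^ (s - 2)) (g := fun i => η i ^ 2)
      ⟨by rw [inv_div, inv_div, inv_one]; field_simp; ring, div_pos (by linarith) (by linarith), by positivity⟩
      (fun i _ => Real.rpow_nonneg (abs_nonneg _) _) (fun i _ => sq_nonneg _)
    have e1 : ∀ i : Fin n, (|ζ i| ^ (s - 2)) ^ (s / (s - 2)) = |ζ i| ^ s := by
      intro i
      rw [← Real.rpow_mul (abs_nonneg _)]
      congr 1
      rw [mul_comm]; exact div_mul_cancel₀ s (by linarith : s - (2:ℝ) ≠ 0)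
    have e2 : ∀ i : Fin n, ((η i ^ 2 : ℝ)) ^ (s / 2) = |η i| ^ s := fun i =>
      stmt8_sq_rpow_half s (η i)
    have e3 : (1 : ℝ) / (s / (s - 2)) = (s - 2) / s := one_div_div _ _
    have e4 : (1 : ℝ) / (s / 2) = 2 / s := one_div_div _ _
    simp only [e1, e2, e3, e4] at key
    exact key

lemma stmt8_sum_nonneg {n : ℕ} {s : ℝ} (f : Fin n → ℝ) : 0 ≤ ∑ i, |f i| ^ s :=
  Finset.sum_nonneg fun i _ => Real.rpow_nonneg (abs_nonneg _) _

lemma stmt8_sum_pos {n : ℕ} {s : ℝ} (f : Fin n → ℝ) (hf : f ≠ 0) : 0 < ∑ i, |f i| ^ s := by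
  obtain ⟨j, hj⟩ : ∃ j, f j ≠ 0 := by
    by_contra h
    push_neg at h
    exact hf (funext fun j => h j)
  exact Finset.sum_pos' (fun i _ => Real.rpow_nonneg (abs_nonneg _) _)
    ⟨j, Finset.mem_univ j, Real.rpow_pos_of_pos (abs_pos.2 hj) _⟩

lemma stmt8_scale {n : ℕ} {s : ℝ} (hs0 : 0 < s) (t : ℝ) (ht : 0 ≤ t) (η : Fin n → ℝ) :
    (∑ i, |t * η i| ^ s) ^ (1/s) = t * (∑ i, |η i| ^ s) ^ (1/s) := by
  have e : ∀ i : Fin n, |t * η i| ^ s = t ^ s * |η i| ^ s := fun i => by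
    rw [abs_mul, abs_of_nonneg ht, Real.mul_rpow ht (abs_nonneg _)]
  rw [Finset.sum_congr rfl (fun i _ => e i), ← Finset.mul_sum,
    Real.mul_rpow (Real.rpow_nonneg ht _) (stmt8_sum_nonneg η),
    ← Real.rpow_mul ht, mul_one_div, div_self hs0.ne', Real.rpow_one]

lemma stmt8_mink_up {n : ℕ} {s : ℝ} (hs : 2 ≤ s) (ξ η : Fin n → ℝ) (t : ℝ) (ht : 0 ≤ t) :
    (∑ i, |ξ i + t * η i| ^ s) ^ (1/s) ≤
      (∑ i, |ξ i| ^ s) ^ (1/s) + t * (∑ i, |η i| ^ s) ^ (1/s) := by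
  have := Real.Lp_add_le (s := (Finset.univ : Finset (Fin n))) (f := ξ)
    (g := fun i => t * η i) (by linarith : (1:ℝ) ≤ s)
  rwa [stmt8_scale (by linarith) t ht η] at this

lemma stmt8_mink_low {n : ℕ} {s : ℝ} (hs : 2 ≤ s) (ξ η : Fin n → ℝ) (t : ℝ) (ht : 0 ≤ t) :
    (∑ i, |ξ i| ^ s) ^ (1/s) ≤
      (∑ i, |ξ i + t * η i| ^ s) ^ (1/s) + t * (∑ i, |η i| ^ s) ^ (1/s) := by
  have := Real.Lp_add_le (s := (Finset.univ : Finset (Fin n)))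
    (f := fun i => ξ i + t * η i) (g := fun i => -(t * η i)) (by linarith : (1:ℝ) ≤ s)
  simp only [add_neg_cancel_right, abs_neg] at this
  rwa [stmt8_scale (by linarith) t ht η] at this

lemma stmt8_dS {n : ℕ} {s : ℝ} (hs : 2 ≤ s) (ξ η : Fin n → ℝ) (t : ℝ) :
    HasDerivAt (fun t : ℝ => ∑ i, |ξ i + t * η i| ^ s)
      (s * ∑ i, |ξ i + t * η i| ^ (s - 2) * (ξ i + t * η i) * η i) t := by
  have key : ∀ i : Fin n, HasDerivAt (fun t : ℝ => |ξ i + t * η i| ^ s)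
      (s * |ξ i + t * η i| ^ (s - 2) * (ξ i + t * η i) * η i) t := by
    intro i
    have haff : HasDerivAt (fun t : ℝ => ξ i + t * η i) (η i) t := by
      simpa using ((hasDerivAt_id t).mul_const (η i)).const_add (ξ i)
    have h2 := (hasDerivAt_abs_rpow (ξ i + t * η i) (by linarith : (1:ℝ) < s)).comp t haff
    simp only [Function.comp_def] at h2
    convert h2 using 1
  have hsum := HasDerivAt.fun_sum (fun i (_ : i ∈ Finset.univ) => key i)
  refine hsum.congr_deriv ?_
  rw [Finset.mul_sum]
  exact Finset.sum_congr rfl fun i _ => by ring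

lemma stmt8_dT {n : ℕ} {s : ℝ} (hs : 2 ≤ s) (ξ η : Fin n → ℝ) (t : ℝ) :
    HasDerivAt (fun t : ℝ => ∑ i, |ξ i + t * η i| ^ (s - 2) * (ξ i + t * η i) * η i)
      ((s - 1) * ∑ i, |ξ i + t * η i| ^ (s - 2) * η i ^ 2) t := by
  have key : ∀ i : Fin n, HasDerivAt
      (fun t : ℝ => |ξ i + t * η i| ^ (s - 2) * (ξ i + t * η i) * η i)
      ((s - 1) * |ξ i + t * η i| ^ (s - 2) * η i * η i) t := by
    intro i
    have haff : HasDerivAt (fun t : ℝ => ξ i + t * η i) (η i) t := by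
      simpa using ((hasDerivAt_id t).mul_const (η i)).const_add (ξ i)
    have h2 := ((stmt8_d2 hs (ξ i + t * η i)).comp t haff).mul_const (η i)
    simp only [Function.comp_def] at h2
    convert h2 using 1
  have hsum := HasDerivAt.fun_sum (fun i (_ : i ∈ Finset.univ) => key i)
  refine hsum.congr_deriv ?_
  rw [Finset.mul_sum]
  exact Finset.sum_congr rfl fun i _ => by ring
lemma stmt8_sq (x : ℝ) : x ^ (2:ℝ) = x ^ (2:ℕ) := by
  rw [show (2:ℝ) = ((2:ℕ):ℝ) by norm_num, Real.rpow_natCast]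

lemma stmt8_sq' (x : ℝ) (hx : 0 ≤ x) (s : ℝ) : (x ^ (1/s)) ^ (2:ℕ) = x ^ (2/s) := by
  rw [← stmt8_sq, ← Real.rpow_mul hx]
  congr 1
  ring

set_option maxHeartbeats 3200000 in
/-- Upper Bregman-distance estimate for the `s`-norm to the
power `p` (`2 ≤ s`), with a constant `C = C(p,s)`. -/
theorem stmt_8 (p s : ℝ) (hp : 1 < p) (hs : 2 ≤ s) :
    ∃ C : ℝ, 0 < C ∧
      ∀ (n : ℕ), 2 ≤ n → ∀ ξ η : Fin n → ℝ, ¬(ξ = 0 ∧ η = 0) →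
        ((∑ i, |ξ i + η i| ^ s) ^ (1 / s)) ^ p - ((∑ i, |ξ i| ^ s) ^ (1 / s)) ^ p -
            (if ξ = 0 then 0 else
              p * ((∑ i, |ξ i| ^ s) ^ (1 / s)) ^ (p - s) *
                ∑ i, |ξ i| ^ (s - 2) * ξ i * η i)
          ≤ C * ((∑ i, |η i| ^ s) ^ (1 / s)) ^ 2 *
              ((∑ i, |ξ i| ^ s) ^ (1 / s) + (∑ i, |η i| ^ s) ^ (1 / s)) ^ (p - 2) := by

  have hp0 : (0:ℝ) < p := by linarith
  have hs0 : (0:ℝ) < s := by linarith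
  have hsne : s ≠ 0 := hs0.ne'
  have hexp1 : 1/s*(p-s) = p/s - 1 := by field_simp
  obtain ⟨K0, hK0⟩ : ∃ x : ℝ, x = p * |p/s - 1| * s + p * (s - 1) := ⟨_, rfl⟩
  have hK0nn : 0 ≤ K0 := by
    rw [hK0]
    have h1 : (0:ℝ) ≤ s - 1 := by linarith
    positivity
  obtain ⟨C2, hC2⟩ : ∃ x : ℝ, x = K0 * 3 ^ |p - 2| := ⟨_, rfl⟩
  have hC2nn : 0 ≤ C2 := by
    rw [hC2]
    exact mul_nonneg hK0nn (Real.rpow_nonneg (by norm_num) _)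
  obtain ⟨C1, hC1⟩ : ∃ x : ℝ, x = (3 ^ p + p * 2 ^ (p - 1)) * 3 ^ |p - 2| := ⟨_, rfl⟩
  have hC1nn : 0 ≤ C1 := by
    rw [hC1]
    positivity
  refine ⟨C1 + C2 + 1, by linarith, ?_⟩
  intro n hn ξ η hne
  obtain ⟨Sξ, hSξ⟩ : ∃ x : ℝ, x = ∑ i, |ξ i| ^ s := ⟨_, rfl⟩
  obtain ⟨Sη, hSη⟩ : ∃ x : ℝ, x = ∑ i, |η i| ^ s := ⟨_, rfl⟩
  obtain ⟨A, hA⟩ : ∃ x : ℝ, x = Sξ ^ (1/s) := ⟨_, rfl⟩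
  obtain ⟨B, hB⟩ : ∃ x : ℝ, x = Sη ^ (1/s) := ⟨_, rfl⟩
  rw [← hSξ, ← hSη, ← hA, ← hB]
  have hSξnn : 0 ≤ Sξ := by rw [hSξ]; exact stmt8_sum_nonneg ξ
  have hSηnn : 0 ≤ Sη := by rw [hSη]; exact stmt8_sum_nonneg η
  have hA0 : 0 ≤ A := by rw [hA]; exact Real.rpow_nonneg hSξnn _
  have hB0 : 0 ≤ B := by rw [hB]; exact Real.rpow_nonneg hSηnn _
  have hXle : (∑ i, |ξ i + η i| ^ s) ^ (1/s) ≤ A + B := by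
    have h := stmt8_mink_up hs ξ η 1 zero_le_one
    simp only [one_mul] at h
    rw [hA, hB, hSξ, hSη]
    exact h
  have hXnn : 0 ≤ (∑ i, |ξ i + η i| ^ s) ^ (1/s) :=
    Real.rpow_nonneg (stmt8_sum_nonneg _) _
  rcases le_or_gt B (A/2) with hcase | hcase
  · -- small perturbation case
    have hξ : ξ ≠ 0 := by
      rintro rfl
      have hA0' : A = 0 := by
        rw [hA, hSξ]
        simp only [Pi.zero_apply, abs_zero, Real.zero_rpow hsne, Finset.sum_const_zero]
        exact Real.zero_rpow (one_div_ne_zero hsne)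
      have hη : η ≠ 0 := fun h => hne ⟨rfl, h⟩
      have hBpos : 0 < B := by
        rw [hB, hSη]
        exact Real.rpow_pos_of_pos (stmt8_sum_pos η hη) _
      rw [hA0'] at hcase
      linarith
    have hApos : 0 < A := by
      rw [hA, hSξ]
      exact Real.rpow_pos_of_pos (stmt8_sum_pos ξ hξ) _
    have hABpos : 0 < A + B := by linarith
    obtain ⟨S, hSdef⟩ : ∃ f : ℝ → ℝ, f = fun t => ∑ i, |ξ i + t * η i| ^ s := ⟨_, rfl⟩
    obtain ⟨T, hTdef⟩ : ∃ f : ℝ → ℝ,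
        f = fun t => ∑ i, |ξ i + t * η i| ^ (s-2) * (ξ i + t * η i) * η i := ⟨_, rfl⟩
    obtain ⟨U, hUdef⟩ : ∃ f : ℝ → ℝ,
        f = fun t => ∑ i, |ξ i + t * η i| ^ (s-2) * η i ^ 2 := ⟨_, rfl⟩
    have hSnn : ∀ t : ℝ, 0 ≤ S t := by
      intro t
      simp only [hSdef]
      exact stmt8_sum_nonneg _
    have hminkup : ∀ t ∈ Set.Icc (0:ℝ) 1, (S t) ^ (1/s) ≤ A + t * B := by
      intro t ht
      simp only [hSdef, hA, hB, hSξ, hSη]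
      exact stmt8_mink_up hs ξ η t ht.1
    have hminklow : ∀ t ∈ Set.Icc (0:ℝ) 1, A ≤ (S t) ^ (1/s) + t * B := by
      intro t ht
      simp only [hSdef, hA, hB, hSξ, hSη]
      exact stmt8_mink_low hs ξ η t ht.1
    have htB : ∀ t ∈ Set.Icc (0:ℝ) 1, t * B ≤ B := by
      intro t ht
      nlinarith [ht.1, ht.2, hB0]
    have hMub : ∀ t ∈ Set.Icc (0:ℝ) 1, (S t) ^ (1/s) ≤ A + B := by
      intro t ht
      have := hminkup t ht
      have := htB t ht
      linarith
    have hMlb : ∀ t ∈ Set.Icc (0:ℝ) 1, A/2 ≤ (S t) ^ (1/s) := by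
      intro t ht
      have := hminklow t ht
      have := htB t ht
      linarith
    have hSpos : ∀ t ∈ Set.Icc (0:ℝ) 1, 0 < S t := by
      intro t ht
      rcases (hSnn t).lt_or_eq with h | h
      · exact h
      · exfalso
        have h2 := hMlb t ht
        rw [show S t = 0 from h.symm, Real.zero_rpow (one_div_ne_zero hsne)] at h2
        linarith
    -- Hölder bounds
    have hTb : ∀ t : ℝ, |T t| ≤ (S t) ^ ((s-1)/s) * B := by
      intro t
      simp only [hTdef, hSdef, hB, hSη]
      exact stmt8_holder1 hs (fun i => ξ i + t * η i) η
    have hUb : ∀ t : ℝ, U t ≤ (S t) ^ ((s-2)/s) * B ^ (2:ℕ) := by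
      intro t
      simp only [hUdef, hSdef, hB, hSη]
      rw [stmt8_sq' _ (stmt8_sum_nonneg η) s]
      exact stmt8_holder2 hs (fun i => ξ i + t * η i) η
    have hUnn : ∀ t : ℝ, 0 ≤ U t := by
      intro t
      simp only [hUdef]
      exact Finset.sum_nonneg fun i _ =>
        mul_nonneg (Real.rpow_nonneg (abs_nonneg _) _) (sq_nonneg _)
    -- derivatives
    have hdS : ∀ t : ℝ, HasDerivAt S (s * T t) t := by
      intro t
      simp only [hSdef, hTdef]
      exact stmt8_dS hs ξ η t
    have hdT : ∀ t : ℝ, HasDerivAt T ((s - 1) * U t) t := by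
      intro t
      simp only [hTdef, hUdef]
      exact stmt8_dT hs ξ η t
    have hd1 : ∀ t ∈ Set.Icc (0:ℝ) 1,
        HasDerivAt (fun u => (S u) ^ (p/s)) (p * (S t) ^ (p/s - 1) * T t) t := by
      intro t ht
      have h := (hdS t).rpow_const (p := p/s) (Or.inl (hSpos t ht).ne')
      convert h using 1
      field_simp
    obtain ⟨F2, hF2def⟩ : ∃ f : ℝ → ℝ, f = fun t =>
        (s * T t) * (p/s - 1) * (S t) ^ (p/s - 1 - 1) * p * T t +
          p * (S t) ^ (p/s - 1) * ((s - 1) * U t) := ⟨_, rfl⟩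
    have hd2 : ∀ t ∈ Set.Icc (0:ℝ) 1,
        HasDerivAt (fun u => p * (S u) ^ (p/s - 1) * T u) (F2 t) t := by
      intro t ht
      have h1 := (hdS t).rpow_const (p := p/s - 1) (Or.inl (hSpos t ht).ne')
      have h2 := (h1.const_mul p).mul (hdT t)
      rw [hF2def]
      refine h2.congr_deriv ?_
      beta_reduce
      ring
    -- bound on F2
    have hF2b : ∀ t ∈ Set.Icc (0:ℝ) 1,
        |F2 t| ≤ C2 * (A + B) ^ (p - 2) * B ^ (2:ℕ) := by
      intro t ht
      have hσ : 0 < S t := hSpos t ht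
      have hM : 0 < (S t) ^ (1/s) := Real.rpow_pos_of_pos hσ _
      have e1 : |(s * T t) * (p/s - 1) * (S t) ^ (p/s - 1 - 1) * p * T t|
          = p * |p/s - 1| * s * ((S t) ^ (p/s - 1 - 1) * (|T t| * |T t|)) := by
        simp only [abs_mul, abs_of_nonneg hp0.le, abs_of_nonneg hs0.le,
          abs_of_nonneg (Real.rpow_nonneg hσ.le _)]
        ring
      have e2 : |p * (S t) ^ (p/s - 1) * ((s - 1) * U t)|
          = p * (s - 1) * ((S t) ^ (p/s - 1) * U t) := by
        rw [abs_of_nonneg]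
        · ring
        · exact mul_nonneg (mul_nonneg hp0.le (Real.rpow_nonneg hσ.le _))
            (mul_nonneg (by linarith) (hUnn t))
      have hT2 : |T t| * |T t| ≤ (S t) ^ ((s-1)/s) * (S t) ^ ((s-1)/s) * B ^ (2:ℕ) := by
        have h := hTb t
        have habs : 0 ≤ |T t| := abs_nonneg _
        calc |T t| * |T t| ≤ ((S t) ^ ((s-1)/s) * B) * ((S t) ^ ((s-1)/s) * B) :=
              mul_le_mul h h habs (mul_nonneg (Real.rpow_nonneg hσ.le _) hB0)
          _ = (S t) ^ ((s-1)/s) * (S t) ^ ((s-1)/s) * B ^ (2:ℕ) := by ring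
      have key1 : (S t) ^ (p/s - 1 - 1) * ((S t) ^ ((s-1)/s) * (S t) ^ ((s-1)/s)) =
          (S t) ^ ((p-2)/s) := by
        rw [← Real.rpow_add hσ, ← Real.rpow_add hσ]
        congr 1
        field_simp
        ring
      have key2 : (S t) ^ (p/s - 1) * (S t) ^ ((s-2)/s) = (S t) ^ ((p-2)/s) := by
        rw [← Real.rpow_add hσ]
        congr 1
        field_simp
        ring
      have hMcomp : (S t) ^ ((p-2)/s) ≤ 3 ^ |p - 2| * (A + B) ^ (p - 2) := by
        have hrw : (S t) ^ ((p-2)/s) = ((S t) ^ (1/s)) ^ (p - 2) := by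
          rw [← Real.rpow_mul hσ.le]
          congr 1
          ring
        rw [hrw]
        apply stmt8_comp (p - 2) _ _ hM hABpos
        · have h1 := hMlb t ht
          linarith
        · have h2 := hMub t ht
          nlinarith
      calc |F2 t| ≤ |(s * T t) * (p/s - 1) * (S t) ^ (p/s - 1 - 1) * p * T t|
            + |p * (S t) ^ (p/s - 1) * ((s - 1) * U t)| := by
            rw [hF2def]
            exact abs_add_le _ _
        _ ≤ p * |p/s - 1| * s * ((S t) ^ (p/s - 1 - 1) * ((S t) ^ ((s-1)/s) * (S t) ^ ((s-1)/s) * B ^ (2:ℕ)))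
            + p * (s - 1) * ((S t) ^ (p/s - 1) * ((S t) ^ ((s-2)/s) * B ^ (2:ℕ))) := by
            rw [e1, e2]
            apply add_le_add
            · apply mul_le_mul_of_nonneg_left _
                (mul_nonneg (mul_nonneg hp0.le (abs_nonneg _)) hs0.le)
              have : |T t| * |T t| ≤ (S t) ^ ((s-1)/s) * (S t) ^ ((s-1)/s) * B ^ (2:ℕ) := hT2
              apply mul_le_mul_of_nonneg_left this (Real.rpow_nonneg hσ.le _)
            · apply mul_le_mul_of_nonneg_left _
                (mul_nonneg hp0.le (by linarith : (0:ℝ) ≤ s - 1))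
              exact mul_le_mul_of_nonneg_left (hUb t) (Real.rpow_nonneg hσ.le _)
        _ = K0 * ((S t) ^ ((p-2)/s) * B ^ (2:ℕ)) := by
            rw [hK0]
            linear_combination (p * |p/s - 1| * s * (B ^ (2:ℕ) : ℝ)) * key1 +
              (p * (s - 1) * (B ^ (2:ℕ) : ℝ)) * key2
        _ ≤ K0 * ((3 ^ |p - 2| * (A + B) ^ (p - 2)) * B ^ (2:ℕ)) := by
            apply mul_le_mul_of_nonneg_left _ hK0nn
            exact mul_le_mul_of_nonneg_right hMcomp (pow_nonneg hB0 2)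
        _ = C2 * (A + B) ^ (p - 2) * B ^ (2:ℕ) := by rw [hC2]; ring
    obtain ⟨L, hLdef⟩ : ∃ x : ℝ, x = C2 * (A + B) ^ (p - 2) * B ^ (2:ℕ) := ⟨_, rfl⟩
    have hLnn : 0 ≤ L := by
      rw [hLdef]
      exact mul_nonneg (mul_nonneg hC2nn (Real.rpow_nonneg hABpos.le _)) (pow_nonneg hB0 2)
    have mvt1 : ∀ t ∈ Set.Icc (0:ℝ) 1,
        |(p * (S t) ^ (p/s - 1) * T t) - (p * (S 0) ^ (p/s - 1) * T 0)| ≤ L := by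
      intro t ht
      have h := (convex_Icc (0:ℝ) 1).norm_image_sub_le_of_norm_hasDerivWithin_le
        (f := fun u => p * (S u) ^ (p/s - 1) * T u) (f' := F2) (C := L)
        (fun u hu => (hd2 u hu).hasDerivWithinAt)
        (fun u hu => by rw [Real.norm_eq_abs, hLdef]; exact hF2b u hu)
        (Set.left_mem_Icc.2 zero_le_one) ht
      rw [Real.norm_eq_abs, Real.norm_eq_abs, sub_zero] at h
      calc |(p * (S t) ^ (p/s - 1) * T t) - (p * (S 0) ^ (p/s - 1) * T 0)| ≤ L * |t| := h
        _ ≤ L * 1 := by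
            apply mul_le_mul_of_nonneg_left _ hLnn
            rw [abs_of_nonneg ht.1]; exact ht.2
        _ = L := mul_one L
    obtain ⟨c0, hc0⟩ : ∃ x : ℝ, x = p * (S 0) ^ (p/s - 1) * T 0 := ⟨_, rfl⟩
    have mvt2 : |((S 1) ^ (p/s) - 1 * c0) - ((S 0) ^ (p/s) - 0 * c0)| ≤ L := by
      have h := (convex_Icc (0:ℝ) 1).norm_image_sub_le_of_norm_hasDerivWithin_le
        (f := fun u => (S u) ^ (p/s) - u * c0)
        (f' := fun u => (p * (S u) ^ (p/s - 1) * T u) - c0)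
        (fun u hu => by
          have hh := ((hd1 u hu).sub ((hasDerivAt_id u).mul_const c0)).hasDerivWithinAt
            (s := Set.Icc (0:ℝ) 1)
          exact hh.congr_deriv (by ring))
        (fun u hu => by
          rw [Real.norm_eq_abs, hc0]
          exact mvt1 u hu)
        (Set.left_mem_Icc.2 zero_le_one) (Set.right_mem_Icc.2 zero_le_one)
      rw [Real.norm_eq_abs] at h
      calc |((S 1) ^ (p/s) - 1 * c0) - ((S 0) ^ (p/s) - 0 * c0)| ≤ L * ‖(1:ℝ) - 0‖ := h
        _ = L := by norm_num
    -- identify terms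
    have hS0 : S 0 = Sξ := by
      simp [hSdef, hSξ]
    have hS1 : S 1 = ∑ i, |ξ i + η i| ^ s := by
      simp [hSdef]
    have hT0 : T 0 = ∑ i, |ξ i| ^ (s-2) * ξ i * η i := by
      simp [hTdef]
    have hXp : ((∑ i, |ξ i + η i| ^ s) ^ (1/s)) ^ p = (S 1) ^ (p/s) := by
      rw [hS1, ← Real.rpow_mul (stmt8_sum_nonneg _)]
      congr 1
      field_simp
    have hAp : A ^ p = (S 0) ^ (p/s) := by
      rw [hS0, hA, ← Real.rpow_mul hSξnn]
      congr 1
      field_simp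
    have hGrad : p * A ^ (p - s) * ∑ i, |ξ i| ^ (s-2) * ξ i * η i = c0 := by
      rw [hc0, hS0, hT0, hA, ← Real.rpow_mul hSξnn, hexp1]
    rw [if_neg hξ]
    have hmain : ((∑ i, |ξ i + η i| ^ s) ^ (1/s)) ^ p - A ^ p -
        p * A ^ (p - s) * ∑ i, |ξ i| ^ (s-2) * ξ i * η i ≤ L := by
      rw [hXp, hAp, hGrad]
      have h := mvt2
      rw [one_mul, zero_mul, sub_zero] at h
      have h2 := abs_le.1 h
      linarith [h2.2]
    calc ((∑ i, |ξ i + η i| ^ s) ^ (1/s)) ^ p - A ^ p -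
        p * A ^ (p - s) * ∑ i, |ξ i| ^ (s-2) * ξ i * η i ≤ L := hmain
      _ = C2 * B ^ (2:ℕ) * (A + B) ^ (p - 2) := by rw [hLdef]; ring
      _ ≤ (C1 + C2 + 1) * B ^ (2:ℕ) * (A + B) ^ (p - 2) := by
          apply mul_le_mul_of_nonneg_right _ (Real.rpow_nonneg hABpos.le _)
          apply mul_le_mul_of_nonneg_right _ (pow_nonneg hB0 2)
          linarith
  · -- large perturbation case
    have hBpos : 0 < B := lt_of_le_of_lt (by linarith : (0:ℝ) ≤ A/2) hcase
    have hABpos : 0 < A + B := by linarith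
    have hAB3 : A + B ≤ 3 * B := by linarith
    have hA2B : A ≤ 2 * B := by linarith
    -- bound on gradient term
    have hGb : |(if ξ = 0 then (0:ℝ) else
        p * A ^ (p - s) * ∑ i, |ξ i| ^ (s-2) * ξ i * η i)| ≤ p * A ^ (p-1) * B := by
      by_cases hξ : ξ = 0
      · rw [if_pos hξ, abs_zero]
        exact mul_nonneg (mul_nonneg hp0.le (Real.rpow_nonneg hA0 _)) hB0
      · rw [if_neg hξ]
        have hSξpos : 0 < Sξ := by rw [hSξ]; exact stmt8_sum_pos ξ hξ
        have h1 : |∑ i, |ξ i| ^ (s-2) * ξ i * η i| ≤ Sξ ^ ((s-1)/s) * B := by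
          rw [hSξ, hB, hSη]
          exact stmt8_holder1 hs ξ η
        calc |p * A ^ (p - s) * ∑ i, |ξ i| ^ (s-2) * ξ i * η i|
            = p * A ^ (p - s) * |∑ i, |ξ i| ^ (s-2) * ξ i * η i| := by
              rw [abs_mul, abs_mul, abs_of_nonneg hp0.le,
                abs_of_nonneg (Real.rpow_nonneg hA0 _)]
          _ ≤ p * A ^ (p - s) * (Sξ ^ ((s-1)/s) * B) := by
              apply mul_le_mul_of_nonneg_left h1
                (mul_nonneg hp0.le (Real.rpow_nonneg hA0 _))
          _ = p * A ^ (p-1) * B := by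
              have hkey : A ^ (p - s) * Sξ ^ ((s-1)/s) = A ^ (p-1) := by
                rw [hA, ← Real.rpow_mul hSξnn, ← Real.rpow_mul hSξnn, ← Real.rpow_add hSξpos]
                congr 1
                field_simp
                ring
              rw [← hkey]
              ring
    -- final estimates for the large perturbation case
    have hXp : ((∑ i, |ξ i + η i| ^ s) ^ (1/s)) ^ p ≤ (A + B) ^ p :=
      Real.rpow_le_rpow hXnn hXle hp0.le
    have h3B : (A + B) ^ p ≤ 3 ^ p * B ^ p := by
      calc (A + B) ^ p ≤ (3 * B) ^ p := Real.rpow_le_rpow hABpos.le hAB3 hp0.le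
        _ = 3 ^ p * B ^ p := Real.mul_rpow (by norm_num) hBpos.le
    have hgb2 : p * A ^ (p-1) * B ≤ p * 2 ^ (p-1) * B ^ p := by
      have hA1 : A ^ (p-1) ≤ 2 ^ (p-1) * B ^ (p-1) := by
        calc A ^ (p-1) ≤ (2 * B) ^ (p-1) := Real.rpow_le_rpow hA0 hA2B (by linarith)
          _ = 2 ^ (p-1) * B ^ (p-1) := Real.mul_rpow (by norm_num) hBpos.le
      have hBB : B ^ (p-1) * B = B ^ p := by
        rw [← Real.rpow_add_one hBpos.ne' (p-1)]
        norm_num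
      calc p * A ^ (p-1) * B ≤ p * (2 ^ (p-1) * B ^ (p-1)) * B := by
            apply mul_le_mul_of_nonneg_right _ hB0
            exact mul_le_mul_of_nonneg_left hA1 hp0.le
        _ = p * 2 ^ (p-1) * (B ^ (p-1) * B) := by ring
        _ = p * 2 ^ (p-1) * B ^ p := by rw [hBB]
    have hBp : B ^ p = B ^ (2:ℕ) * B ^ (p-2) := by
      rw [← stmt8_sq, ← Real.rpow_add hBpos]
      norm_num
    have hBcomp : B ^ (p-2) ≤ 3 ^ |p-2| * (A + B) ^ (p-2) :=
      stmt8_comp (p-2) B (A + B) hBpos hABpos (by linarith) (by linarith)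
    have hGlb := neg_abs_le (if ξ = 0 then (0:ℝ) else
        p * A ^ (p - s) * ∑ i, |ξ i| ^ (s-2) * ξ i * η i)
    have hApnn : 0 ≤ A ^ p := Real.rpow_nonneg hA0 _
    calc ((∑ i, |ξ i + η i| ^ s) ^ (1/s)) ^ p - A ^ p -
        (if ξ = 0 then (0:ℝ) else p * A ^ (p - s) * ∑ i, |ξ i| ^ (s-2) * ξ i * η i)
        ≤ (A + B) ^ p + p * A ^ (p-1) * B := by linarith
      _ ≤ 3 ^ p * B ^ p + p * 2 ^ (p-1) * B ^ p := by linarith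
      _ = (3 ^ p + p * 2 ^ (p-1)) * (B ^ (2:ℕ) * B ^ (p-2)) := by rw [← hBp]; ring
      _ ≤ (3 ^ p + p * 2 ^ (p-1)) * (B ^ (2:ℕ) * (3 ^ |p-2| * (A + B) ^ (p-2))) := by
          apply mul_le_mul_of_nonneg_left _ (by positivity)
          exact mul_le_mul_of_nonneg_left hBcomp (pow_nonneg hB0 2)
      _ = C1 * B ^ (2:ℕ) * (A + B) ^ (p-2) := by rw [hC1]; ring
      _ ≤ (C1 + C2 + 1) * B ^ (2:ℕ) * (A + B) ^ (p-2) := by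
          apply mul_le_mul_of_nonneg_right _ (Real.rpow_nonneg hABpos.le _)
          apply mul_le_mul_of_nonneg_right _ (pow_nonneg hB0 2)
          linarith
end

section
/- Let H be a norm on ℝⁿ differentiable on ℝⁿ\{0}, and suppose the map A := ∇(H^p/p) is continuously differentiable on ℝⁿ\{0} and there exist constants Λ₁, Λ₂ > 0 such that for all ξ ∈ ℝⁿ\{0} and all η ∈ ℝⁿ: ⟪(DA(ξ))η, η⟫ ≥ Λ₁·|ξ|^{p−2}·|η|² and ‖DA(ξ)‖ ≤ Λ₂·|ξ|^{p−2}, where DA(ξ) is the derivative of A at ξ and ‖·‖ its operator norm. Then there exists a constant C > 0, depending only on p, Λ₁, Λ₂, such that for all ξ, η ∈ ℝⁿ (with A(0) := 0): if p ≥ 2 then H(ξ+η)^p − H(ξ)^p − p·⟪A(ξ), η⟫ ≥ C·|η|^p, and if 1 < p < 2 then for every (ξ,η) ≠ (0,0), H(ξ+η)^p − H(ξ)^p − p·⟪A(ξ), η⟫ ≥ C·|η|²·(|ξ| + |η|)^{p−2}. -/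
open scoped Classical

open RealInnerProductSpace

private lemma mvt_lb {ψ ψ' : ℝ → ℝ} {m a b : ℝ} (hab : a ≤ b)
    (hc : ContinuousOn ψ (Set.Icc a b))
    (hd : ∀ s ∈ Set.Ioo a b, HasDerivAt ψ (ψ' s) s)
    (hm : ∀ s ∈ Set.Ioo a b, m ≤ ψ' s) :
    m * (b - a) ≤ ψ b - ψ a := by
  have hmono : MonotoneOn (fun s => ψ s - m * s) (Set.Icc a b) := by
    apply monotoneOn_of_deriv_nonneg (convex_Icc a b)
    · exact hc.sub (Continuous.continuousOn (by continuity))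
    · intro x hx
      rw [interior_Icc] at hx
      exact ((hd x hx).sub ((hasDerivAt_id x).const_mul m)).differentiableAt.differentiableWithinAt
    · intro x hx
      rw [interior_Icc] at hx
      have hD : HasDerivAt (fun s => ψ s - m * s) (ψ' x - m * 1) x :=
        (hd x hx).sub ((hasDerivAt_id x).const_mul m)
      rw [hD.deriv]
      have := hm x hx; linarith
  have := hmono (Set.left_mem_Icc.mpr hab) (Set.right_mem_Icc.mpr hab) hab
  simp only at this
  linarith

private abbrev ES (n : ℕ) := EuclideanSpace ℝ (Fin n)

set_option maxHeartbeats 1600000 in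
/-- Lower Bregman-distance bound for `H^p` under the
ellipticity/boundedness assumptions on the derivative of `A = ∇(H^p/p)`. -/
theorem stmt_10 (n : ℕ) (hn : 2 ≤ n) (p : ℝ) (hp : 1 < p)
    (H : EuclideanSpace ℝ (Fin n) → ℝ)
    (Hnonneg : ∀ ξ, 0 ≤ H ξ)
    (Heq_zero : ∀ ξ, H ξ = 0 ↔ ξ = 0)
    (Hhom : ∀ (c : ℝ) (ξ : EuclideanSpace ℝ (Fin n)), H (c • ξ) = |c| * H ξ)
    (Htri : ∀ ξ η, H (ξ + η) ≤ H ξ + H η)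
    (Hdiff : ∀ ξ : EuclideanSpace ℝ (Fin n), ξ ≠ 0 → DifferentiableAt ℝ H ξ)
    -- the operator `A := ∇(H^p/p)`, with `A(0) := 0`:
    (A : EuclideanSpace ℝ (Fin n) → EuclideanSpace ℝ (Fin n))
    (hA : ∀ ξ, A ξ = if ξ = 0 then 0 else gradient (fun ζ => H ζ ^ p / p) ξ)
    -- `A` is continuously differentiable away from the origin:
    (hAdiff : ∀ ξ : EuclideanSpace ℝ (Fin n), ξ ≠ 0 → DifferentiableAt ℝ A ξ)
    (hAcont : ContinuousOn (fderiv ℝ A) {(0 : EuclideanSpace ℝ (Fin n))}ᶜ)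
    (Λ₁ Λ₂ : ℝ) (hΛ₁ : 0 < Λ₁) (hΛ₂ : 0 < Λ₂)
    (hell : ∀ ξ : EuclideanSpace ℝ (Fin n), ξ ≠ 0 → ∀ η,
      Λ₁ * ‖ξ‖ ^ (p - 2) * ‖η‖ ^ 2 ≤ ⟪fderiv ℝ A ξ η, η⟫)
    (hbdd : ∀ ξ : EuclideanSpace ℝ (Fin n), ξ ≠ 0 → ‖fderiv ℝ A ξ‖ ≤ Λ₂ * ‖ξ‖ ^ (p - 2)) :
    ∃ C : ℝ, 0 < C ∧
      (2 ≤ p → ∀ ξ η : EuclideanSpace ℝ (Fin n),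
        H (ξ + η) ^ p - H ξ ^ p - p * ⟪A ξ, η⟫ ≥ C * ‖η‖ ^ p) ∧
      (p < 2 → ∀ ξ η : EuclideanSpace ℝ (Fin n), ¬(ξ = 0 ∧ η = 0) →
        H (ξ + η) ^ p - H ξ ^ p - p * ⟪A ξ, η⟫ ≥ C * ‖η‖ ^ 2 * (‖ξ‖ + ‖η‖) ^ (p - 2)) := by
  classical
  have hp0 : (0:ℝ) < p := lt_trans one_pos hp
  have hpne : p ≠ 0 := ne_of_gt hp0
  have hp1 : (0:ℝ) < p - 1 := by linarith
  set F : (ES n) → ℝ := fun ζ => H ζ ^ p / p with hFdef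
  have hHpos : ∀ ζ : (ES n), ζ ≠ 0 → 0 < H ζ := fun ζ hζ =>
    (Hnonneg ζ).lt_of_ne (fun h => hζ ((Heq_zero ζ).mp h.symm))
  have hFnonneg : ∀ ζ, 0 ≤ F ζ := fun ζ =>
    div_nonneg (Real.rpow_nonneg (Hnonneg ζ) p) hp0.le
  have hFscal : ∀ (c : ℝ) (ζ : (ES n)), F (c • ζ) = |c| ^ p * F ζ := by
    intro c ζ
    simp only [hFdef]
    rw [Hhom, Real.mul_rpow (abs_nonneg c) (Hnonneg ζ), mul_div_assoc]
  have hFdiff : ∀ ζ : (ES n), ζ ≠ 0 → DifferentiableAt ℝ F ζ := by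
    intro ζ hζ
    have h1 : DifferentiableAt ℝ (fun x => H x ^ p) ζ :=
      DifferentiableAt.rpow_const (Hdiff ζ hζ) (Or.inl (ne_of_gt (hHpos ζ hζ)))
    rw [hFdef]
    simp only [div_eq_mul_inv]
    exact h1.mul_const p⁻¹
  have hAg : ∀ ζ : (ES n), ζ ≠ 0 → ∀ v : (ES n), ⟪A ζ, v⟫ = fderiv ℝ F ζ v := by
    intro ζ hζ v
    rw [hA ζ, if_neg hζ]
    have hgr := (hFdiff ζ hζ).hasGradientAt
    have hfd := hgr.hasFDerivAt
    have heq : InnerProductSpace.toDual ℝ (ES n) (gradient F ζ) = fderiv ℝ F ζ :=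
      hfd.unique (hFdiff ζ hζ).hasFDerivAt
    rw [← heq]
    simp [InnerProductSpace.toDual_apply_apply]
  have hA0 : A 0 = 0 := by rw [hA]; simp
  -- homogeneity of the fderiv of F
  have hfd_hom : ∀ (c : ℝ), 0 < c → ∀ ζ : (ES n), ζ ≠ 0 → ∀ v : (ES n),
      c * fderiv ℝ F (c • ζ) v = c ^ p * fderiv ℝ F ζ v := by
    intro c hc ζ hζ v
    have hcζ : c • ζ ≠ 0 := smul_ne_zero (ne_of_gt hc) hζ
    have hsm : HasFDerivAt (fun ζ' : (ES n) => c • ζ') (c • ContinuousLinearMap.id ℝ (ES n)) ζ :=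
      (c • ContinuousLinearMap.id ℝ (ES n)).hasFDerivAt
    have hcomp : HasFDerivAt (fun ζ' : (ES n) => F (c • ζ'))
        ((fderiv ℝ F (c • ζ)).comp (c • ContinuousLinearMap.id ℝ (ES n))) ζ :=
      ((hFdiff _ hcζ).hasFDerivAt).comp ζ hsm
    have hconst : HasFDerivAt (fun ζ' : (ES n) => F (c • ζ')) ((c ^ p) • fderiv ℝ F ζ) ζ := by
      have heqf : (fun ζ' : (ES n) => F (c • ζ')) = fun ζ' => c ^ p * F ζ' := by
        funext ζ'
        rw [hFscal, abs_of_pos hc]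
      rw [heqf]
      exact ((hFdiff _ hζ).hasFDerivAt).const_mul (c ^ p)
    have heq := hcomp.unique hconst
    have hv := congrArg (fun T : (ES n) →L[ℝ] ℝ => T v) heq
    simpa [ContinuousLinearMap.comp_apply, ContinuousLinearMap.smul_apply, map_smul,
      smul_eq_mul] using hv
  have hAhom : ∀ (c : ℝ), 0 < c → ∀ ζ : (ES n), ζ ≠ 0 →
      A (c • ζ) = (c ^ (p - 1)) • A ζ := by
    intro c hc ζ hζ
    have hcζ : c • ζ ≠ 0 := smul_ne_zero (ne_of_gt hc) hζ
    apply ext_inner_right ℝ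
    intro v
    rw [hAg _ hcζ, real_inner_smul_left, hAg _ hζ]
    have h1 := hfd_hom c hc ζ hζ v
    have hcp : c ^ p = c ^ (p - 1) * c := by
      nth_rewrite 1 [show p = (p - 1) + 1 by ring]
      rw [Real.rpow_add hc, Real.rpow_one]
    rw [hcp] at h1
    have hcne : c ≠ 0 := ne_of_gt hc
    have := mul_left_cancel₀ hcne (by linarith [h1] : c * fderiv ℝ F (c • ζ) v
      = c * (c ^ (p - 1) * fderiv ℝ F ζ v))
    linarith [this]
  have hAneg : ∀ ζ : (ES n), ζ ≠ 0 → A (-ζ) = -A ζ := by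
    intro ζ hζ
    have hnζ : -ζ ≠ 0 := neg_ne_zero.mpr hζ
    have hsm : HasFDerivAt (fun ζ' : (ES n) => -ζ') (-ContinuousLinearMap.id ℝ (ES n)) ζ :=
      (-ContinuousLinearMap.id ℝ (ES n)).hasFDerivAt
    have hcomp : HasFDerivAt (fun ζ' : (ES n) => F (-ζ'))
        ((fderiv ℝ F (-ζ)).comp (-ContinuousLinearMap.id ℝ (ES n))) ζ :=
      ((hFdiff _ hnζ).hasFDerivAt).comp ζ hsm
    have hconst : HasFDerivAt (fun ζ' : (ES n) => F (-ζ')) (fderiv ℝ F ζ) ζ := by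
      have heqf : (fun ζ' : (ES n) => F (-ζ')) = F := by
        funext ζ'
        have h1 : -ζ' = (-1 : ℝ) • ζ' := by simp
        rw [h1, hFscal]
        norm_num
      rw [heqf]
      exact (hFdiff _ hζ).hasFDerivAt
    have heq := hcomp.unique hconst
    apply ext_inner_right ℝ
    intro v
    rw [hAg _ hnζ, inner_neg_left, hAg _ hζ]
    have hv := congrArg (fun T : (ES n) →L[ℝ] ℝ => T (-v)) heq
    simp only [ContinuousLinearMap.comp_apply, ContinuousLinearMap.neg_apply,
      ContinuousLinearMap.coe_id', id_eq, neg_neg, map_neg] at hv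
    linarith
  -- bound along lines through the origin
  have habs : ∀ η : (ES n), η ≠ 0 → ∀ c : ℝ, |⟪A (c • η), η⟫| ≤ |c| ^ (p - 1) * |⟪A η, η⟫| := by
    intro η hη c
    rcases lt_trichotomy c 0 with hc | hc | hc
    · have h1 : c • η = -((-c) • η) := by simp
      rw [h1, hAneg _ (smul_ne_zero (by linarith) hη), hAhom (-c) (by linarith) η hη]
      rw [inner_neg_left, real_inner_smul_left]
      rw [abs_neg, abs_mul, abs_of_nonneg (Real.rpow_nonneg (by linarith : (0:ℝ) ≤ -c) _)]
      rw [abs_of_neg hc]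
    · subst hc
      simp [hA0, Real.zero_rpow (ne_of_gt hp1)]
    · rw [hAhom c hc η hη, real_inner_smul_left, abs_mul,
        abs_of_nonneg (Real.rpow_nonneg hc.le _), abs_of_pos hc]
  -- The key lower bound
  have KEY : ∀ (ξ η : (ES n)), η ≠ 0 → ∀ m a b : ℝ, 0 ≤ m → 0 ≤ a → a ≤ b → b ≤ 1 →
      (∀ s ∈ Set.Ioo a b, ξ + s • η ≠ 0 → m ≤ Λ₁ * ‖ξ + s • η‖ ^ (p - 2) * ‖η‖ ^ 2) →
      p * (m * (b - a) * (1 - b)) ≤ H (ξ + η) ^ p - H ξ ^ p - p * ⟪A ξ, η⟫ := by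
    intro ξ η hη m a b hm ha0 hab hb1 hlow
    set L : ℝ → (ES n) := fun s => ξ + s • η with hLdef
    set g : ℝ → ℝ := fun s => F (L s) with hgdef
    set ψ : ℝ → ℝ := fun s => ⟪A (L s), η⟫ with hψdef
    have hLd : ∀ t : ℝ, HasDerivAt L η t := by
      intro t
      have := ((hasDerivAt_id t).smul_const η).const_add ξ
      simpa [hLdef] using this
    have hsing : ∀ s s' : ℝ, L s = 0 → L s' = 0 → s = s' := by
      intro s s' h1 h2
      have h3 : (s - s') • η = 0 := by
        have h4 : L s - L s' = 0 := by rw [h1, h2]; simp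
        simp only [hLdef] at h4
        have : (s - s') • η = (ξ + s • η) - (ξ + s' • η) := by
          rw [sub_smul]; abel
        rw [this, h4]
      rcases smul_eq_zero.mp h3 with h | h
      · exact sub_eq_zero.mp h
      · exact absurd h hη
    have hLshift : ∀ t : ℝ, L t = 0 → ∀ s : ℝ, L s = (s - t) • η := by
      intro t ht s
      have hξ : ξ + t • η = 0 := ht
      have hx : ξ = -(t • η) := eq_neg_of_add_eq_zero_left hξ
      simp only [hLdef, hx, sub_smul]
      abel
    -- derivative of g everywhere
    have hgd : ∀ t : ℝ, HasDerivAt g (ψ t) t := by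
      intro t
      by_cases ht : L t = 0
      · -- singular point
        have hψt : ψ t = 0 := by simp [hψdef, ht, hA0]
        rw [hψt]
        have hgeq : g = fun s => |s - t| ^ p * F η := by
          funext s
          simp only [hgdef]
          rw [hLshift t ht s, hFscal]
        rw [hgeq, hasDerivAt_iff_isLittleO, Asymptotics.isLittleO_iff]
        intro ε hε
        have htend : Filter.Tendsto (fun s : ℝ => |s - t| ^ (p - 1) * F η) (nhds t) (nhds 0) := by
          have h1 : Filter.Tendsto (fun s : ℝ => |s - t|) (nhds t) (nhds 0) := by
            have hco : Continuous (fun s : ℝ => |s - t|) :=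
              (continuous_id.sub continuous_const).abs
            simpa using hco.tendsto t
          have h2 : Filter.Tendsto (fun x : ℝ => x ^ (p - 1)) (nhds 0) (nhds 0) := by
            have := (Real.continuousAt_rpow_const 0 (p - 1) (Or.inr hp1.le)).tendsto
            simpa [Real.zero_rpow (ne_of_gt hp1)] using this
          have := (h2.comp h1).mul_const (F η)
          simpa using this
        filter_upwards [htend.eventually (gt_mem_nhds hε)] with s hs
        have hsplit : |s - t| ^ p = |s - t| ^ (p - 1) * |s - t| := by
          nth_rewrite 1 [show p = (p - 1) + 1 by ring]
          rw [Real.rpow_add' (abs_nonneg _) (by simpa using hpne), Real.rpow_one]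
        have h00 : |t - t| ^ p * F η = 0 := by
          simp [Real.zero_rpow hpne]
        rw [h00]
        simp only [smul_zero, sub_zero, Real.norm_eq_abs]
        rw [abs_of_nonneg (mul_nonneg (Real.rpow_nonneg (abs_nonneg _) _) (hFnonneg η)), hsplit]
        calc |s - t| ^ (p - 1) * |s - t| * F η
            = (|s - t| ^ (p - 1) * F η) * |s - t| := by ring
          _ ≤ ε * |s - t| := mul_le_mul_of_nonneg_right hs.le (abs_nonneg _)
      · -- regular point
        have hFd := (hFdiff (L t) ht).hasFDerivAt
        have hcomp := hFd.comp_hasDerivAt t (hLd t)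
        have hval : fderiv ℝ F (L t) η = ψ t := (hAg (L t) ht η).symm
        rw [← hval]
        exact hcomp
    -- derivative of ψ at regular points
    have hψd : ∀ t : ℝ, L t ≠ 0 → HasDerivAt ψ (⟪fderiv ℝ A (L t) η, η⟫) t := by
      intro t ht
      have hAL : HasDerivAt (fun s => A (L s)) (fderiv ℝ A (L t) η) t :=
        ((hAdiff (L t) ht).hasFDerivAt).comp_hasDerivAt t (hLd t)
      have h1 : ∀ v : (ES n), ((innerSL ℝ (E := (ES n))).flip η) v = ⟪v, η⟫ := fun v => rfl
      have hc := (ContinuousLinearMap.hasFDerivAt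
        (x := A (L t)) ((innerSL ℝ (E := (ES n))).flip η)).comp_hasDerivAt t hAL
      simpa only [Function.comp_def, h1, hψdef] using hc
    -- ψ is continuous
    have hψc : Continuous ψ := by
      rw [continuous_iff_continuousAt]
      intro t
      by_cases ht : L t = 0
      · have hψt : ψ t = 0 := by simp [hψdef, ht, hA0]
        unfold ContinuousAt
        rw [hψt]
        rw [tendsto_zero_iff_abs_tendsto_zero]
        apply squeeze_zero (g := fun s => |s - t| ^ (p - 1) * |⟪A η, η⟫|)
          (fun s => abs_nonneg _)
        · intro s
          have hform : ψ s = ⟪A ((s - t) • η), η⟫ := by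
            simp only [hψdef]; rw [hLshift t ht s]
          rw [hform]
          exact habs η hη (s - t)
        · have h1 : Filter.Tendsto (fun s : ℝ => |s - t|) (nhds t) (nhds 0) := by
            have hco : Continuous (fun s : ℝ => |s - t|) :=
              (continuous_id.sub continuous_const).abs
            simpa using hco.tendsto t
          have h2 : Filter.Tendsto (fun x : ℝ => x ^ (p - 1)) (nhds 0) (nhds 0) := by
            have := (Real.continuousAt_rpow_const 0 (p - 1) (Or.inr hp1.le)).tendsto
            simpa [Real.zero_rpow (ne_of_gt hp1)] using this
          have := (h2.comp h1).mul_const |⟪A η, η⟫|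
          simpa using this
      · exact (hψd t ht).continuousAt
    -- lower bound on increments of ψ across the possible singularity
    have hL2 : ∀ m' a' b' : ℝ, 0 ≤ m' → a' ≤ b' →
        (∀ s ∈ Set.Ioo a' b', L s ≠ 0 → m' ≤ Λ₁ * ‖L s‖ ^ (p - 2) * ‖η‖ ^ 2) →
        m' * (b' - a') ≤ ψ b' - ψ a' := by
      intro m' a' b' hm' hab' hlow'
      have hder : ∀ s ∈ Set.Ioo a' b', L s ≠ 0 →
          m' ≤ ⟪fderiv ℝ A (L s) η, η⟫ :=
        fun s hs hLs => le_trans (hlow' s hs hLs) (hell (L s) hLs η)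
      by_cases hex : ∃ s', s' ∈ Set.Icc a' b' ∧ L s' = 0
      · obtain ⟨s', hs'mem, hs'0⟩ := hex
        have h1 : m' * (s' - a') ≤ ψ s' - ψ a' := by
          apply mvt_lb hs'mem.1 hψc.continuousOn
            (ψ' := fun s => ⟪fderiv ℝ A (L s) η, η⟫)
          · intro s hs
            have hLs : L s ≠ 0 := fun h0 => (ne_of_lt hs.2) (hsing s s' h0 hs'0)
            exact hψd s hLs
          · intro s hs
            have hLs : L s ≠ 0 := fun h0 => (ne_of_lt hs.2) (hsing s s' h0 hs'0)
            exact hder s ⟨hs.1, lt_of_lt_of_le hs.2 hs'mem.2⟩ hLs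
        have h2 : m' * (b' - s') ≤ ψ b' - ψ s' := by
          apply mvt_lb hs'mem.2 hψc.continuousOn
            (ψ' := fun s => ⟪fderiv ℝ A (L s) η, η⟫)
          · intro s hs
            have hLs : L s ≠ 0 := fun h0 => (ne_of_gt hs.1) (hsing s s' h0 hs'0)
            exact hψd s hLs
          · intro s hs
            have hLs : L s ≠ 0 := fun h0 => (ne_of_gt hs.1) (hsing s s' h0 hs'0)
            exact hder s ⟨lt_of_le_of_lt hs'mem.1 hs.1, hs.2⟩ hLs
        linarith [h1, h2]
      · push_neg at hex
        apply mvt_lb hab' hψc.continuousOn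
          (ψ' := fun s => ⟪fderiv ℝ A (L s) η, η⟫)
        · intro s hs
          exact hψd s (hex s (Set.mem_Icc_of_Ioo hs))
        · intro s hs
          exact hder s hs (hex s (Set.mem_Icc_of_Ioo hs))
    -- ψ is nondecreasing
    have hψmono : ∀ a' b' : ℝ, a' ≤ b' → ψ a' ≤ ψ b' := by
      intro a' b' hab'
      have := hL2 0 a' b' le_rfl hab' (fun s _ hLs => by positivity)
      linarith
    -- increment bound m (b - a) ≤ ψ b - ψ a
    have hinc : m * (b - a) ≤ ψ b - ψ a := hL2 m a b hm hab hlow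
    have hgcont : Continuous g := continuous_iff_continuousAt.mpr fun t => (hgd t).continuousAt
    -- part 1 : 0 ≤ g b - g 0 - b * ψ 0
    have hpart1 : 0 ≤ g b - g 0 - b * ψ 0 := by
      have hmono : MonotoneOn (fun t => g t - ψ 0 * t) (Set.Icc 0 b) := by
        apply monotoneOn_of_deriv_nonneg (convex_Icc 0 b)
        · exact (hgcont.sub (continuous_const.mul continuous_id)).continuousOn
        · intro x hx
          rw [interior_Icc] at hx
          exact ((hgd x).sub ((hasDerivAt_id x).const_mul (ψ 0))).differentiableAt.differentiableWithinAt
        · intro x hx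
          rw [interior_Icc] at hx
          have hD : HasDerivAt (fun t => g t - ψ 0 * t) (ψ x - ψ 0 * 1) x :=
            (hgd x).sub ((hasDerivAt_id x).const_mul (ψ 0))
          rw [hD.deriv]
          have := hψmono 0 x hx.1.le
          linarith
      have h0b : (0:ℝ) ≤ b := le_trans ha0 hab
      have := hmono (Set.left_mem_Icc.mpr h0b) (Set.right_mem_Icc.mpr h0b) h0b
      simp only at this
      linarith
    -- part 2 : m (b-a) (1-b) ≤ g 1 - g b - (1-b) ψ 0
    have hpart2 : m * (b - a) * (1 - b) ≤ g 1 - g b - (1 - b) * ψ 0 := by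
      have hmono : MonotoneOn (fun t => g t - ψ 0 * t - m * (b - a) * t) (Set.Icc b 1) := by
        apply monotoneOn_of_deriv_nonneg (convex_Icc b 1)
        · exact ((hgcont.sub (continuous_const.mul continuous_id)).sub
            (continuous_const.mul continuous_id)).continuousOn
        · intro x hx
          rw [interior_Icc] at hx
          exact (((hgd x).sub ((hasDerivAt_id x).const_mul (ψ 0))).sub
            ((hasDerivAt_id x).const_mul (m * (b - a)))).differentiableAt.differentiableWithinAt
        · intro x hx
          rw [interior_Icc] at hx
          have hD : HasDerivAt (fun t => g t - ψ 0 * t - m * (b - a) * t)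
              (ψ x - ψ 0 * 1 - m * (b - a) * 1) x :=
            ((hgd x).sub ((hasDerivAt_id x).const_mul (ψ 0))).sub
              ((hasDerivAt_id x).const_mul (m * (b - a)))
          rw [hD.deriv]
          have h1 : ψ b ≤ ψ x := hψmono b x hx.1.le
          have h2 : ψ 0 ≤ ψ a := hψmono 0 a ha0
          linarith
      have := hmono (Set.left_mem_Icc.mpr hb1) (Set.right_mem_Icc.mpr hb1) hb1
      simp only at this
      linarith [this]
    -- assemble
    have hsum : m * (b - a) * (1 - b) ≤ g 1 - g 0 - ψ 0 := by linarith [hpart1, hpart2]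
    have hg1 : g 1 = H (ξ + η) ^ p / p := by
      simp only [hgdef, hLdef, hFdef, one_smul]
    have hg0 : g 0 = H ξ ^ p / p := by
      simp only [hgdef, hLdef, hFdef, zero_smul, add_zero]
    have hψ0 : ψ 0 = ⟪A ξ, η⟫ := by
      simp only [hψdef, hLdef, zero_smul, add_zero]
    have hfinal := mul_le_mul_of_nonneg_left hsum hp0.le
    rw [hg1, hg0, hψ0] at hfinal
    calc p * (m * (b - a) * (1 - b)) ≤ p * (H (ξ + η) ^ p / p - H ξ ^ p / p - ⟪A ξ, η⟫) := hfinal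
      _ = H (ξ + η) ^ p - H ξ ^ p - p * ⟪A ξ, η⟫ := by field_simp
  -- choose the constant
  refine ⟨if 2 ≤ p then p * Λ₁ * (8:ℝ) ^ (2 - p) / 16 else p * Λ₁ / 4, ?_, ?_, ?_⟩
  · split_ifs with h
    · have : (0:ℝ) < (8:ℝ) ^ (2 - p) := Real.rpow_pos_of_pos (by norm_num) _
      positivity
    · positivity
  · -- the case p ≥ 2
    intro hp2 ξ η
    rw [if_pos hp2, ge_iff_le]
    by_cases hη : η = 0
    · subst hη
      simp [Real.zero_rpow hpne, hA0]
    · have hηn : (0:ℝ) < ‖η‖ := norm_pos_iff.mpr hη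
      set s₀ : ℝ := -⟪ξ, η⟫ / ‖η‖ ^ 2 with hs₀def
      have horth : ⟪ξ + s₀ • η, η⟫ = 0 := by
        rw [inner_add_left, real_inner_smul_left, hs₀def, real_inner_self_eq_norm_sq]
        field_simp
        ring
      have hproj : ∀ s : ℝ, |s - s₀| * ‖η‖ ≤ ‖ξ + s • η‖ := by
        intro s
        have hdecomp : ξ + s • η = (ξ + s₀ • η) + (s - s₀) • η := by
          rw [sub_smul]; abel
        rw [hdecomp]
        have hsq : ‖(ξ + s₀ • η) + (s - s₀) • η‖ ^ 2
            = ‖ξ + s₀ • η‖ ^ 2 + (s - s₀) ^ 2 * ‖η‖ ^ 2 := by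
          rw [norm_add_sq_real, real_inner_smul_right, horth, norm_smul]
          simp [mul_pow, sq_abs]
        apply le_of_pow_le_pow_left₀ two_ne_zero (norm_nonneg _)
        rw [hsq, mul_pow, sq_abs]
        nlinarith [sq_nonneg ‖ξ + s₀ • η‖]
      set m₀ : ℝ := Λ₁ * (‖η‖ / 8) ^ (p - 2) * ‖η‖ ^ 2 with hm₀def
      have hm₀ : 0 ≤ m₀ := by
        have : (0:ℝ) ≤ (‖η‖ / 8) ^ (p - 2) := Real.rpow_nonneg (by positivity) _
        positivity
      have hbound : ∀ s : ℝ, (1:ℝ)/8 ≤ |s - s₀| →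
          m₀ ≤ Λ₁ * ‖ξ + s • η‖ ^ (p - 2) * ‖η‖ ^ 2 := by
        intro s hss
        have h1 : ‖η‖ / 8 ≤ ‖ξ + s • η‖ := by
          calc ‖η‖ / 8 = (1/8) * ‖η‖ := by ring
            _ ≤ |s - s₀| * ‖η‖ := mul_le_mul_of_nonneg_right hss (norm_nonneg _)
            _ ≤ ‖ξ + s • η‖ := hproj s
        have h2 : (‖η‖ / 8) ^ (p - 2) ≤ ‖ξ + s • η‖ ^ (p - 2) :=
          Real.rpow_le_rpow (by positivity) h1 (by linarith)
        rw [hm₀def]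
        have := mul_le_mul_of_nonneg_left h2 hΛ₁.le
        nlinarith [sq_nonneg ‖η‖, norm_nonneg η, this]
      have hD : p * (m₀ * (1/4) * (1/4)) ≤ H (ξ + η) ^ p - H ξ ^ p - p * ⟪A ξ, η⟫ := by
        by_cases hs₀le : s₀ ≤ 3/8
        · have := KEY ξ η hη m₀ (1/2) (3/4) hm₀ (by norm_num) (by norm_num) (by norm_num)
            (fun s hs _ => hbound s (by
              have : (1:ℝ)/8 ≤ s - s₀ := by
                have := hs.1; linarith
              exact le_trans this (le_abs_self _)))
          calc p * (m₀ * (1/4) * (1/4)) = p * (m₀ * (3/4 - 1/2) * (1 - 3/4)) := by norm_num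
            _ ≤ _ := this
        · push_neg at hs₀le
          have := KEY ξ η hη m₀ 0 (1/4) hm₀ (by norm_num) (by norm_num) (by norm_num)
            (fun s hs _ => hbound s (by
              have h1 : (1:ℝ)/8 ≤ s₀ - s := by
                have := hs.2; linarith
              calc (1:ℝ)/8 ≤ s₀ - s := h1
                _ ≤ |s₀ - s| := le_abs_self _
                _ = |s - s₀| := abs_sub_comm _ _))
          have h34 : p * (m₀ * (1/4) * (1/4)) ≤ p * (m₀ * (1/4 - 0) * (1 - 1/4)) := by
            nlinarith [hm₀, hp0.le]
          exact le_trans h34 this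
      refine le_trans (le_of_eq ?_) hD
      -- p Λ₁ 8^{2-p}/16 ‖η‖^p = p (m₀ /16)
      rw [hm₀def]
      have h8 : (‖η‖ / 8) ^ (p - 2) = ‖η‖ ^ (p - 2) * (8:ℝ) ^ (2 - p) := by
        rw [Real.div_rpow (norm_nonneg _) (by norm_num : (0:ℝ) ≤ 8)]
        rw [show (2:ℝ) - p = -(p - 2) by ring, Real.rpow_neg (by norm_num : (0:ℝ) ≤ 8)]
        ring
      have hηp : ‖η‖ ^ (p - 2) * ‖η‖ ^ 2 = ‖η‖ ^ p := by
        rw [show (‖η‖:ℝ) ^ (2:ℕ) = ‖η‖ ^ ((2:ℕ):ℝ) from (Real.rpow_natCast _ 2).symm]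
        rw [← Real.rpow_add hηn]
        norm_num
      rw [h8]
      calc p * Λ₁ * (8:ℝ) ^ (2 - p) / 16 * ‖η‖ ^ p
          = p * (Λ₁ * (8:ℝ) ^ (2 - p) * (‖η‖ ^ (p - 2) * ‖η‖ ^ 2)) / 16 := by
            rw [hηp]; ring
        _ = p * (Λ₁ * (‖η‖ ^ (p - 2) * (8:ℝ) ^ (2 - p)) * ‖η‖ ^ 2 * (1/4) * (1/4)) := by
            ring
  · -- the case p < 2
    intro hplt ξ η hne
    rw [if_neg (not_le.mpr hplt), ge_iff_le]
    by_cases hη : η = 0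
    · subst hη
      simp [hA0]
    · have hηn : (0:ℝ) < ‖η‖ := norm_pos_iff.mpr hη
      set m₁ : ℝ := Λ₁ * (‖ξ‖ + ‖η‖) ^ (p - 2) * ‖η‖ ^ 2 with hm₁def
      have hm₁ : 0 ≤ m₁ := by
        have : (0:ℝ) ≤ (‖ξ‖ + ‖η‖) ^ (p - 2) := Real.rpow_nonneg (by positivity) _
        positivity
      have hKEY := KEY ξ η hη m₁ 0 (1/2) hm₁ (by norm_num) (by norm_num) (by norm_num) ?_
      · calc p * Λ₁ / 4 * ‖η‖ ^ 2 * (‖ξ‖ + ‖η‖) ^ (p - 2)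
            = p * (m₁ * (1/2 - 0) * (1 - 1/2)) := by rw [hm₁def]; ring
          _ ≤ _ := hKEY
      · intro s hs hLs
        have hup : ‖ξ + s • η‖ ≤ ‖ξ‖ + ‖η‖ := by
          calc ‖ξ + s • η‖ ≤ ‖ξ‖ + ‖s • η‖ := norm_add_le _ _
            _ = ‖ξ‖ + |s| * ‖η‖ := by rw [norm_smul, Real.norm_eq_abs]
            _ ≤ ‖ξ‖ + 1 * ‖η‖ := by
                have : |s| ≤ 1 := by
                  rw [abs_le]; constructor <;> [linarith [hs.1]; linarith [hs.2]]
                nlinarith [norm_nonneg η]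
            _ = ‖ξ‖ + ‖η‖ := by ring
        have hLpos : (0:ℝ) < ‖ξ + s • η‖ := norm_pos_iff.mpr hLs
        have h2 : (‖ξ‖ + ‖η‖) ^ (p - 2) ≤ ‖ξ + s • η‖ ^ (p - 2) :=
          Real.rpow_le_rpow_of_nonpos hLpos hup (by linarith)
        rw [hm₁def]
        have := mul_le_mul_of_nonneg_left h2 hΛ₁.le
        nlinarith [sq_nonneg ‖η‖, this]
end

section
/- Let N : ℝⁿ → ℝ be a norm that is differentiable on ℝⁿ\{0}. Then the vector field v(y) := N(y)^{−n}·y is differentiable on ℝⁿ\{0}, and its divergence vanishes there: for every x ∈ ℝⁿ\{0}, ∑_{i=1}^n ∂ᵢ( N(·)^{−n}·(·)ᵢ )(x) = 0. -/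
/-- For a norm `N` on `ℝⁿ` differentiable off the origin, the
vector field `v(y) := N(y)^{−n} y` is differentiable off the origin and
divergence-free there. -/
theorem stmt_11 (n : ℕ) (hn : 2 ≤ n)
    (N : EuclideanSpace ℝ (Fin n) → ℝ)
    (Nnonneg : ∀ ξ, 0 ≤ N ξ)
    (Neq_zero : ∀ ξ, N ξ = 0 ↔ ξ = 0)
    (Nhom : ∀ (c : ℝ) (ξ : EuclideanSpace ℝ (Fin n)), N (c • ξ) = |c| * N ξ)
    (Ntri : ∀ ξ η, N (ξ + η) ≤ N ξ + N η)
    (Ndiff : ∀ ξ : EuclideanSpace ℝ (Fin n), ξ ≠ 0 → DifferentiableAt ℝ N ξ) :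
    ∀ x : EuclideanSpace ℝ (Fin n), x ≠ 0 →
      DifferentiableAt ℝ (fun y : EuclideanSpace ℝ (Fin n) => N y ^ (-(n : ℝ)) • y) x ∧
      ∑ i, fderiv ℝ (fun y : EuclideanSpace ℝ (Fin n) => N y ^ (-(n : ℝ)) * y i) x
          (EuclideanSpace.single i 1) = 0 := by
  intro x hx
  have hNx0 : N x ≠ 0 := fun h => hx ((Neq_zero x).mp h)
  have hNxpos : 0 < N x := lt_of_le_of_ne (Nnonneg x) (Ne.symm hNx0)
  set c : ℝ := -(n : ℝ) with hc
  have hL : HasFDerivAt N (fderiv ℝ N x) x := (Ndiff x hx).hasFDerivAt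
  set L : EuclideanSpace ℝ (Fin n) →L[ℝ] ℝ := fderiv ℝ N x with hLdef
  -- Euler's identity: L x = N x
  have hE : L x = N x := by
    have h1 : HasDerivAt (fun t : ℝ => t • x) x 1 := by
      simpa using (hasDerivAt_id (1 : ℝ)).smul_const x
    have hL1 : HasFDerivAt N L ((1 : ℝ) • x) := by simpa using hL
    have hφ : HasDerivAt (fun t : ℝ => N (t • x)) (L x) 1 := by
      exact hL1.comp_hasDerivAt (1 : ℝ) h1
    have hψ : HasDerivAt (fun t : ℝ => t * N x) (N x) 1 := by
      simpa using (hasDerivAt_id (1 : ℝ)).mul_const (N x)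
    have heq : (fun t : ℝ => N (t • x)) =ᶠ[nhds (1 : ℝ)] fun t : ℝ => t * N x := by
      filter_upwards [eventually_gt_nhds (show (0:ℝ) < 1 by norm_num)] with t ht
      rw [Nhom, abs_of_pos ht]
    have hφ' : HasDerivAt (fun t : ℝ => N (t • x)) (N x) 1 :=
      hψ.congr_of_eventuallyEq heq
    exact hφ.unique hφ'
  -- derivative of the radial power
  have hf : HasFDerivAt (fun y => N y ^ c) ((c * N x ^ (c - 1)) • L) x :=
    (Real.hasDerivAt_rpow_const (Or.inl hNx0)).comp_hasFDerivAt x hL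
  constructor
  · exact hf.differentiableAt.smul differentiableAt_id
  · have hgi : ∀ i : Fin n,
        fderiv ℝ (fun y : EuclideanSpace ℝ (Fin n) => N y ^ c * y i) x
            (EuclideanSpace.single i 1)
          = N x ^ c * (EuclideanSpace.single i 1 : EuclideanSpace ℝ (Fin n)) i
            + x i * (c * N x ^ (c - 1) * L (EuclideanSpace.single i 1)) := by
      intro i
      have hproj : HasFDerivAt (fun y : EuclideanSpace ℝ (Fin n) => y i)
          (EuclideanSpace.proj i : EuclideanSpace ℝ (Fin n) →L[ℝ] ℝ) x :=
        (EuclideanSpace.proj i : EuclideanSpace ℝ (Fin n) →L[ℝ] ℝ).hasFDerivAt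
      have hmul := hf.mul hproj
      rw [show (fun y : EuclideanSpace ℝ (Fin n) => N y ^ c * y i) = (fun y => N y ^ c) * (fun y => y i) from rfl, hmul.fderiv]
      simp [mul_comm, mul_assoc, mul_left_comm]
    rw [Finset.sum_congr rfl (fun i _ => hgi i)]
    rw [Finset.sum_add_distrib]
    have h1 : ∑ i : Fin n, N x ^ c * (EuclideanSpace.single i 1 : EuclideanSpace ℝ (Fin n)) i
        = n * N x ^ c := by
      simp [Finset.mul_sum]
    have hsum : ∑ i : Fin n, (x i • EuclideanSpace.single i (1:ℝ)) = x := by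
      ext j
      have hpr : ∀ v : EuclideanSpace ℝ (Fin n), EuclideanSpace.proj (𝕜 := ℝ) j v = v j :=
        fun _ => rfl
      have := map_sum (EuclideanSpace.proj (𝕜 := ℝ) j)
        (fun i : Fin n => x i • EuclideanSpace.single i (1:ℝ)) Finset.univ
      simp only [hpr] at this
      rw [this]
      simp [EuclideanSpace.single_apply]
    have key : ∑ i : Fin n, x i * L (EuclideanSpace.single i 1) = L x := by
      calc ∑ i : Fin n, x i * L (EuclideanSpace.single i 1)
          = ∑ i : Fin n, L (x i • EuclideanSpace.single i 1) := by
            simp [map_smul, smul_eq_mul]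
        _ = L (∑ i : Fin n, x i • EuclideanSpace.single i 1) := (map_sum L _ _).symm
        _ = L x := by rw [hsum]
    have h2 : ∑ i : Fin n, x i * (c * N x ^ (c - 1) * L (EuclideanSpace.single i 1))
        = c * N x ^ (c - 1) * N x := by
      calc ∑ i : Fin n, x i * (c * N x ^ (c - 1) * L (EuclideanSpace.single i 1))
          = c * N x ^ (c - 1) * ∑ i : Fin n, x i * L (EuclideanSpace.single i 1) := by
            rw [Finset.mul_sum]; exact Finset.sum_congr rfl fun i _ => by ring
        _ = c * N x ^ (c - 1) * N x := by rw [key, hE]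
    rw [h1, h2]
    have h3 : N x ^ (c - 1) * N x = N x ^ c := by
      rw [← Real.rpow_add_one hNx0]
      ring_nf
    have : c * N x ^ (c - 1) * N x = c * N x ^ c := by rw [mul_assoc, h3]
    rw [this, hc]
    ring
end

section
/- Let 1 < p < ∞ with p ≠ n. Let H be a norm on ℝⁿ differentiable on ℝⁿ\{0}, let H₀(x) := sup_{ξ ≠ 0} ⟪x, ξ⟫ / H(ξ) denote its dual norm, and assume H₀ is differentiable on ℝⁿ\{0}. Define G(x) := H₀(x)^{(p−n)/(p−1)} for x ≠ 0 and A(ξ) := ∇(H^p/p)(ξ) for ξ ≠ 0. Then for every x ∈ ℝⁿ\{0}, ∇G(x) ≠ 0 and A(∇G(x)) = ((p−n)/(p−1)) · |(p−n)/(p−1)|^{p−2} · H₀(x)^{−n} · x. -/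
open RealInnerProductSpace

theorem aux_hasGradientAt_of_innerSL {E : Type*} [NormedAddCommGroup E] [InnerProductSpace ℝ E]
    [CompleteSpace E] {f : E → ℝ} {x w : E} (h : HasFDerivAt f (innerSL ℝ w) x) :
    HasGradientAt f w x := by
  rw [hasGradientAt_iff_hasFDerivAt]
  have hw : (InnerProductSpace.toDual ℝ E) w = innerSL ℝ w := by
    ext v
    simp [InnerProductSpace.toDual_apply_apply]
  rwa [hw]

theorem aux_grad_ineq {E : Type*} [NormedAddCommGroup E] [InnerProductSpace ℝ E] [CompleteSpace E]
    {f : E → ℝ} (hf : ConvexOn ℝ Set.univ f) {x g : E} (hg : HasGradientAt f g x) (y : E) :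
    ⟪g, y - x⟫ ≤ f y - f x := by
  set φ : ℝ → ℝ := fun t => f (t • (y - x) + x) with hφ
  have hc : HasDerivAt (fun t : ℝ => t • (y - x) + x) (y - x) 0 := by
    simpa using ((hasDerivAt_id (0 : ℝ)).smul_const (y - x)).add_const x
  have h1 : HasFDerivAt f ((InnerProductSpace.toDual ℝ E) g)
      ((fun t : ℝ => t • (y - x) + x) 0) := by
    simpa using hasGradientAt_iff_hasFDerivAt.mp hg
  have hφd : HasDerivAt φ ⟪g, y - x⟫ 0 := by
    have h2 := h1.comp_hasDerivAt (0 : ℝ) hc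
    simp only [InnerProductSpace.toDual_apply_apply] at h2
    exact h2
  have hφc : ConvexOn ℝ Set.univ φ := by
    have h3 := hf.comp_affineMap (AffineMap.lineMap x y : ℝ →ᵃ[ℝ] E)
    have h4 : (f ∘ (AffineMap.lineMap x y : ℝ →ᵃ[ℝ] E)) = φ := by
      funext t
      simp only [hφ, Function.comp_apply, AffineMap.lineMap_apply_module]
      congr 1
      module
    rw [h4] at h3
    simpa using h3
  have h5 := hφc.le_slope_of_hasDerivAt (Set.mem_univ (0:ℝ)) (Set.mem_univ (1:ℝ)) one_pos hφd
  rw [slope_def_field] at h5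
  simp only [hφ, one_smul, zero_smul, zero_add, sub_zero, div_one] at h5
  have hxy : y - x + x = y := by abel
  rw [hxy] at h5
  exact h5

set_option maxHeartbeats 1000000 in
/-- With `G(x) := H₀(x)^{(p−n)/(p−1)}` (`H₀` the dual norm of
`H`, `p ≠ n`), one has `∇G(x) ≠ 0` and
`A(∇G(x)) = ((p−n)/(p−1))|(p−n)/(p−1)|^{p−2} H₀(x)^{−n} x` for `x ≠ 0`. -/
theorem stmt_12 (n : ℕ) (hn : 2 ≤ n) (p : ℝ) (hp : 1 < p) (hpn : p ≠ n)
    (H : EuclideanSpace ℝ (Fin n) → ℝ)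
    (Hnonneg : ∀ ξ, 0 ≤ H ξ)
    (Heq_zero : ∀ ξ, H ξ = 0 ↔ ξ = 0)
    (Hhom : ∀ (c : ℝ) (ξ : EuclideanSpace ℝ (Fin n)), H (c • ξ) = |c| * H ξ)
    (Htri : ∀ ξ η, H (ξ + η) ≤ H ξ + H η)
    (Hdiff : ∀ ξ : EuclideanSpace ℝ (Fin n), ξ ≠ 0 → DifferentiableAt ℝ H ξ)
    -- the dual norm `H₀` and the function `G`:
    (H₀ : EuclideanSpace ℝ (Fin n) → ℝ)
    (hH₀ : ∀ x, H₀ x = ⨆ ξ : {ζ : EuclideanSpace ℝ (Fin n) // ζ ≠ 0}, ⟪x, (ξ : EuclideanSpace ℝ (Fin n))⟫ / H ξ)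
    (hH₀diff : ∀ x : EuclideanSpace ℝ (Fin n), x ≠ 0 → DifferentiableAt ℝ H₀ x)
    (G : EuclideanSpace ℝ (Fin n) → ℝ)
    (hG : ∀ x, G x = H₀ x ^ ((p - n) / (p - 1))) :
    ∀ x : EuclideanSpace ℝ (Fin n), x ≠ 0 →
      gradient G x ≠ 0 ∧
      gradient (fun ζ => H ζ ^ p / p) (gradient G x)
        = (((p - n) / (p - 1)) * |(p - n) / (p - 1)| ^ (p - 2) * H₀ x ^ (-(n : ℝ))) • x := by
  -- basic facts
  have hp0 : (0:ℝ) < p := lt_trans zero_lt_one hp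
  have hp1 : p - 1 ≠ 0 := sub_ne_zero.mpr hp.ne'
  have H0 : H 0 = 0 := (Heq_zero 0).mpr rfl
  have Hpos : ∀ ξ : (EuclideanSpace ℝ (Fin n)), ξ ≠ 0 → 0 < H ξ := fun ξ hξ =>
    lt_of_le_of_ne (Hnonneg ξ) (fun h => hξ ((Heq_zero ξ).mp h.symm))
  -- a nonzero vector
  set v : (EuclideanSpace ℝ (Fin n)) := EuclideanSpace.single (⟨0, by omega⟩ : Fin n) (1:ℝ) with hv
  have hvnorm : ‖v‖ = 1 := by simp [hv]
  have hvne : v ≠ 0 := by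
    intro h
    rw [h] at hvnorm
    simp at hvnorm
  haveI : Nonempty {ζ : (EuclideanSpace ℝ (Fin n)) // ζ ≠ 0} := ⟨⟨v, hvne⟩⟩
  -- convexity of H
  have hHconv : ConvexOn ℝ Set.univ H := by
    refine ⟨convex_univ, fun ξ _ η _ a b ha hb hab => ?_⟩
    calc H (a • ξ + b • η) ≤ H (a • ξ) + H (b • η) := Htri _ _
      _ = a * H ξ + b * H η := by rw [Hhom, Hhom, abs_of_nonneg ha, abs_of_nonneg hb]
  have hHcont : Continuous H := by
    exact continuousOn_univ.mp (hHconv.continuousOn isOpen_univ)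
  -- lower bound for H
  obtain ⟨ξm, hξmS, hξmmin⟩ := (isCompact_sphere (0:(EuclideanSpace ℝ (Fin n))) 1).exists_isMinOn
    ⟨‖v‖⁻¹ • v, by simp [mem_sphere_zero_iff_norm, norm_smul, norm_ne_zero_iff.mpr hvne]⟩
    hHcont.continuousOn
  have hξmnorm : ‖ξm‖ = 1 := mem_sphere_zero_iff_norm.mp hξmS
  set cm : ℝ := H ξm with hcm
  have hcmpos : 0 < cm := Hpos ξm (fun h => by simp [h] at hξmnorm)
  have hlow : ∀ ξ : (EuclideanSpace ℝ (Fin n)), cm * ‖ξ‖ ≤ H ξ := by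
    intro ξ
    rcases eq_or_ne ξ 0 with rfl | hξ
    · simp [H0]
    · have hnn : ‖ξ‖ ≠ 0 := norm_ne_zero_iff.mpr hξ
      have hmem : ‖ξ‖⁻¹ • ξ ∈ Metric.sphere (0:(EuclideanSpace ℝ (Fin n))) 1 := by
        simp [mem_sphere_zero_iff_norm, norm_smul, hnn]
      have h1 : cm ≤ H (‖ξ‖⁻¹ • ξ) := hξmmin hmem
      rw [Hhom, abs_inv, abs_norm] at h1
      have hpos : (0:ℝ) < ‖ξ‖ := norm_pos_iff.mpr hξ
      calc cm * ‖ξ‖ ≤ (‖ξ‖⁻¹ * H ξ) * ‖ξ‖ := by nlinarith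
        _ = H ξ := by field_simp
  -- boundedness of the sup family
  have hbdd : ∀ x : (EuclideanSpace ℝ (Fin n)), BddAbove (Set.range fun ξ : {ζ : (EuclideanSpace ℝ (Fin n)) // ζ ≠ 0} => ⟪x, (ξ:(EuclideanSpace ℝ (Fin n)))⟫ / H ξ) := by
    intro x
    refine ⟨‖x‖ / cm, ?_⟩
    rintro - ⟨ξ, rfl⟩
    have h1 : ⟪x, (ξ:(EuclideanSpace ℝ (Fin n)))⟫ ≤ ‖x‖ * ‖(ξ:(EuclideanSpace ℝ (Fin n)))‖ := real_inner_le_norm x ξ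
    have h2 := hlow (ξ:(EuclideanSpace ℝ (Fin n)))
    have h3 : 0 < H (ξ:(EuclideanSpace ℝ (Fin n))) := Hpos _ ξ.2
    rw [div_le_div_iff₀ h3 hcmpos]
    nlinarith [norm_nonneg x, norm_nonneg (ξ:(EuclideanSpace ℝ (Fin n)))]
  -- dual inequality and sup bounds
  have hH₀ge : ∀ (x : (EuclideanSpace ℝ (Fin n))) (ξ : (EuclideanSpace ℝ (Fin n))) (hξ : ξ ≠ 0), ⟪x, ξ⟫ / H ξ ≤ H₀ x := by
    intro x ξ hξ
    rw [hH₀]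
    exact le_ciSup (hbdd x) ⟨ξ, hξ⟩
  have hdual : ∀ (x ξ : (EuclideanSpace ℝ (Fin n))), ⟪x, ξ⟫ ≤ H₀ x * H ξ := by
    intro x ξ
    rcases eq_or_ne ξ 0 with rfl | hξ
    · simp [H0]
    · exact (div_le_iff₀ (Hpos ξ hξ)).mp (hH₀ge x ξ hξ)
  have hH₀le : ∀ (x : (EuclideanSpace ℝ (Fin n))) (M : ℝ), (∀ ξ : (EuclideanSpace ℝ (Fin n)), ξ ≠ 0 → ⟪x, ξ⟫ ≤ M * H ξ) → H₀ x ≤ M := by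
    intro x M hM
    rw [hH₀]
    exact ciSup_le fun ξ => (div_le_iff₀ (Hpos _ ξ.2)).mpr (hM _ ξ.2)
  have hH₀zero : H₀ (0:(EuclideanSpace ℝ (Fin n))) = 0 := by
    rw [hH₀]
    have : (fun ξ : {ζ : (EuclideanSpace ℝ (Fin n)) // ζ ≠ 0} => ⟪(0:(EuclideanSpace ℝ (Fin n))), (ξ:(EuclideanSpace ℝ (Fin n)))⟫ / H ξ) = fun _ => (0:ℝ) := by
      funext ξ; simp
    rw [this, ciSup_const]
  have hH₀pos : ∀ x : (EuclideanSpace ℝ (Fin n)), x ≠ 0 → 0 < H₀ x := by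
    intro x hx
    have hxx : (0:ℝ) < ⟪x, x⟫ := by
      rw [real_inner_self_eq_norm_mul_norm]
      have := norm_pos_iff.mpr hx
      positivity
    have h1 : 0 < ⟪x, x⟫ / H x := div_pos hxx (Hpos x hx)
    exact lt_of_lt_of_le h1 (hH₀ge x x hx)
  have hH₀smul : ∀ (a : ℝ), 0 ≤ a → ∀ x : (EuclideanSpace ℝ (Fin n)), H₀ (a • x) = a * H₀ x := by
    intro a ha x
    rw [hH₀, hH₀, Real.mul_iSup_of_nonneg ha]
    congr 1
    funext ξ
    rw [real_inner_smul_left, mul_div_assoc]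
  have hH₀tri : ∀ x y : (EuclideanSpace ℝ (Fin n)), H₀ (x + y) ≤ H₀ x + H₀ y := by
    intro x y
    rw [hH₀ (x + y)]
    refine ciSup_le fun ξ => ?_
    rw [inner_add_left, add_div]
    exact add_le_add (hH₀ge x _ ξ.2) (hH₀ge y _ ξ.2)
  have hH₀conv : ConvexOn ℝ Set.univ H₀ := by
    refine ⟨convex_univ, fun ξ _ η _ a b ha hb hab => ?_⟩
    calc H₀ (a • ξ + b • η) ≤ H₀ (a • ξ) + H₀ (b • η) := hH₀tri _ _
      _ = a * H₀ ξ + b * H₀ η := by rw [hH₀smul a ha, hH₀smul b hb]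
  -- now fix x
  intro x hx
  have htpos : 0 < H₀ x := hH₀pos x hx
  have htne : H₀ x ≠ 0 := htpos.ne'
  set ξ₀ : (EuclideanSpace ℝ (Fin n)) := gradient H₀ x with hξ₀
  have hgrad₀ : HasGradientAt H₀ ξ₀ x := (hH₀diff x hx).hasGradientAt
  have key₁ : ∀ y : (EuclideanSpace ℝ (Fin n)), ⟪ξ₀, y - x⟫ ≤ H₀ y - H₀ x := aux_grad_ineq hH₀conv hgrad₀
  have euler₀ : ⟪ξ₀, x⟫ = H₀ x := by
    have h1 := key₁ 0
    rw [zero_sub, inner_neg_right, hH₀zero] at h1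
    have h2 := key₁ (x + x)
    rw [add_sub_cancel_right] at h2
    have h3 : H₀ (x + x) = 2 * H₀ x := by
      rw [← two_smul ℝ x, hH₀smul 2 (by norm_num)]
    linarith
  have support₀ : ∀ ζ : (EuclideanSpace ℝ (Fin n)), ⟪ξ₀, ζ⟫ ≤ H₀ ζ := by
    intro ζ
    have h1 := key₁ (x + ζ)
    rw [add_sub_cancel_left] at h1
    have := hH₀tri x ζ
    linarith
  have hξ₀ne : ξ₀ ≠ 0 := by
    intro h
    rw [h] at euler₀
    simp only [inner_zero_left] at euler₀
    exact htne euler₀.symm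
  -- gradient of H at ξ₀
  set η : (EuclideanSpace ℝ (Fin n)) := gradient H ξ₀ with hη
  have hgradH : HasGradientAt H η ξ₀ := (Hdiff ξ₀ hξ₀ne).hasGradientAt
  have key₂ : ∀ y : (EuclideanSpace ℝ (Fin n)), ⟪η, y - ξ₀⟫ ≤ H y - H ξ₀ := aux_grad_ineq hHconv hgradH
  have eulerH : ⟪η, ξ₀⟫ = H ξ₀ := by
    have h1 := key₂ 0
    rw [zero_sub, inner_neg_right, H0] at h1
    have h2 := key₂ (ξ₀ + ξ₀)
    rw [add_sub_cancel_right] at h2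
    have h3 : H (ξ₀ + ξ₀) = 2 * H ξ₀ := by
      rw [← two_smul ℝ ξ₀, Hhom]
      norm_num
    linarith
  have supportH : ∀ ζ : (EuclideanSpace ℝ (Fin n)), ⟪η, ζ⟫ ≤ H ζ := by
    intro ζ
    have h1 := key₂ (ξ₀ + ζ)
    rw [add_sub_cancel_left] at h1
    have := Htri ξ₀ ζ
    linarith
  have hH₀η : H₀ η ≤ 1 := hH₀le η 1 (fun ζ hζ => by rw [one_mul]; exact supportH ζ)
  have hHξ₀ : H ξ₀ = 1 := by
    have hle : H ξ₀ ≤ 1 := by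
      have h1 : ⟪ξ₀, η⟫ ≤ H₀ η := support₀ η
      rw [real_inner_comm] at h1
      rw [eulerH] at h1
      linarith
    have hge : 1 ≤ H ξ₀ := by
      have h1 := hdual x ξ₀
      rw [real_inner_comm, euler₀] at h1
      exact (le_mul_iff_one_le_right htpos).mp h1
    linarith
  -- the function f := H^p/p and its gradient at ξ₀
  set f : (EuclideanSpace ℝ (Fin n)) → ℝ := fun ζ => H ζ ^ p / p with hfdef
  set w₀ : (EuclideanSpace ℝ (Fin n)) := (H₀ x)⁻¹ • x with hw₀
  have hfdiff : DifferentiableAt ℝ f ξ₀ := by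
    have h1 : DifferentiableAt ℝ (fun ζ => H ζ ^ p) ξ₀ :=
      (Hdiff ξ₀ hξ₀ne).rpow_const (Or.inl (by rw [hHξ₀]; exact one_ne_zero))
    show DifferentiableAt ℝ (fun ζ => H ζ ^ p / p) ξ₀
    simpa [div_eq_mul_inv] using h1.mul_const p⁻¹
  have hlinD : HasFDerivAt (fun ζ : (EuclideanSpace ℝ (Fin n)) => (H₀ x)⁻¹ * ⟪x, ζ⟫) ((H₀ x)⁻¹ • innerSL ℝ x) ξ₀ := by
    have h1 : HasFDerivAt (fun ζ : (EuclideanSpace ℝ (Fin n)) => ⟪x, ζ⟫) (innerSL ℝ x) ξ₀ := (innerSL ℝ x).hasFDerivAt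
    exact h1.const_mul _
  -- conjugate exponent and Young
  have hq := Real.HolderConjugate.conjExponent hp
  have hΦmin : ∀ ζ : (EuclideanSpace ℝ (Fin n)), f ξ₀ - (H₀ x)⁻¹ * ⟪x, ξ₀⟫ ≤ f ζ - (H₀ x)⁻¹ * ⟪x, ζ⟫ := by
    intro ζ
    have hval : f ξ₀ - (H₀ x)⁻¹ * ⟪x, ξ₀⟫ = 1 / p - 1 := by
      have h1 : ⟪x, ξ₀⟫ = H₀ x := by rw [real_inner_comm]; exact euler₀
      rw [hfdef]
      simp only [hHξ₀, Real.one_rpow, h1, inv_mul_cancel₀ htne]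
    rw [hval]
    have h2 : (H₀ x)⁻¹ * ⟪x, ζ⟫ ≤ H ζ := by
      have := hdual x ζ
      calc (H₀ x)⁻¹ * ⟪x, ζ⟫ ≤ (H₀ x)⁻¹ * (H₀ x * H ζ) := by
            exact mul_le_mul_of_nonneg_left this (inv_nonneg.mpr htpos.le)
        _ = H ζ := by field_simp
    have hyoung : H ζ * 1 ≤ H ζ ^ p / p + 1 ^ p.conjExponent / p.conjExponent :=
      Real.young_inequality_of_nonneg (Hnonneg ζ) zero_le_one hq
    rw [Real.one_rpow, mul_one] at hyoung
    have hconj := hq.inv_add_inv_eq_one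
    have h3 : 1 / p.conjExponent = 1 - 1 / p := by
      rw [one_div, one_div]
      linarith
    rw [h3] at hyoung
    rw [hfdef]
    simp only
    linarith
  have hloc : IsLocalMin (fun ζ : (EuclideanSpace ℝ (Fin n)) => f ζ - (H₀ x)⁻¹ * ⟪x, ζ⟫) ξ₀ :=
    Filter.Eventually.of_forall hΦmin
  have hΦhas : HasFDerivAt (fun ζ : (EuclideanSpace ℝ (Fin n)) => f ζ - (H₀ x)⁻¹ * ⟪x, ζ⟫)
      (fderiv ℝ f ξ₀ - (H₀ x)⁻¹ • innerSL ℝ x) ξ₀ := hfdiff.hasFDerivAt.sub hlinD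
  have hΦzero : fderiv ℝ f ξ₀ - (H₀ x)⁻¹ • innerSL ℝ x = 0 := by
    rw [← hΦhas.fderiv]
    exact hloc.fderiv_eq_zero
  have hfderiv : fderiv ℝ f ξ₀ = innerSL ℝ w₀ := by
    have h1 : fderiv ℝ f ξ₀ = (H₀ x)⁻¹ • innerSL ℝ x := sub_eq_zero.mp hΦzero
    rw [h1]
    ext u
    simp [hw₀, real_inner_smul_left]
  have hDf : HasFDerivAt f (innerSL ℝ w₀) ξ₀ := hfderiv ▸ hfdiff.hasFDerivAt
  -- gradient of G
  set α : ℝ := (p - n) / (p - 1) with hαdef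
  have hαne : α ≠ 0 := div_ne_zero (sub_ne_zero.mpr hpn) hp1
  set c : ℝ := α * H₀ x ^ (α - 1) with hcdef
  have htp : 0 < H₀ x ^ (α - 1) := Real.rpow_pos_of_pos htpos _
  have hcne : c ≠ 0 := mul_ne_zero hαne htp.ne'
  have hGfun : G = fun y => H₀ y ^ α := funext hG
  have hGgrad : HasGradientAt G (c • ξ₀) x := by
    have h1 : HasFDerivAt H₀ ((InnerProductSpace.toDual ℝ (EuclideanSpace ℝ (Fin n))) ξ₀) x := hgrad₀
    have h2 := h1.rpow_const (p := α) (Or.inl htne)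
    rw [hasGradientAt_iff_hasFDerivAt]
    have h3 : (InnerProductSpace.toDual ℝ (EuclideanSpace ℝ (Fin n))) (c • ξ₀)
        = (α * H₀ x ^ (α - 1)) • (InnerProductSpace.toDual ℝ (EuclideanSpace ℝ (Fin n))) ξ₀ := by
      ext u
      simp [InnerProductSpace.toDual_apply_apply, real_inner_smul_left, hcdef]
    rw [h3, hGfun]
    exact h2
  have hGx : gradient G x = c • ξ₀ := hGgrad.gradient
  -- gradient of f at c • ξ₀ by homogeneity
  set m : ℝ := |c| ^ p * c⁻¹ with hmdef
  have hfunext : f = fun ζ : (EuclideanSpace ℝ (Fin n)) => |c| ^ p * f (c⁻¹ • ζ) := by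
    funext ζ
    rw [hfdef]
    simp only
    rw [Hhom, abs_inv]
    rw [Real.mul_rpow (by positivity) (Hnonneg ζ), mul_div_assoc, ← mul_assoc,
      ← Real.mul_rpow (abs_nonneg c) (by positivity),
      mul_inv_cancel₀ (abs_ne_zero.mpr hcne), Real.one_rpow, one_mul]
  have hsm : HasFDerivAt (fun ζ : (EuclideanSpace ℝ (Fin n)) => c⁻¹ • ζ) (c⁻¹ • ContinuousLinearMap.id ℝ (EuclideanSpace ℝ (Fin n))) (c • ξ₀) :=
    (hasFDerivAt_id _).const_smul c⁻¹
  have houter : HasFDerivAt (fun w => |c| ^ p * f w) (|c| ^ p • innerSL ℝ w₀) ξ₀ :=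
    hDf.const_mul _
  have hpt : c⁻¹ • (c • ξ₀) = ξ₀ := by rw [smul_smul, inv_mul_cancel₀ hcne, one_smul]
  have hcompD : HasFDerivAt ((fun w => |c| ^ p * f w) ∘ (fun ζ : (EuclideanSpace ℝ (Fin n)) => c⁻¹ • ζ))
      ((|c| ^ p • innerSL ℝ w₀).comp (c⁻¹ • ContinuousLinearMap.id ℝ (EuclideanSpace ℝ (Fin n)))) (c • ξ₀) := by
    refine HasFDerivAt.comp _ ?_ hsm
    rw [hpt]
    exact houter
  have hCLM : ((|c| ^ p • innerSL ℝ w₀).comp (c⁻¹ • ContinuousLinearMap.id ℝ (EuclideanSpace ℝ (Fin n))))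
      = innerSL ℝ ((m * (H₀ x)⁻¹) • x) := by
    ext u
    rw [hmdef, hw₀]
    simp only [ContinuousLinearMap.comp_apply, ContinuousLinearMap.smul_apply,
      ContinuousLinearMap.id_apply, innerSL_apply_apply, smul_eq_mul]
    rw [real_inner_smul_left, real_inner_smul_right, real_inner_smul_left]
    ring
  have hfc : HasFDerivAt f (innerSL ℝ ((m * (H₀ x)⁻¹) • x)) (c • ξ₀) := by
    rw [hfunext, ← hCLM]
    exact hcompD
  have hgradf : gradient f (c • ξ₀) = (m * (H₀ x)⁻¹) • x :=
    (aux_hasGradientAt_of_innerSL hfc).gradient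
  -- conclusion
  refine ⟨by rw [hGx]; exact smul_ne_zero hcne hξ₀ne, ?_⟩
  rw [hGx]
  rw [hgradf]
  -- scalar identity
  congr 1
  set t : ℝ := H₀ x with htdef
  have habs : |c| = |α| * t ^ (α - 1) := by
    rw [hcdef, abs_mul, abs_of_pos htp]
  have e1 : |c| ^ p = |α| ^ p * t ^ ((α - 1) * p) := by
    rw [habs, Real.mul_rpow (abs_nonneg _) htp.le, Real.rpow_mul htpos.le]
  have e2 : c⁻¹ = α⁻¹ * t ^ (-(α - 1)) := by
    rw [hcdef, mul_inv, ← Real.rpow_neg htpos.le]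
  have e3 : |α| ^ p = |α| ^ (p - 2) * α ^ 2 := by
    have h1 : |α| ^ p = |α| ^ (p - 2 + 2) := by norm_num
    rw [h1, Real.rpow_add (abs_pos.mpr hαne),
      show ((2:ℝ)) = ((2:ℕ):ℝ) by norm_num, Real.rpow_natCast, sq_abs]
  have key : (α - 1) * p + (-(α - 1)) + (-1) = -(n : ℝ) := by
    rw [hαdef]
    field_simp
    ring
  have e4 : t ^ ((α - 1) * p) * t ^ (-(α - 1)) * t⁻¹ = t ^ (-(n : ℝ)) := by
    rw [← Real.rpow_neg_one t, ← Real.rpow_add htpos, ← Real.rpow_add htpos, key]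
  have hα2 : α ^ 2 * α⁻¹ = α := by
    field_simp
  calc m * t⁻¹ = (|α| ^ (p - 2) * (α ^ 2 * α⁻¹)) * (t ^ ((α - 1) * p) * t ^ (-(α - 1)) * t⁻¹) := by
        rw [hmdef, e1, e2, e3]; ring
    _ = α * |α| ^ (p - 2) * t ^ (-(n : ℝ)) := by rw [e4, hα2]; ring
end
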